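/- arXiv:2008.11051 — 6 statements merged into one kernel-verified Lean document; each statement's English description precedes it below -/
import Mathlib

section
/- Assume ρ(V) < 1 (in the paper this holds when the drift of the Markov chain is negative). Then ρ(F) < 1, the matrix M = I − F is invertible with M⁻¹ ≥ 0 entrywise, N ≥ 0, so that H = I − V = M − N is a regular splitting of the nonsingular M-matrix H, and ρ(M⁻¹N) = ρ(H⁻¹N)/(1 + ρ(H⁻¹N)) < 1. -/
open Matrix

/-- Entrywise order on square real matrices. -/
def Mle {m : ℕ} (X Y : Matrix (Fin m) (Fin m) ℝ) : Prop := ∀ i j, X i j ≤ Y i j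

/-- `G` is the minimal nonnegative solution of `X = ∑_{i=0}^∞ A_{i-1} Xⁱ`. -/
def IsMinSol {m : ℕ} (A : ℕ → Matrix (Fin m) (Fin m) ℝ)
    (G : Matrix (Fin m) (Fin m) ℝ) : Prop :=
  Mle 0 G ∧ Summable (fun i => A i * G ^ i) ∧ G = ∑' i, A i * G ^ i ∧
    ∀ Y, Mle 0 Y → Summable (fun i => A i * Y ^ i) → Y = ∑' i, A i * Y ^ i → Mle G Y

/-- The spectral radius of a real matrix, i.e. the supremum of the moduli of its
complex eigenvalues. -/
noncomputable def specRad {m : ℕ} (B : Matrix (Fin m) (Fin m) ℝ) : ENNReal :=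
  spectralRadius ℂ (B.map (algebraMap ℝ ℂ))

/-- `F = ∑_{ℓ=0}^q A_ℓ(G) ∑_{j=0}^ℓ G^j` (shifted index `ℓ' = ℓ+1 ∈ {0,…,p}`). -/
noncomputable def Fmat {m : ℕ} (p : ℕ) (Aℓ : ℕ → ℕ → Matrix (Fin m) (Fin m) ℝ)
    (G : Matrix (Fin m) (Fin m) ℝ) : Matrix (Fin m) (Fin m) ℝ :=
  ∑ ℓ ∈ Finset.range (p + 1), (∑' i, Aℓ ℓ i * G ^ i) * ∑ j ∈ Finset.range ℓ, G ^ j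

/-- `N = ∑_{ℓ=-1}^q ∑_{i=1}^∞ A_{ℓ,i} ∑_{j=0}^{i-1} G^j`. -/
noncomputable def Nmat {m : ℕ} (p : ℕ) (Aℓ : ℕ → ℕ → Matrix (Fin m) (Fin m) ℝ)
    (G : Matrix (Fin m) (Fin m) ℝ) : Matrix (Fin m) (Fin m) ℝ :=
  ∑ ℓ ∈ Finset.range (p + 1), ∑' i, Aℓ ℓ (i + 1) * ∑ j ∈ Finset.range (i + 1), G ^ j

/-- `V = ∑_{j=0}^∞ A_j^*` where `A_j^* = ∑_{r=j}^∞ A_r G^{r-j}` (shifted index). -/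
noncomputable def Vmat {m : ℕ} (A : ℕ → Matrix (Fin m) (Fin m) ℝ)
    (G : Matrix (Fin m) (Fin m) ℝ) : Matrix (Fin m) (Fin m) ℝ :=
  ∑' j : ℕ, ∑' k : ℕ, A (j + k + 1) * G ^ k

open Filter

namespace Stmt6Aux



variable {m : ℕ}

abbrev Mat (m : ℕ) := Matrix (Fin m) (Fin m) ℝ
abbrev MatC (m : ℕ) := Matrix (Fin m) (Fin m) ℂ

lemma mle_mul {X Y : Mat m} (hX : Mle 0 X) (hY : Mle 0 Y) : Mle 0 (X * Y) := by
  intro a b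
  simpa [Matrix.mul_apply] using
    Finset.sum_nonneg fun x _ => mul_nonneg (hX a x) (hY x b)

lemma mle_pow {X : Mat m} (hX : Mle 0 X) (n : ℕ) : Mle 0 (X ^ n) := by
  induction n with
  | zero => intro a b; simp [Matrix.one_apply]; positivity
  | succ n ih => rw [pow_succ]; exact mle_mul ih hX

attribute [local instance] Matrix.linftyOpNormedAddCommGroup Matrix.linftyOpNormedRing
  Matrix.linftyOpNormedAlgebra

noncomputable def cring (m : ℕ) : Mat m →+* MatC m := (algebraMap ℝ ℂ).mapMatrix

lemma cring_apply (X : Mat m) (a b : Fin m) : cring m X a b = (X a b : ℂ) := rfl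

lemma specRad_eq (X : Mat m) : specRad X = spectralRadius ℂ (cring m X) := rfl

lemma mle_mul_mono {X X' Y Y' : Mat m} (hX : Mle 0 X) (hXX : Mle X X')
    (hY : Mle 0 Y) (hYY : Mle Y Y') : Mle (X * Y) (X' * Y') := by
  intro a b
  simp only [Matrix.mul_apply]
  exact Finset.sum_le_sum fun x _ =>
    mul_le_mul (hXX a x) (hYY x b) (hY x b) ((hX a x).trans (hXX a x))

lemma mle_pow_mono {X Y : Mat m} (hX : Mle 0 X) (h : Mle X Y) (n : ℕ) :
    Mle (X ^ n) (Y ^ n) := by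
  induction n with
  | zero => exact fun a b => le_rfl
  | succ n ih =>
    rw [pow_succ, pow_succ]
    exact mle_mul_mono (mle_pow hX n) ih hX h

lemma entry_nnnorm_le (B : MatC m) (a b : Fin m) : ‖B a b‖₊ ≤ ‖B‖₊ := by
  rw [Matrix.linfty_opNNNorm_def]
  exact le_trans (Finset.single_le_sum (f := fun j => ‖B a j‖₊)
    (fun j _ => zero_le) (Finset.mem_univ b))
    (Finset.le_sup (f := fun i => ∑ j, ‖B i j‖₊) (Finset.mem_univ a))

lemma cring_nnnorm_mono {X Y : Mat m} (hX : Mle 0 X) (h : Mle X Y) :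
    ‖cring m X‖₊ ≤ ‖cring m Y‖₊ := by
  rw [Matrix.linfty_opNNNorm_def, Matrix.linfty_opNNNorm_def]
  refine Finset.sup_mono_fun fun a _ => Finset.sum_le_sum fun b _ => ?_
  rw [cring_apply, cring_apply, Complex.nnnorm_real, Complex.nnnorm_real,
    Real.nnnorm_of_nonneg (hX a b), Real.nnnorm_of_nonneg ((hX a b).trans (h a b))]
  exact h a b

lemma specRad_mono {X Y : Mat m} (hX : Mle 0 X) (h : Mle X Y) : specRad X ≤ specRad Y := by
  have hpow : ∀ n : ℕ, (‖cring m X ^ n‖₊ : ENNReal) ^ (1 / n : ℝ) ≤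
      (‖cring m Y ^ n‖₊ : ENNReal) ^ (1 / n : ℝ) := by
    intro n
    have h1 : Mle 0 (X ^ n) := mle_pow hX n
    have h2 : Mle (X ^ n) (Y ^ n) := mle_pow_mono hX h n
    rw [← map_pow, ← map_pow]
    exact ENNReal.rpow_le_rpow (by exact_mod_cast cring_nnnorm_mono h1 h2)
      (by positivity)
  exact le_of_tendsto_of_tendsto'
    (spectrum.pow_nnnorm_pow_one_div_tendsto_nhds_spectralRadius (cring m X))
    (spectrum.pow_nnnorm_pow_one_div_tendsto_nhds_spectralRadius (cring m Y)) hpow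

lemma msummable_iff {ι : Type*} (f : ι → Mat m) :
    Summable f ↔ ∀ a b, Summable fun i => f i a b := by
  exact Pi.summable.trans (forall_congr' fun a => Pi.summable)

lemma mtsum_apply {ι : Type*} {f : ι → Mat m} (h : Summable f) (a b : Fin m) :
    (∑' i, f i) a b = ∑' i, f i a b := by
  rw [show (∑' i, f i) a = ∑' i, f i a from tsum_apply h, tsum_apply (Pi.summable.mp h a)]

lemma mle_tsum {ι : Type*} {f : ι → Mat m} (h : ∀ i, Mle 0 (f i)) :
    Mle 0 (∑' i, f i) := by
  by_cases hs : Summable f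
  · intro a b
    rw [mtsum_apply hs]
    exact tsum_nonneg fun i => h i a b
  · rw [tsum_eq_zero_of_not_summable hs]
    exact fun a b => le_rfl

lemma eventually_pow_nnnorm_lt (B : MatC m) {q : NNReal} (h : spectralRadius ℂ B < q) :
    ∀ᶠ n : ℕ in atTop, (‖B ^ n‖₊ : NNReal) < q ^ n := by
  have ht := spectrum.pow_nnnorm_pow_one_div_tendsto_nhds_spectralRadius B
  have hev : ∀ᶠ n : ℕ in atTop, (‖B ^ n‖₊ : ENNReal) ^ (1 / n : ℝ) < (q : ENNReal) :=
    ht.eventually_lt_const h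
  filter_upwards [hev, eventually_ge_atTop 1] with n hn hn1
  have hn0 : (n : ℝ) ≠ 0 := by positivity
  have := ENNReal.rpow_lt_rpow hn (by positivity : (0:ℝ) < n)
  rw [← ENNReal.rpow_mul, one_div_mul_cancel hn0, ENNReal.rpow_one,
    ENNReal.rpow_natCast, ← ENNReal.coe_pow] at this
  exact_mod_cast this

lemma entry_abs_le_cring_norm (X : Mat m) (a b : Fin m) : |X a b| ≤ ‖cring m X‖ := by
  have h := entry_nnnorm_le (cring m X) a b
  rw [cring_apply] at h
  have : ‖(X a b : ℂ)‖ ≤ ‖cring m X‖ := h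
  rwa [Complex.norm_real, Real.norm_eq_abs] at this

lemma pow_entry_bound {X : Mat m} {q : NNReal} (h : specRad X < q) :
    ∀ᶠ n : ℕ in atTop, ∀ a b, |(X ^ n) a b| ≤ (q : ℝ) ^ n := by
  have hev := eventually_pow_nnnorm_lt (cring m X) (h := h)
  filter_upwards [hev] with n hn a b
  have h1 : |(X ^ n) a b| ≤ ‖cring m (X ^ n)‖ := entry_abs_le_cring_norm _ a b
  rw [map_pow] at h1
  refine h1.trans ?_
  have := hn.le
  exact_mod_cast this

lemma pow_summable_and_tendsto {X : Mat m} (hX : Mle 0 X) (h : specRad X < 1) :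
    Summable (fun n => X ^ n) ∧ Tendsto (fun n => X ^ n) atTop (nhds 0) := by
  obtain ⟨q, hq1, hq2⟩ := ENNReal.lt_iff_exists_nnreal_btwn.mp h
  have hq : (q : ℝ) < 1 := by exact_mod_cast hq2
  have hq0 : (0 : ℝ) ≤ q := q.coe_nonneg
  have hev := pow_entry_bound (X := X) hq1
  constructor
  · rw [msummable_iff]
    intro a b
    refine Summable.of_norm_bounded_eventually_nat (g := fun n => (q : ℝ) ^ n)
      (summable_geometric_of_lt_one hq0 hq) ?_
    filter_upwards [hev] with n hn
    simpa [Real.norm_eq_abs] using hn a b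
  · refine tendsto_pi_nhds.mpr ?_
    intro a
    refine tendsto_pi_nhds.mpr ?_
    intro b
    have : Tendsto (fun n : ℕ => (q : ℝ) ^ n) atTop (nhds 0) :=
      tendsto_pow_atTop_nhds_zero_of_lt_one hq0 hq
    refine squeeze_zero_norm' ?_ this
    filter_upwards [hev] with n hn
    simpa [Real.norm_eq_abs] using hn a b

lemma geom_mul_left (X : Mat m) (n : ℕ) :
    (1 - X) * ∑ k ∈ Finset.range n, X ^ k = 1 - X ^ n := by
  induction n with
  | zero => simp
  | succ n ih =>
    rw [Finset.sum_range_succ, mul_add, ih, pow_succ', sub_mul, one_mul]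
    abel

lemma geom_mul_right (X : Mat m) (n : ℕ) :
    (∑ k ∈ Finset.range n, X ^ k) * (1 - X) = 1 - X ^ n := by
  induction n with
  | zero => simp
  | succ n ih =>
    rw [Finset.sum_range_succ, add_mul, ih, mul_sub, mul_one, ← pow_succ]
    abel

lemma neumann {X : Mat m} (hX : Mle 0 X) (h : specRad X < 1) :
    Summable (fun n => X ^ n) ∧ Mle 0 (∑' n, X ^ n) ∧
    (1 - X) * (∑' n, X ^ n) = 1 ∧ (∑' n, X ^ n) * (1 - X) = 1 := by
  obtain ⟨hs, ht⟩ := pow_summable_and_tendsto hX h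
  set E := ∑' n, X ^ n with hE
  have key : Tendsto (fun n => ∑ k ∈ Finset.range n, X ^ k) atTop (nhds E) :=
    hs.hasSum.tendsto_sum_nat
  refine ⟨hs, mle_tsum fun n => mle_pow hX n, ?_, ?_⟩
  · have t1 : Tendsto (fun n => (1 - X) * ∑ k ∈ Finset.range n, X ^ k) atTop
        (nhds ((1 - X) * E)) := key.const_mul _
    have t2 : Tendsto (fun n => (1 - X) * ∑ k ∈ Finset.range n, X ^ k) atTop
        (nhds (1 - 0)) := by
      simp_rw [geom_mul_left]
      exact tendsto_const_nhds.sub ht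
    rw [sub_zero] at t2
    exact tendsto_nhds_unique t1 t2
  · have t1 : Tendsto (fun n => (∑ k ∈ Finset.range n, X ^ k) * (1 - X)) atTop
        (nhds (E * (1 - X))) := key.mul_const _
    have t2 : Tendsto (fun n => (∑ k ∈ Finset.range n, X ^ k) * (1 - X)) atTop
        (nhds (1 - 0)) := by
      simp_rw [geom_mul_right]
      exact tendsto_const_nhds.sub ht
    rw [sub_zero] at t2
    exact tendsto_nhds_unique t1 t2

section Resolvent

attribute [local instance] Matrix.linfty_opNormOneClass

lemma smul_pow_tendsto_zero {B : MatC m} {u : ℂ} {q : NNReal}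
    (hq : spectralRadius ℂ B < q) (hqu : (q : ℝ) < ‖u‖) :
    Tendsto (fun n : ℕ => (u ^ n)⁻¹ • B ^ n) atTop (nhds 0) := by
  have hq0 : (0 : ℝ) ≤ q := q.coe_nonneg
  have hu0 : (0 : ℝ) < ‖u‖ := lt_of_le_of_lt hq0 hqu
  refine squeeze_zero_norm' ?_ (tendsto_pow_atTop_nhds_zero_of_lt_one
    (by positivity) ((div_lt_one hu0).mpr hqu) : Tendsto (fun n : ℕ => ((q : ℝ) / ‖u‖) ^ n) atTop (nhds 0))
  filter_upwards [eventually_pow_nnnorm_lt B hq] with n hn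
  have hBn : ‖B ^ n‖ ≤ (q : ℝ) ^ n := by exact_mod_cast hn.le
  have : ‖(u ^ n)⁻¹ • B ^ n‖ = ‖u‖⁻¹ ^ n * ‖B ^ n‖ := by
    rw [norm_smul, norm_inv, norm_pow, inv_pow]
  rw [this]
  calc ‖u‖⁻¹ ^ n * ‖B ^ n‖ ≤ ‖u‖⁻¹ ^ n * (q : ℝ) ^ n :=
        mul_le_mul_of_nonneg_left hBn (by positivity)
    _ = ((q : ℝ) / ‖u‖) ^ n := by
        rw [div_pow, div_eq_mul_inv, ← inv_pow, mul_comm]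

lemma resolvent_series (B : MatC m) {u : ℂ} (h : spectralRadius ℂ B < ‖u‖₊) :
    ∃ R : MatC m, HasSum (fun k => (u ^ (k + 1))⁻¹ • B ^ k) R ∧
      (u • (1 : MatC m) - B) * R = 1 ∧ R * (u • (1 : MatC m) - B) = 1 := by
  obtain ⟨q, hq1, hq2⟩ := ENNReal.lt_iff_exists_nnreal_btwn.mp h
  have hq2' : (q : ℝ) < ‖u‖ := by
    have : q < ‖u‖₊ := by exact_mod_cast hq2
    exact_mod_cast this
  have hq0 : (0 : ℝ) ≤ q := q.coe_nonneg
  have hu0 : (0 : ℝ) < ‖u‖ := lt_of_le_of_lt hq0 hq2'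
  have hune : u ≠ 0 := by
    intro h0
    rw [h0, norm_zero] at hu0
    exact lt_irrefl _ hu0
  have hsum : Summable (fun k => (u ^ (k + 1))⁻¹ • B ^ k) := by
    refine Summable.of_norm_bounded_eventually_nat
      (g := fun k => ‖u‖⁻¹ * ((q : ℝ) / ‖u‖) ^ k)
      ((summable_geometric_of_lt_one (by positivity)
        ((div_lt_one hu0).mpr hq2')).mul_left _) ?_
    filter_upwards [eventually_pow_nnnorm_lt B hq1] with k hk
    have hBk : ‖B ^ k‖ ≤ (q : ℝ) ^ k := by exact_mod_cast hk.le
    have h1 : ‖(u ^ (k + 1))⁻¹ • B ^ k‖ = ‖u‖⁻¹ ^ (k + 1) * ‖B ^ k‖ := by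
      rw [norm_smul, norm_inv, norm_pow, inv_pow]
    rw [h1, pow_succ, div_pow, div_eq_mul_inv, mul_comm ((q:ℝ)^k) _ , ← inv_pow]
    calc ‖u‖⁻¹ ^ k * ‖u‖⁻¹ * ‖B ^ k‖ ≤ ‖u‖⁻¹ ^ k * ‖u‖⁻¹ * (q : ℝ) ^ k :=
          mul_le_mul_of_nonneg_left hBk (by positivity)
      _ = ‖u‖⁻¹ * (‖u‖⁻¹ ^ k * (q : ℝ) ^ k) := by ring
  refine ⟨∑' k, (u ^ (k + 1))⁻¹ • B ^ k, hsum.hasSum, ?_, ?_⟩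
  · have key := hsum.hasSum.tendsto_sum_nat
    have t1 := key.const_mul (u • (1 : MatC m) - B)
    have hid : ∀ n : ℕ, (u • (1 : MatC m) - B) * ∑ k ∈ Finset.range n, (u ^ (k + 1))⁻¹ • B ^ k
        = 1 - (u ^ n)⁻¹ • B ^ n := by
      intro n
      induction n with
      | zero => simp
      | succ n ih =>
        rw [Finset.sum_range_succ, mul_add, ih]
        have : (u • (1 : MatC m) - B) * ((u ^ (n + 1))⁻¹ • B ^ n)
            = (u ^ n)⁻¹ • B ^ n - (u ^ (n + 1))⁻¹ • B ^ (n + 1) := by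
          rw [mul_smul_comm, sub_mul, smul_mul_assoc, one_mul, smul_sub, smul_smul,
            ← pow_succ']
          congr 2
          field_simp
          ring
        rw [this]
        abel
    have t2 : Tendsto (fun n => (u • (1 : MatC m) - B) *
        ∑ k ∈ Finset.range n, (u ^ (k + 1))⁻¹ • B ^ k) atTop (nhds (1 - 0)) := by
      simp_rw [hid]
      exact tendsto_const_nhds.sub (smul_pow_tendsto_zero hq1 hq2')
    rw [sub_zero] at t2
    exact tendsto_nhds_unique t1 t2
  · have key := hsum.hasSum.tendsto_sum_nat
    have t1 := key.mul_const (u • (1 : MatC m) - B)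
    have hid : ∀ n : ℕ, (∑ k ∈ Finset.range n, (u ^ (k + 1))⁻¹ • B ^ k) * (u • (1 : MatC m) - B)
        = 1 - (u ^ n)⁻¹ • B ^ n := by
      intro n
      induction n with
      | zero => simp
      | succ n ih =>
        rw [Finset.sum_range_succ, add_mul, ih]
        have : ((u ^ (n + 1))⁻¹ • B ^ n) * (u • (1 : MatC m) - B)
            = (u ^ n)⁻¹ • B ^ n - (u ^ (n + 1))⁻¹ • B ^ (n + 1) := by
          rw [smul_mul_assoc, mul_sub, mul_smul_comm, mul_one, smul_sub, smul_smul,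
            ← pow_succ]
          congr 2
          field_simp
          ring
        rw [this]
        abel
    have t2 : Tendsto (fun n => (∑ k ∈ Finset.range n, (u ^ (k + 1))⁻¹ • B ^ k) *
        (u • (1 : MatC m) - B)) atTop (nhds (1 - 0)) := by
      simp_rw [hid]
      exact tendsto_const_nhds.sub (smul_pow_tendsto_zero hq1 hq2')
    rw [sub_zero] at t2
    exact tendsto_nhds_unique t1 t2

lemma csummable_pi {f : ℕ → MatC m} (h : Summable f) (a b : Fin m) :
    Summable fun i => f i a b := by
  have h' : @Summable (MatC m) ℕ _ instTopologicalSpaceMatrix f (SummationFilter.unconditional ℕ) := h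
  exact Pi.summable.mp (Pi.summable.mp h' a) b

lemma ctsum_apply {f : ℕ → MatC m} (h : Summable f) (a b : Fin m) :
    (∑' i, f i) a b = ∑' i, f i a b := by
  have h' : @Summable (MatC m) ℕ _ instTopologicalSpaceMatrix f (SummationFilter.unconditional ℕ) := h
  calc (∑' i, f i) a b = (∑' i, f i a) b := congrArg (fun g => g b) (tsum_apply h')
    _ = ∑' i, f i a b := tsum_apply (Pi.summable.mp h' a)

lemma nontrivialC (hm : 0 < m) : Nontrivial (MatC m) := by
  refine ⟨0, 1, fun h => ?_⟩
  have := congrFun (congrFun h ⟨0, hm⟩) ⟨0, hm⟩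
  simp [Matrix.one_apply] at this

/-- Weak Perron-Frobenius: the spectral radius of an entrywise nonnegative real
matrix belongs to the spectrum of its complexification. -/
lemma pf_mem (hm : 0 < m) {T : Mat m} (hT : Mle 0 T) :
    ∃ r : NNReal, specRad T = (r : ENNReal) ∧
      ((r : ℝ) : ℂ) ∈ spectrum ℂ (cring m T) := by
  haveI : Nonempty (Fin m) := ⟨⟨0, hm⟩⟩
  haveI : Nontrivial (MatC m) := nontrivialC hm
  set B := cring m T with hB
  have hfin : spectralRadius ℂ B ≠ ⊤ :=
    ((spectrum.spectralRadius_le_nnnorm (𝕜 := ℂ) B).trans_lt ENNReal.coe_lt_top).ne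
  set r : NNReal := (spectralRadius ℂ B).toNNReal with hr
  have hrEq : specRad T = (r : ENNReal) := (ENNReal.coe_toNNReal hfin).symm
  refine ⟨r, hrEq, ?_⟩
  by_contra hcon
  obtain ⟨z, hz, hznorm⟩ := spectrum.exists_nnnorm_eq_spectralRadius B
  have hzr : ‖z‖₊ = r := by
    have : (‖z‖₊ : ENNReal) = (r : ENNReal) := hznorm.trans hrEq
    exact_mod_cast this
  have hrad : spectralRadius ℂ B = (r : ENNReal) := (ENNReal.coe_toNNReal hfin).symm
  rcases eq_or_lt_of_le (zero_le : 0 ≤ r) with hr0 | hr0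
  · -- r = 0 : then z = 0 ∈ spectrum, contradiction
    apply hcon
    have hz0 : z = 0 := by
      have : ‖z‖₊ = 0 := by rw [hzr, ← hr0]
      simpa using this
    have : ((r : ℝ) : ℂ) = z := by
      rw [hz0, ← hr0]; simp
    rwa [this]
  -- now r > 0
  have hr0R : (0 : ℝ) < (r : ℝ) := by exact_mod_cast hr0
  have hunit : IsUnit (((r : ℝ) : ℂ) • (1 : MatC m) - B) := by
    have := spectrum.notMem_iff.mp hcon
    rwa [Algebra.algebraMap_eq_smul_one] at this
  -- continuity of the resolvent at r
  set φ : ℝ → MatC m := fun t => Ring.inverse ((t : ℂ) • (1 : MatC m) - B) with hφ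
  have hψcont : Continuous (fun t : ℝ => (t : ℂ) • (1 : MatC m) - B) :=
    (Complex.continuous_ofReal.smul continuous_const).sub continuous_const
  have hφcont : ContinuousAt φ (r : ℝ) := by
    have h1 : ContinuousAt Ring.inverse (((r : ℝ) : ℂ) • (1 : MatC m) - B) := by
      have := NormedRing.inverse_continuousAt hunit.unit
      rwa [IsUnit.unit_spec] at this
    have h2 : ContinuousAt (fun t : ℝ => (t : ℂ) • (1 : MatC m) - B) (r : ℝ) :=
      hψcont.continuousAt
    exact ContinuousAt.comp (g := Ring.inverse)
      (f := fun t : ℝ => (t : ℂ) • (1 : MatC m) - B) (x := (r : ℝ)) h1 h2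
  set C : ℝ := ‖φ (r : ℝ)‖ + 1 with hC
  have hC1 : (1 : ℝ) ≤ C := by
    have : (0 : ℝ) ≤ ‖φ (r : ℝ)‖ := norm_nonneg _
    linarith
  have hCb : ∀ᶠ t in nhds (r : ℝ), ‖φ t‖ < C :=
    (hφcont.norm).tendsto.eventually_lt_const (by rw [hC]; linarith)
  obtain ⟨δ, hδ0, hδ⟩ := Metric.eventually_nhds_iff.mp hCb
  -- choose t slightly bigger than r
  set ε : ℝ := min (δ / 2) (1 / (2 * C)) with hε
  have hε0 : 0 < ε := lt_min (by linarith) (by positivity)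
  set t : ℝ := (r : ℝ) + ε with ht
  have htr : (r : ℝ) < t := by rw [ht]; linarith
  have htpos : 0 < t := lt_of_le_of_lt r.coe_nonneg htr
  have htδ : dist t (r : ℝ) < δ := by
    rw [Real.dist_eq, ht, add_sub_cancel_left, abs_of_pos hε0]
    calc ε ≤ δ / 2 := min_le_left _ _
      _ < δ := by linarith
  have hφtC : ‖φ t‖ < C := hδ htδ
  have hεC : ε * C < 1 := by
    have h1 : ε ≤ 1 / (2 * C) := min_le_right _ _
    have hC0 : 0 < C := by linarith
    calc ε * C ≤ (1 / (2 * C)) * C := mul_le_mul_of_nonneg_right h1 hC0.le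
      _ = 1 / 2 := by field_simp
      _ < 1 := by norm_num
  -- the two resolvent series
  have hz0 : z ≠ 0 := by
    intro h0
    rw [h0, nnnorm_zero] at hzr
    exact absurd hzr.symm (ne_of_gt hr0)
  set u : ℂ := ((t / (r : ℝ) : ℝ) : ℂ) * z with hu
  have hru : ‖u‖ = t := by
    rw [hu, norm_mul, Complex.norm_real, Real.norm_eq_abs,
      abs_of_pos (div_pos htpos hr0R)]
    have hznr : ‖z‖ = (r : ℝ) := by
      rw [← coe_nnnorm, hzr]
    rw [hznr, div_mul_cancel₀ _ hr0R.ne']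
  have hradu : spectralRadius ℂ B < (‖u‖₊ : ENNReal) := by
    rw [hrad, ENNReal.coe_lt_coe]
    have : (r : ℝ) < ‖u‖ := by rw [hru]; exact htr
    rw [← coe_nnnorm] at this
    exact_mod_cast this
  have hradt : spectralRadius ℂ B < (‖((t : ℝ) : ℂ)‖₊ : ENNReal) := by
    rw [hrad, ENNReal.coe_lt_coe]
    have h2 : ‖((t : ℝ) : ℂ)‖ = t := by
      rw [Complex.norm_real, Real.norm_eq_abs, abs_of_pos htpos]
    have : (r : ℝ) < ‖((t : ℝ) : ℂ)‖ := by rw [h2]; exact htr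
    rw [← coe_nnnorm] at this
    exact_mod_cast this
  obtain ⟨Ru, hRu, hRul, hRur⟩ := resolvent_series B hradu
  obtain ⟨Rt, hRt, hRtl, hRtr⟩ := resolvent_series B hradt
  -- φ t = Rt
  have hφt : φ t = Rt := by
    have hunit_t : IsUnit (((t : ℝ) : ℂ) • (1 : MatC m) - B) :=
      ⟨⟨_, Rt, hRtl, hRtr⟩, rfl⟩
    rw [hφ]
    exact (Ring.inverse_unit ⟨_, Rt, hRtl, hRtr⟩ : _)
  -- entrywise dominance ⟹ ‖Ru‖ ≤ ‖Rt‖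
  have hTk : ∀ (k : ℕ) (a b : Fin m), (B ^ k) a b = (((T ^ k) a b : ℝ) : ℂ) := by
    intro k a b
    rw [hB, ← map_pow]
    rfl
  have hdom : ‖Ru‖₊ ≤ ‖Rt‖₊ := by
    rw [Matrix.linfty_opNNNorm_def, Matrix.linfty_opNNNorm_def]
    refine Finset.sup_mono_fun fun a _ => Finset.sum_le_sum fun b _ => ?_
    -- real series
    set s : ℕ → ℝ := fun k => (t ^ (k + 1))⁻¹ * (T ^ k) a b with hs
    have hs0 : ∀ k, 0 ≤ s k := fun k =>
      mul_nonneg (by positivity) (mle_pow hT k a b)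
    have hRtab : Rt a b = ((∑' k, s k : ℝ) : ℂ) := by
      rw [← hRt.tsum_eq, ctsum_apply hRt.summable a b, Complex.ofReal_tsum]
      refine tsum_congr fun k => ?_
      rw [Matrix.smul_apply, hTk k a b, hs]
      simp only [smul_eq_mul]
      rw [Complex.ofReal_mul, Complex.ofReal_inv, Complex.ofReal_pow]
    have hsc : Summable fun k => ((s k : ℝ) : ℂ) := by
      have := csummable_pi hRt.summable a b
      refine this.congr fun k => ?_
      rw [Matrix.smul_apply, hTk k a b, hs]
      simp only [smul_eq_mul]
      rw [Complex.ofReal_mul, Complex.ofReal_inv, Complex.ofReal_pow]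
    have hss : Summable s := Complex.summable_ofReal.mp hsc
    have hRuab : ‖Ru a b‖ ≤ ∑' k, s k := by
      rw [← hRu.tsum_eq, ctsum_apply hRu.summable a b]
      have hsumu := csummable_pi hRu.summable a b
      have hnorm : ∀ k, ‖((u ^ (k + 1))⁻¹ • B ^ k) a b‖ = s k := by
        intro k
        rw [Matrix.smul_apply, hTk k a b, smul_eq_mul, norm_mul, norm_inv, norm_pow,
          hru, Complex.norm_real, Real.norm_eq_abs,
          abs_of_nonneg (mle_pow hT k a b), hs]
      calc ‖∑' k, ((u ^ (k + 1))⁻¹ • B ^ k) a b‖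
          ≤ ∑' k, ‖((u ^ (k + 1))⁻¹ • B ^ k) a b‖ :=
            norm_tsum_le_tsum_norm (hss.congr fun k => (hnorm k).symm)
        _ = ∑' k, s k := tsum_congr hnorm
    have hRtval : ‖Rt a b‖ = ∑' k, s k := by
      rw [hRtab, Complex.norm_real, Real.norm_eq_abs,
        abs_of_nonneg (tsum_nonneg hs0)]
    have : ‖Ru a b‖ ≤ ‖Rt a b‖ := by rw [hRtval]; exact hRuab
    exact_mod_cast this
  -- lower bound : 1 ≤ ‖u - z‖ * ‖Ru‖
  have hlow : (1 : ℝ) ≤ ‖u - z‖ * ‖Ru‖ := by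
    by_contra hsmall
    push_neg at hsmall
    set w : MatC m := (z - u) • Ru with hw
    have hwn : ‖w‖ < 1 := by
      rw [hw, norm_smul, ← norm_neg (z - u), neg_sub]
      exact hsmall
    have hone : IsUnit ((1 : MatC m) + w) := by
      have heq : (1 : MatC m) + w = 1 - (-w) := (sub_neg_eq_add (1 : MatC m) w).symm
      rw [heq]
      exact isUnit_one_sub_of_norm_lt_one (by rwa [norm_neg])
    have hid : z • (1 : MatC m) - B = (u • (1 : MatC m) - B) * (1 + w) := by
      rw [mul_add, mul_one, hw, mul_smul_comm, hRul]
      rw [sub_smul]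
      abel
    have hzunit : IsUnit (z • (1 : MatC m) - B) := by
      rw [hid]
      have huu : IsUnit (u • (1 : MatC m) - B) := ⟨⟨_, Ru, hRul, hRur⟩, rfl⟩
      exact huu.mul hone
    have := spectrum.mem_iff.mp hz
    rw [Algebra.algebraMap_eq_smul_one] at this
    exact this hzunit
  -- compute ‖u - z‖ = t - r
  have huz : ‖u - z‖ = t - (r : ℝ) := by
    have : u - z = (((t / (r : ℝ) - 1 : ℝ)) : ℂ) * z := by
      rw [hu]
      push_cast
      ring
    rw [this, norm_mul, Complex.norm_real, Real.norm_eq_abs]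
    have hznr : ‖z‖ = (r : ℝ) := by rw [← coe_nnnorm, hzr]
    have hpos : (0:ℝ) < t / (r : ℝ) - 1 := by
      rw [lt_sub_iff_add_lt, zero_add, lt_div_iff₀ hr0R, one_mul]
      exact htr
    rw [hznr, abs_of_pos hpos, sub_mul, div_mul_cancel₀ _ hr0R.ne', one_mul]
  -- contradiction
  have hRuRt : ‖Ru‖ ≤ ‖Rt‖ := hdom
  have : (1 : ℝ) ≤ (t - (r : ℝ)) * ‖Rt‖ := by
    rw [← huz]
    calc (1:ℝ) ≤ ‖u - z‖ * ‖Ru‖ := hlow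
      _ ≤ ‖u - z‖ * ‖Rt‖ := mul_le_mul_of_nonneg_left hRuRt (norm_nonneg _)
  have hfinal : (t - (r : ℝ)) * ‖Rt‖ < 1 := by
    have h1 : t - (r : ℝ) = ε := by rw [ht]; ring
    rw [h1, ← hφt]
    calc ε * ‖φ t‖ ≤ ε * C := mul_le_mul_of_nonneg_left hφtC.le hε0.le
      _ < 1 := hεC
  linarith

lemma mle_mul_left_mono {T X Y : Mat m} (hT : Mle 0 T) (h : Mle X Y) :
    Mle (T * X) (T * Y) := by
  intro a b
  simp only [Matrix.mul_apply]
  exact Finset.sum_le_sum fun x _ => mul_le_mul_of_nonneg_left (h x b) (hT a x)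

lemma mem_spec_iff_det (B : MatC m) (z : ℂ) :
    z ∈ spectrum ℂ B ↔ (z • (1 : MatC m) - B).det = 0 := by
  rw [spectrum.mem_iff, Algebra.algebraMap_eq_smul_one, Matrix.isUnit_iff_isUnit_det,
    isUnit_iff_ne_zero, not_ne_iff]

lemma nnnorm_le_specRadius {X : MatC m} {z : ℂ} (h : z ∈ spectrum ℂ X) :
    (‖z‖₊ : ENNReal) ≤ spectralRadius ℂ X :=
  le_iSup₂ (f := fun k (_ : k ∈ spectrum ℂ X) => (‖k‖₊ : ENNReal)) z h

lemma spec_pow {X : MatC m} {z : ℂ} (h : z ∈ spectrum ℂ X) (n : ℕ) :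
    z ^ n ∈ spectrum ℂ (X ^ n) := by
  have hsub := spectrum.subset_polynomial_aeval X (Polynomial.X ^ n : Polynomial ℂ)
  have hmem : z ^ n ∈ (fun x => Polynomial.eval x (Polynomial.X ^ n : Polynomial ℂ)) ''
      spectrum ℂ X := ⟨z, h, by simp⟩
  have := hsub hmem
  rwa [map_pow, Polynomial.aeval_X] at this

lemma spec_neg {X : MatC m} {z : ℂ} (h : z ∈ spectrum ℂ X) : -z ∈ spectrum ℂ (-X) := by
  rw [mem_spec_iff_det] at h ⊢
  have heq : (-z) • (1 : MatC m) - (-X) = -(z • (1 : MatC m) - X) := by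
    rw [neg_smul]; abel
  rw [heq, Matrix.det_neg, h, mul_zero]

lemma spec_map_fwd {B C : MatC m} (h1 : (1 - B) * (1 + C) = 1) {lam : ℂ}
    (hl : lam ∈ spectrum ℂ B) : lam / (1 - lam) ∈ spectrum ℂ C := by
  classical
  have hdetB : ((1 : MatC m) - B).det ≠ 0 := by
    intro h0
    have hdd := congrArg Matrix.det h1
    rw [Matrix.det_mul, h0, zero_mul, Matrix.det_one] at hdd
    exact zero_ne_one hdd
  have hlam1 : lam ≠ 1 := by
    intro h
    rw [mem_spec_iff_det, h, one_smul] at hl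
    exact hdetB hl
  have h1l : (1 : ℂ) - lam ≠ 0 := sub_ne_zero.mpr (Ne.symm hlam1)
  set μ : ℂ := lam / (1 - lam) with hμ
  have hBC : (1 - B) * C = 1 - (1 - B) := by
    have h3 := h1
    rw [mul_add, mul_one] at h3
    -- h3 : (1 - B) + (1 - B) * C = 1
    have := congrArg (fun X => X - ((1 : MatC m) - B)) h3
    simpa using this
  have hkey : (1 - B) * (μ • (1 : MatC m) - C) = (1 + μ) • ((1 : MatC m) - B) - 1 := by
    rw [mul_sub, mul_smul_comm, mul_one, hBC, add_smul, one_smul]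
    abel
  have h1μ : 1 + μ = 1 / (1 - lam) := by
    rw [hμ]; field_simp; ring
  have hD : (1 + μ) • ((1 : MatC m) - B) - 1 = (1 / (1 - lam)) • (lam • (1 : MatC m) - B) := by
    rw [h1μ, smul_sub, smul_sub, smul_smul]
    rw [sub_right_comm, sub_left_inj]
    calc (1 / (1 - lam)) • (1 : MatC m) - 1
        = (1 / (1 - lam)) • (1 : MatC m) - (1 : ℂ) • (1 : MatC m) := by rw [one_smul]
      _ = ((1 / (1 - lam)) - 1) • (1 : MatC m) := (sub_smul _ _ _).symm
      _ = ((1 / (1 - lam)) * lam) • (1 : MatC m) := by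
          congr 1
          field_simp
          ring
  rw [mem_spec_iff_det]
  have hdet : ((1 : MatC m) - B).det * (μ • (1 : MatC m) - C).det = 0 := by
    rw [← Matrix.det_mul, hkey, hD, Matrix.det_smul]
    rw [(mem_spec_iff_det B lam).mp hl, mul_zero]
  rcases mul_eq_zero.mp hdet with h | h
  · exact absurd h hdetB
  · exact h

lemma spec_map_rev {B C : MatC m} (h2 : (1 + C) * (1 - B) = 1) {μ : ℂ}
    (hμ : μ ∈ spectrum ℂ C) : μ / (1 + μ) ∈ spectrum ℂ B := by
  have h1' : (1 - (-C)) * (1 + (-B)) = 1 := by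
    rw [sub_neg_eq_add, show (1 : MatC m) + -B = 1 - B from (sub_eq_add_neg _ _).symm]
    exact h2
  have hμ' : -μ ∈ spectrum ℂ (-C) := spec_neg hμ
  have hmid := spec_map_fwd h1' hμ'
  have h3 := spec_neg hmid
  rw [neg_neg] at h3
  have : -(-μ / (1 - -μ)) = μ / (1 + μ) := by
    rw [sub_neg_eq_add, neg_div, neg_neg]
  rwa [this] at h3

lemma cring_one_sub (X : Mat m) : cring m ((1 : Mat m) - X) = 1 - cring m X := by
  rw [map_sub, _root_.map_one]

lemma cring_one_add (X : Mat m) : cring m ((1 : Mat m) + X) = 1 + cring m X := by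
  rw [map_add, _root_.map_one]

/-- The key spectral relation for the regular splitting. -/
lemma key_spec (hm : 0 < m) {T S : Mat m} (hT : Mle 0 T) (hS : Mle 0 S)
    (h1 : (1 - T) * (1 + S) = 1) (h2 : (1 + S) * (1 - T) = 1) :
    specRad T < 1 ∧ specRad T = specRad S / (1 + specRad S) := by
  haveI : Nonempty (Fin m) := ⟨⟨0, hm⟩⟩
  obtain ⟨r, hrEq, hrmem⟩ := pf_mem hm hT
  obtain ⟨s, hsEq, hsmem⟩ := pf_mem hm hS
  have hB1 : ((1 : MatC m) - cring m T) * (1 + cring m S) = 1 := by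
    have := congrArg (cring m) h1
    rwa [_root_.map_mul, cring_one_sub, cring_one_add, _root_.map_one] at this
  have hB2 : ((1 : MatC m) + cring m S) * (1 - cring m T) = 1 := by
    have := congrArg (cring m) h2
    rwa [_root_.map_mul, cring_one_sub, cring_one_add, _root_.map_one] at this
  -- S = T + T * S
  have hrec : S = T + T * S := by
    have h3 := h1
    rw [mul_add, mul_one, sub_mul, one_mul] at h3
    -- h3 : (1 - T) + (S - T * S) = 1
    have h4 : S - T * S = T := by
      have h5 := congrArg (fun X => X - ((1 : Mat m) - T)) h3
      simpa using h5
    exact sub_eq_iff_eq_add.mp h4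
  -- T * S ≤ S and T ≤ S
  have hTS : Mle (T * S) S := by
    intro a b
    have hSe : S a b = (T + T * S) a b := by rw [← hrec]
    rw [hSe, Matrix.add_apply]
    linarith [show (0:ℝ) ≤ T a b from hT a b]
  have hTleS : Mle T S := by
    intro a b
    have hSe : S a b = (T + T * S) a b := by rw [← hrec]
    rw [hSe, Matrix.add_apply]
    linarith [show (0:ℝ) ≤ (T * S) a b from mle_mul hT hS a b]
  have hpowle : ∀ n, Mle (T ^ (n + 1)) S := by
    intro n
    induction n with
    | zero => intro a b; rw [pow_one]; exact hTleS a b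
    | succ n ih =>
      intro a b
      have h5 : Mle (T ^ (n + 2)) (T * S) := by
        rw [pow_succ']
        exact mle_mul_left_mono hT ih
      exact le_trans (h5 a b) (hTS a b)
  -- r ≤ 1
  have hrle1 : (r : ℝ) ≤ 1 := by
    by_contra hgt
    push_neg at hgt
    have hb : ∀ n : ℕ, (r : ℝ) ^ (n + 1) ≤ ‖cring m S‖ := by
      intro n
      have hzn : (((r : ℝ) : ℂ)) ^ (n + 1) ∈ spectrum ℂ (cring m T ^ (n + 1)) :=
        spec_pow hrmem (n + 1)
      have hle := spectrum.norm_le_norm_of_mem hzn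
      have hL : ‖(((r : ℝ) : ℂ)) ^ (n + 1)‖ = (r : ℝ) ^ (n + 1) := by
        rw [norm_pow, Complex.norm_real, Real.norm_eq_abs, abs_of_nonneg r.coe_nonneg]
      have hR : ‖cring m T ^ (n + 1)‖ ≤ ‖cring m S‖ := by
        rw [← map_pow]
        have := cring_nnnorm_mono (mle_pow hT (n + 1)) (hpowle n)
        exact_mod_cast this
      rw [hL] at hle
      exact hle.trans hR
    have htend := tendsto_pow_atTop_atTop_of_one_lt hgt
    obtain ⟨n, hn1, hn2⟩ :=
      ((htend.eventually_gt_atTop ‖cring m S‖).and (eventually_ge_atTop 1)).exists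
    have := hb (n - 1)
    rw [Nat.sub_add_cancel hn2] at this
    linarith
  -- r ≠ 1 since 1 - T is a unit
  have hne1 : (r : ℝ) ≠ 1 := by
    intro heq
    have hBunit : IsUnit ((1 : MatC m) - cring m T) :=
      ⟨⟨_, _, hB1, hB2⟩, rfl⟩
    have hmem1 : (1 : ℂ) ∈ spectrum ℂ (cring m T) := by
      have : (((r : ℝ)) : ℂ) = 1 := by rw [heq]; norm_num
      rwa [this] at hrmem
    have := spectrum.mem_iff.mp hmem1
    rw [_root_.map_one] at this
    exact this hBunit
  have hrlt1 : (r : ℝ) < 1 := lt_of_le_of_ne hrle1 hne1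
  have hr0 : (0 : ℝ) ≤ r := r.coe_nonneg
  have hs0 : (0 : ℝ) ≤ s := s.coe_nonneg
  have h1r : (0 : ℝ) < 1 - r := by linarith
  have h1s : (0 : ℝ) < 1 + s := by linarith
  -- forward inequality
  have hf : (r : ℝ) / (1 - (r : ℝ)) ≤ (s : ℝ) := by
    have hmem2 := spec_map_fwd hB1 hrmem
    have hcast : (((r : ℝ) : ℂ)) / (1 - ((r : ℝ) : ℂ)) =
        ((((r : ℝ) / (1 - (r : ℝ))) : ℝ) : ℂ) := by push_cast; ring
    rw [hcast] at hmem2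
    have hnorm := nnnorm_le_specRadius hmem2
    have hsrad : spectralRadius ℂ (cring m S) = (s : ENNReal) := hsEq
    rw [hsrad] at hnorm
    have h2 : ‖((((r : ℝ) / (1 - (r : ℝ))) : ℝ) : ℂ)‖₊ ≤ s := ENNReal.coe_le_coe.mp hnorm
    have h3 : ‖((((r : ℝ) / (1 - (r : ℝ))) : ℝ) : ℂ)‖ ≤ (s : ℝ) := by exact_mod_cast h2
    rwa [Complex.norm_real, Real.norm_eq_abs,
      abs_of_nonneg (div_nonneg hr0 h1r.le)] at h3
  -- reverse inequality
  have hg : (s : ℝ) / (1 + (s : ℝ)) ≤ (r : ℝ) := by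
    have hmem2 := spec_map_rev hB2 hsmem
    have hcast : (((s : ℝ) : ℂ)) / (1 + ((s : ℝ) : ℂ)) =
        ((((s : ℝ) / (1 + (s : ℝ))) : ℝ) : ℂ) := by push_cast; ring
    rw [hcast] at hmem2
    have hnorm := nnnorm_le_specRadius hmem2
    have hrrad : spectralRadius ℂ (cring m T) = (r : ENNReal) := hrEq
    rw [hrrad] at hnorm
    have h2 : ‖((((s : ℝ) / (1 + (s : ℝ))) : ℝ) : ℂ)‖₊ ≤ r := ENNReal.coe_le_coe.mp hnorm
    have h3 : ‖((((s : ℝ) / (1 + (s : ℝ))) : ℝ) : ℂ)‖ ≤ (r : ℝ) := by exact_mod_cast h2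
    rwa [Complex.norm_real, Real.norm_eq_abs,
      abs_of_nonneg (div_nonneg hs0 h1s.le)] at h3
  -- real arithmetic : r = s / (1 + s)
  have hA : (r : ℝ) * (1 + (s : ℝ)) ≤ (s : ℝ) := by
    have h4 := (div_le_iff₀ h1r).mp hf
    nlinarith
  have hBle : (s : ℝ) ≤ (r : ℝ) * (1 + (s : ℝ)) := by
    have h4 := (div_le_iff₀ h1s).mp hg
    linarith
  have hreq : (r : ℝ) * (1 + (s : ℝ)) = (s : ℝ) := le_antisymm hA hBle
  constructor
  · rw [hrEq]
    exact_mod_cast hrlt1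
  · rw [hrEq, hsEq]
    rw [ENNReal.eq_div_iff (by simp : (1 : ENNReal) + (s : ENNReal) ≠ 0)
      (by simp [ENNReal.add_ne_top] : (1 : ENNReal) + (s : ENNReal) ≠ ⊤)]
    have hnn : ((1 : NNReal) + s) * r = s := by
      have : (((1 + s) * r : NNReal) : ℝ) = ((s : NNReal) : ℝ) := by
        push_cast
        linarith [hreq]
      exact_mod_cast this
    rw [← ENNReal.coe_one, ← ENNReal.coe_add, ← ENNReal.coe_mul]
    exact_mod_cast hnn

end Resolvent

lemma mle_sum {ι : Type*} {s : Finset ι} {f : ι → Mat m} (h : ∀ i ∈ s, Mle 0 (f i)) :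
    Mle 0 (∑ i ∈ s, f i) := by
  intro a b
  rw [Matrix.sum_apply]
  exact Finset.sum_nonneg fun i hi => h i hi a b

lemma mle_add {X Y : Mat m} (hX : Mle 0 X) (hY : Mle 0 Y) : Mle 0 (X + Y) := by
  intro a b
  simpa [Matrix.add_apply] using add_nonneg (hX a b) (hY a b)

/-- the antidiagonal equivalence -/
def diagEquiv : (Σ n : ℕ, Fin (n + 1)) ≃ ℕ × ℕ where
  toFun x := (x.1 - x.2.1, x.2.1)
  invFun y := ⟨y.1 + y.2, ⟨y.2, by omega⟩⟩
  left_inv := by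
    rintro ⟨n, ⟨k, hk⟩⟩
    have h : n - k + k = n := by omega
    exact Sigma.ext h ((Fin.heq_ext_iff (show n - k + k + 1 = n + 1 by omega)).mpr rfl)
  right_inv := by rintro ⟨j, k⟩; simp

section Comb

variable (p : ℕ) (A : ℕ → Mat m) (Aℓ : ℕ → ℕ → Mat m) (G : Mat m)

theorem FN_eq_V
    (hA0 : ∀ i, Mle 0 (A i)) (hAℓ0 : ∀ ℓ i, Mle 0 (Aℓ ℓ i))
    (hcompat : ∀ i, A i = ∑ ℓ ∈ Finset.range (p + 1),
      if ℓ ≤ i then Aℓ ℓ (i - ℓ) else 0)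
    (hG0 : Mle 0 G)
    (hsG : ∀ ℓ, Summable (fun i => Aℓ ℓ i * G ^ i))
    (hsN : ∀ ℓ, Summable (fun i => Aℓ ℓ (i + 1) * ∑ j ∈ Finset.range (i + 1), G ^ j))
    (hsAstar : ∀ j, Summable (fun k => A (j + k + 1) * G ^ k))
    (hsV : Summable (fun j => ∑' k, A (j + k + 1) * G ^ k)) :
    Fmat p Aℓ G + Nmat p Aℓ G = Vmat A G := by
  classical
  set geom : ℕ → Mat m := fun n => ∑ j ∈ Finset.range n, G ^ j with hgeom
  have hgeom0 : ∀ n, Mle 0 (geom n) := fun n => mle_sum fun j _ => mle_pow hG0 j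
  -- the ℕ×ℕ family
  set f : ℕ × ℕ → Mat m := fun x => A (x.1 + x.2 + 1) * G ^ x.2 with hf
  have hf0 : ∀ x a b, 0 ≤ f x a b := fun x a b =>
    mle_mul (hA0 _) (mle_pow hG0 _) a b
  have hfsum : Summable f := by
    rw [msummable_iff]
    intro a b
    rw [summable_prod_of_nonneg (fun x => hf0 x a b)]
    constructor
    · intro j
      exact (msummable_iff _).mp (hsAstar j) a b
    · have := (msummable_iff _).mp hsV a b
      refine this.congr fun j => ?_
      simp only [hf]
      exact mtsum_apply (hsAstar j) a b
  -- step 2+3 : Vmat = ∑' n, A (n+1) * geom (n+1)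
  have hsum1 : Summable (fun n => A (n + 1) * geom (n + 1)) := by
    have h1 : Summable fun c : (Σ n : ℕ, Fin (n + 1)) => f (diagEquiv c) :=
      hfsum.comp_injective diagEquiv.injective
    have h2 : Summable fun n => ∑' k : Fin (n + 1), f (diagEquiv ⟨n, k⟩) := h1.sigma
    refine h2.congr fun n => ?_
    rw [tsum_fintype]
    have : ∀ k : Fin (n + 1), f (diagEquiv ⟨n, k⟩) = A (n + 1) * G ^ (k : ℕ) := by
      intro k
      have hk : (k : ℕ) ≤ n := Nat.lt_succ_iff.mp k.isLt
      simp only [diagEquiv, Equiv.coe_fn_mk, hf]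
      rw [show n - (k : ℕ) + (k : ℕ) + 1 = n + 1 by omega]
    rw [Finset.sum_congr rfl fun k _ => this k]
    rw [← Finset.mul_sum, Fin.sum_univ_eq_sum_range]
  have hV1 : Vmat A G = ∑' n, A (n + 1) * geom (n + 1) := by
    have e1 : Vmat A G = ∑' x : ℕ × ℕ, f x := (Summable.tsum_prod' hfsum fun j => Pi.summable.mpr
      fun a => Pi.summable.mpr fun b => (msummable_iff _).mp (hsAstar j) a b).symm
    have hs2 : Summable fun c : (Σ n : ℕ, Fin (n + 1)) => f (diagEquiv c) :=
      hfsum.comp_injective diagEquiv.injective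
    rw [e1, ← diagEquiv.tsum_eq f, Summable.tsum_sigma hs2]
    refine tsum_congr fun n => ?_
    rw [tsum_fintype]
    have : ∀ k : Fin (n + 1), f (diagEquiv ⟨n, k⟩) = A (n + 1) * G ^ (k : ℕ) := by
      intro k
      have hk : (k : ℕ) ≤ n := Nat.lt_succ_iff.mp k.isLt
      simp only [diagEquiv, Equiv.coe_fn_mk, hf]
      rw [show n - (k : ℕ) + (k : ℕ) + 1 = n + 1 by omega]
    rw [Finset.sum_congr rfl fun k _ => this k, ← Finset.mul_sum, Fin.sum_univ_eq_sum_range]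
  -- step 4: split by ℓ
  set g : ℕ → ℕ → Mat m := fun ℓ n =>
    (if ℓ ≤ n + 1 then Aℓ ℓ (n + 1 - ℓ) else 0) * geom (n + 1) with hg
  have hsplit : ∀ n, A (n + 1) * geom (n + 1) = ∑ ℓ ∈ Finset.range (p + 1), g ℓ n := by
    intro n
    rw [hcompat (n + 1), Finset.sum_mul]
  have hg0 : ∀ ℓ n, Mle 0 (g ℓ n) := by
    intro ℓ n
    by_cases h : ℓ ≤ n + 1
    · simp only [hg, if_pos h]
      exact mle_mul (hAℓ0 _ _) (hgeom0 _)
    · simp only [hg, if_neg h, zero_mul]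
      exact fun a b => le_rfl
  have hgsum : ∀ ℓ ∈ Finset.range (p + 1), Summable (g ℓ) := by
    intro ℓ hℓ
    rw [msummable_iff]
    intro a b
    refine Summable.of_nonneg_of_le (fun n => hg0 ℓ n a b) (fun n => ?_)
      ((msummable_iff _).mp hsum1 a b)
    rw [hsplit n, Matrix.sum_apply]
    exact Finset.single_le_sum (f := fun ℓ' => g ℓ' n a b)
      (fun ℓ' _ => hg0 ℓ' n a b) hℓ
  have hV2 : Vmat A G = ∑ ℓ ∈ Finset.range (p + 1), ∑' n, g ℓ n := by
    rw [hV1]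
    rw [show (fun n => A (n + 1) * geom (n + 1)) = fun n => ∑ ℓ ∈ Finset.range (p + 1), g ℓ n
      from funext hsplit]
    exact Summable.tsum_finsetSum hgsum
  -- step 5: evaluate each ℓ
  have hterm : ∀ ℓ ∈ Finset.range (p + 1), ∑' n, g ℓ n =
      (∑' i, Aℓ ℓ i * G ^ i) * geom ℓ + ∑' i, Aℓ ℓ (i + 1) * geom (i + 1) := by
    intro ℓ hℓ
    match ℓ with
    | 0 =>
      have : ∀ n, g 0 n = Aℓ 0 (n + 1) * geom (n + 1) := by
        intro n; simp [hg]
      rw [tsum_congr this]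
      simp [hgeom]
    | (d + 1) =>
      have hsg := hgsum (d + 1) hℓ
      have hshift := (Summable.sum_add_tsum_nat_add d hsg).symm
      have hz : ∑ n ∈ Finset.range d, g (d + 1) n = 0 := by
        refine Finset.sum_eq_zero fun n hn => ?_
        have : ¬ (d + 1 ≤ n + 1) := by simp at hn ⊢; omega
        simp [hg, this]
      have hsa : Summable fun i => Aℓ (d + 1) i * (G ^ i * geom (d + 1)) := by
        simp_rw [← mul_assoc]
        exact (hsG (d + 1)).mul_right _
      have hsb : Summable fun i => Aℓ (d + 1) i * geom i := by
        refine (summable_nat_add_iff 1).mp ?_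
        exact hsN (d + 1)
      have hterm2 : ∀ i, g (d + 1) (i + d) =
          Aℓ (d + 1) i * (G ^ i * geom (d + 1)) + Aℓ (d + 1) i * geom i := by
        intro i
        have h1 : d + 1 ≤ i + d + 1 := by omega
        have h2 : i + d + 1 - (d + 1) = i := by omega
        have hsplit2 : geom (i + (d + 1)) = geom i + G ^ i * geom (d + 1) := by
          simp only [hgeom]
          rw [Finset.sum_range_add, Finset.mul_sum]
          congr 1
          exact Finset.sum_congr rfl fun x _ => pow_add G i x
        show (if d + 1 ≤ i + d + 1 then Aℓ (d + 1) (i + d + 1 - (d + 1)) else 0) *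
            geom (i + d + 1) = _
        rw [if_pos h1, h2, show i + d + 1 = i + (d + 1) from by omega, hsplit2, mul_add,
          add_comm]
      rw [hshift, hz, zero_add, tsum_congr hterm2, Summable.tsum_add hsa hsb]
      congr 1
      · simp_rw [← mul_assoc]
        exact (hsG (d + 1)).tsum_mul_right _
      · rw [Summable.tsum_eq_zero_add hsb]
        simp [hgeom]
  rw [hV2, Finset.sum_congr rfl hterm, Fmat, Nmat, ← Finset.sum_add_distrib]

end Comb

end Stmt6Aux

open Stmt6Aux

/-- regular splitting properties, Theorem 3.4 of the paper. -/
theorem stmt6 (m : ℕ) (hm : 1 ≤ m) (p : ℕ)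
    (A : ℕ → Matrix (Fin m) (Fin m) ℝ)
    (Aℓ : ℕ → ℕ → Matrix (Fin m) (Fin m) ℝ)
    (hA0 : ∀ i, Mle 0 (A i)) (hAℓ0 : ∀ ℓ i, Mle 0 (Aℓ ℓ i))
    (hsum : Summable A)
    (hrow : ∀ k, ∑ j, (∑' i, A i) k j ≤ 1)
    (hcompat : ∀ i, A i = ∑ ℓ ∈ Finset.range (p + 1),
      if ℓ ≤ i then Aℓ ℓ (i - ℓ) else 0)
    (G : Matrix (Fin m) (Fin m) ℝ) (hG : IsMinSol A G)
    -- all series occurring converge entrywise: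
    (hsG : ∀ ℓ, Summable (fun i => Aℓ ℓ i * G ^ i))
    (hsN : ∀ ℓ, Summable (fun i => Aℓ ℓ (i + 1) * ∑ j ∈ Finset.range (i + 1), G ^ j))
    (hsAstar : ∀ j, Summable (fun k => A (j + k + 1) * G ^ k))
    (hsV : Summable (fun j => ∑' k, A (j + k + 1) * G ^ k))
    -- `ρ(V) < 1` :
    (hρ : specRad (Vmat A G) < 1) :
    specRad (Fmat p Aℓ G) < 1 ∧
    IsUnit ((1 : Matrix (Fin m) (Fin m) ℝ) - Fmat p Aℓ G) ∧
    Mle 0 ((1 - Fmat p Aℓ G)⁻¹) ∧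
    Mle 0 (Nmat p Aℓ G) ∧
    (1 - Fmat p Aℓ G) - Nmat p Aℓ G = 1 - Vmat A G ∧
    IsUnit ((1 : Matrix (Fin m) (Fin m) ℝ) - Vmat A G) ∧
    specRad ((1 - Fmat p Aℓ G)⁻¹ * Nmat p Aℓ G) =
      specRad ((1 - Vmat A G)⁻¹ * Nmat p Aℓ G) /
        (1 + specRad ((1 - Vmat A G)⁻¹ * Nmat p Aℓ G)) ∧
    specRad ((1 - Fmat p Aℓ G)⁻¹ * Nmat p Aℓ G) < 1 := by
  have hm0 : 0 < m := hm
  have hG0 : Mle 0 G := hG.1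
  set F := Fmat p Aℓ G with hFdef
  set N := Nmat p Aℓ G with hNdef
  set V := Vmat A G with hVdef
  have hFN : F + N = V := FN_eq_V p A Aℓ G hA0 hAℓ0 hcompat hG0 hsG hsN hsAstar hsV
  have hF0 : Mle 0 F :=
    mle_sum fun ℓ _ => mle_mul (mle_tsum fun i => mle_mul (hAℓ0 ℓ i) (mle_pow hG0 i))
      (mle_sum fun j _ => mle_pow hG0 j)
  have hN0 : Mle 0 N :=
    mle_sum fun ℓ _ => mle_tsum fun i => mle_mul (hAℓ0 _ _)
      (mle_sum fun j _ => mle_pow hG0 j)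
  have hV0 : Mle 0 V := by
    rw [← hFN]
    exact mle_add hF0 hN0
  have hFleV : Mle F V := by
    intro a b
    rw [← hFN, Matrix.add_apply]
    linarith [show (0:ℝ) ≤ N a b from hN0 a b]
  have hFrad : specRad F < 1 := lt_of_le_of_lt (specRad_mono hF0 hFleV) hρ
  obtain ⟨hsF, hEF0, hEFl, hEFr⟩ := neumann hF0 hFrad
  obtain ⟨hsVp, hEV0, hEVl, hEVr⟩ := neumann hV0 hρ
  set EF := ∑' n, F ^ n with hEFdef
  set EV := ∑' n, V ^ n with hEVdef
  have hMunit : IsUnit ((1 : Matrix (Fin m) (Fin m) ℝ) - F) := ⟨⟨_, EF, hEFl, hEFr⟩, rfl⟩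
  have hHunit : IsUnit ((1 : Matrix (Fin m) (Fin m) ℝ) - V) := ⟨⟨_, EV, hEVl, hEVr⟩, rfl⟩
  have hMinv : (1 - F)⁻¹ = EF := Matrix.inv_eq_right_inv hEFl
  have hHinv : (1 - V)⁻¹ = EV := Matrix.inv_eq_right_inv hEVl
  have hsplit : (1 : Matrix (Fin m) (Fin m) ℝ) - F - N = 1 - V := by
    rw [← hFN]
    abel
  -- set up T and S
  set T := EF * N with hTdef
  set S := EV * N with hSdef
  have hT0 : Mle 0 T := mle_mul hEF0 hN0
  have hS0 : Mle 0 S := mle_mul hEV0 hN0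
  have h1T : (1 : Matrix (Fin m) (Fin m) ℝ) - T = EF * (1 - V) := by
    rw [← hsplit, mul_sub, hEFr, hTdef]
  have hFVN : (1 : Matrix (Fin m) (Fin m) ℝ) - F = (1 - V) + N := by
    rw [← hsplit]
    abel
  have h1S : (1 : Matrix (Fin m) (Fin m) ℝ) + S = EV * (1 - F) := by
    rw [hFVN, mul_add, hEVr, hSdef]
  have hTS1 : ((1 : Matrix (Fin m) (Fin m) ℝ) - T) * (1 + S) = 1 := by
    rw [h1T, h1S, mul_assoc, ← mul_assoc (1 - V), hEVl, one_mul, hEFr]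
  have hTS2 : ((1 : Matrix (Fin m) (Fin m) ℝ) + S) * (1 - T) = 1 := by
    rw [h1T, h1S, mul_assoc, ← mul_assoc (1 - F), hEFl, one_mul, hEVr]
  obtain ⟨hTlt, hTeq⟩ := key_spec hm0 hT0 hS0 hTS1 hTS2
  refine ⟨hFrad, hMunit, ?_, hN0, hsplit, hHunit, ?_, ?_⟩
  · rw [hMinv]
    exact hEF0
  · rw [hMinv, hHinv]
    exact hTeq
  · rw [hMinv]
    exact hTlt
end

section
/- Let two admissible embeddings be given: integers q₁, q₂ ≥ −1 and nonnegative families {A^{(1)}_{ℓ,i}} (ℓ = −1,…,q₁) and {A^{(2)}_{ℓ,i}} (ℓ = −1,…,q₂), each satisfying the compatibility condition A_i = Σ_ℓ A^{(h)}_{ℓ, i−ℓ} for all i ≥ −1. Define F^{(h)} = Σ_{ℓ=0}^{q_h} A^{(h)}_ℓ(G) Σ_{j=0}^ℓ G^j, M^{(h)} = I − F^{(h)} and N^{(h)} = Σ_{ℓ=−1}^{q_h} Σ_{i=1}^∞ A^{(h)}_{ℓ,i} Σ_{j=0}^{i−1} G^j, for h = 1, 2. Assume ρ(V) < 1. If F^{(1)}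 ≥ F^{(2)} entrywise, then M^{(1)} and M^{(2)} are invertible and ρ((M^{(1)})⁻¹ N^{(1)}) ≤ ρ((M^{(2)})⁻¹ N^{(2)}); that is, the first fixed point iteration converges at least as fast as the second. -/
open Matrix

namespace Stmt7Aux

open Filter Topology
open scoped ENNReal NNReal

variable {m : ℕ}

local notation "M" => Matrix (Fin m) (Fin m) ℝ

lemma mleTrans {X Y Z : M} (h1 : Mle X Y) (h2 : Mle Y Z) : Mle X Z :=
  fun i j => (h1 i j).trans (h2 i j)

lemma mle_zero_one : Mle (0 : M) 1 := by
  intro i j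
  simp only [Matrix.zero_apply, Matrix.one_apply]
  split <;> norm_num

lemma mleAdd {X Y Z W : M} (h1 : Mle X Y) (h2 : Mle Z W) : Mle (X + Z) (Y + W) :=
  fun i j => add_le_add (h1 i j) (h2 i j)

lemma mleSubNonneg {X Y : M} (h : Mle X Y) : Mle 0 (Y - X) := by
  intro i j; simpa using h i j

lemma mleSubMono {X Y Z : M} (h : Mle X Y) : Mle (Z - Y) (Z - X) := by
  intro i j
  simp only [Matrix.sub_apply]
  have := h i j; linarith

lemma mle_of_sub_nonneg {X Y : M} (h : Mle 0 (Y - X)) : Mle X Y := by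
  intro i j; have := h i j; simp only [Matrix.sub_apply, Matrix.zero_apply] at this; linarith

lemma mleMulNonneg {X Y : M} (hX : Mle 0 X) (hY : Mle 0 Y) : Mle 0 (X * Y) := by
  intro i j
  rw [Matrix.zero_apply, Matrix.mul_apply]
  exact Finset.sum_nonneg fun u _ => _root_.mul_nonneg
    (by simpa using hX i u) (by simpa using hY u j)

lemma mleMulRight {X Y Z : M} (h : Mle X Y) (hZ : Mle 0 Z) : Mle (X * Z) (Y * Z) := by
  intro i j
  rw [Matrix.mul_apply, Matrix.mul_apply]
  exact Finset.sum_le_sum fun u _ =>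
    mul_le_mul_of_nonneg_right (h i u) (by simpa using hZ u j)

lemma mleMulLeft {X Y Z : M} (h : Mle X Y) (hZ : Mle 0 Z) : Mle (Z * X) (Z * Y) := by
  intro i j
  rw [Matrix.mul_apply, Matrix.mul_apply]
  exact Finset.sum_le_sum fun u _ =>
    mul_le_mul_of_nonneg_left (h u j) (by simpa using hZ i u)

lemma mleMul {X Y Z W : M} (hX : Mle 0 X) (h1 : Mle X Y) (h2 : Mle Z W) (hZ : Mle 0 Z) :
    Mle (X * Z) (Y * W) :=
  mleTrans (mleMulRight h1 hZ) (mleMulLeft h2 (mleTrans hX h1))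

lemma mlePowNonneg {X : M} (hX : Mle 0 X) (n : ℕ) : Mle 0 (X ^ n) := by
  induction n with
  | zero => simpa using mle_zero_one
  | succ k ih => rw [pow_succ]; exact mleMulNonneg ih hX

lemma mlePow {X Y : M} (hX : Mle 0 X) (h : Mle X Y) (n : ℕ) : Mle (X ^ n) (Y ^ n) := by
  induction n with
  | zero => intro i j; simp
  | succ k ih => rw [pow_succ, pow_succ]; exact mleMul (mlePowNonneg hX k) ih h hX

lemma mleSmul {c : ℝ} (hc : 0 ≤ c) {X Y : M} (h : Mle X Y) : Mle (c • X) (c • Y) := by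
  intro i j
  simp only [Matrix.smul_apply, smul_eq_mul]
  exact mul_le_mul_of_nonneg_left (h i j) hc

lemma mleSmulNonneg {c : ℝ} (hc : 0 ≤ c) {X : M} (h : Mle 0 X) : Mle 0 (c • X) := by
  have := mleSmul hc h; simpa using this

lemma mleSumNonneg {α : Type*} {s : Finset α} {f : α → M} (h : ∀ k ∈ s, Mle 0 (f k)) :
    Mle 0 (∑ k ∈ s, f k) := by
  intro i j
  rw [Matrix.zero_apply, Matrix.sum_apply]
  exact Finset.sum_nonneg fun k hk => by simpa using h k hk i j

lemma mleSum {α : Type*} {s : Finset α} {f g : α → M} (h : ∀ k ∈ s, Mle (f k) (g k)) :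
    Mle (∑ k ∈ s, f k) (∑ k ∈ s, g k) := by
  intro i j
  rw [Matrix.sum_apply, Matrix.sum_apply]
  exact Finset.sum_le_sum fun k hk => h k hk i j

/-! ### summability / tsum entrywise helpers -/

lemma summable_entry {f : ℕ → M} (hf : Summable f) (i j : Fin m) :
    Summable fun k => f k i j :=
  Pi.summable.mp (Pi.summable.mp hf i) j

lemma summable_of_entries {ι : Type*} {f : ι → M} (h : ∀ i j, Summable fun k => f k i j) :
    Summable f :=
  Pi.summable.mpr fun i => Pi.summable.mpr fun j => h i j

lemma summable_entry' {ι : Type*} {f : ι → M} (hf : Summable f) (i j : Fin m) :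
    Summable fun k => f k i j :=
  Pi.summable.mp (Pi.summable.mp hf i) j

lemma tsum_entry {ι : Type*} {f : ι → M} (hf : Summable f) (i j : Fin m) :
    (∑' k, f k) i j = ∑' k, f k i j := by
  have h1 := congrFun (tsum_apply (f := fun k => (f k : Fin m → Fin m → ℝ)) (x := i) hf) j
  rw [tsum_apply (Pi.summable.mp hf i)] at h1
  exact h1

lemma mleTsumNonneg {ι : Type*} {f : ι → M} (h : ∀ k, Mle 0 (f k)) : Mle 0 (∑' k, f k) := by
  by_cases hf : Summable f
  · intro i j
    rw [Matrix.zero_apply, tsum_entry hf]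
    exact tsum_nonneg fun k => by simpa using h k i j
  · rw [tsum_eq_zero_of_not_summable hf]
    exact fun i j => le_refl _

lemma mleTsum {ι : Type*} {f g : ι → M} (hf : Summable f) (hg : Summable g)
    (h : ∀ k, Mle (f k) (g k)) : Mle (∑' k, f k) (∑' k, g k) := by
  intro i j
  rw [tsum_entry hf, tsum_entry hg]
  exact Summable.tsum_le_tsum (fun k => h k i j) (summable_entry' hf i j) (summable_entry' hg i j)

lemma mleSumLeTsum {f : ℕ → M} (hf : Summable f) (h : ∀ k, Mle 0 (f k)) (n : ℕ) :
    Mle (∑ k ∈ Finset.range n, f k) (∑' k, f k) := by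
  intro i j
  rw [Matrix.sum_apply, tsum_entry hf]
  exact Summable.sum_le_tsum _ (fun k _ => by simpa using h k i j) (summable_entry' hf i j)


/-! ### Neumann series -/

lemma neumann_right {B : M} (hs : Summable fun k => B ^ k) :
    (∑' k, B ^ k) * (1 - B) = 1 := by
  have h1 : (∑' k, B ^ k) * B = ∑' k, B ^ (k + 1) := by
    rw [← hs.tsum_mul_right B]
    exact tsum_congr fun k => (pow_succ B k).symm
  have h2 : (∑' k, B ^ k) = 1 + ∑' k, B ^ (k + 1) := by
    simpa using Summable.tsum_eq_zero_add hs
  rw [mul_sub, mul_one, h1, h2]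
  abel

lemma neumann_left {B : M} (hs : Summable fun k => B ^ k) :
    (1 - B) * (∑' k, B ^ k) = 1 := by
  have h1 : B * (∑' k, B ^ k) = ∑' k, B ^ (k + 1) := by
    rw [← hs.tsum_mul_left B]
    exact tsum_congr fun k => (pow_succ' B k).symm
  have h2 : (∑' k, B ^ k) = 1 + ∑' k, B ^ (k + 1) := by
    simpa using Summable.tsum_eq_zero_add hs
  rw [sub_mul, one_mul, h1, h2]
  abel

lemma partial_le_of_id {H S : M} (hH : Mle 0 H) (hS0 : Mle 0 S) (hid : S = 1 + S * H) :
    ∀ n, Mle (∑ k ∈ Finset.range n, H ^ k) S := by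
  intro n
  induction n with
  | zero => simpa using hS0
  | succ n ih =>
    have he : (∑ k ∈ Finset.range (n + 1), H ^ k) = 1 + (∑ k ∈ Finset.range n, H ^ k) * H := by
      rw [Finset.sum_range_succ', Finset.sum_mul]
      simp only [pow_succ, pow_zero]
      abel
    rw [he, hid]
    exact mleAdd (fun i j => le_refl _) (mleMulRight ih hH)


local notation "MC" => Matrix (Fin m) (Fin m) ℂ

attribute [local instance] Matrix.linftyOpNormedRing Matrix.linftyOpNormedAlgebra

noncomputable local instance : CompleteSpace MC :=
  inferInstance

lemma entry_le_nnnorm (X : M) (i j : Fin m) :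
    ‖X i j‖₊ ≤ ‖X.map (algebraMap ℝ ℂ)‖₊ := by
  rw [Matrix.linfty_opNNNorm_def]
  calc ‖X i j‖₊ = ‖(X.map (algebraMap ℝ ℂ)) i j‖₊ := by
        simp [Matrix.map_apply, Complex.nnnorm_real, Complex.coe_algebraMap]
    _ ≤ ∑ j', ‖(X.map (algebraMap ℝ ℂ)) i j'‖₊ :=
        Finset.single_le_sum (f := fun j' => ‖(X.map (algebraMap ℝ ℂ)) i j'‖₊)
          (fun _ _ => zero_le) (Finset.mem_univ j)
    _ ≤ _ := Finset.le_sup (f := fun i => ∑ j', ‖(X.map (algebraMap ℝ ℂ)) i j'‖₊) (Finset.mem_univ i)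

lemma nnnorm_le_total (X : M) :
    ‖X.map (algebraMap ℝ ℂ)‖₊ ≤ ∑ i, ∑ j, ‖X i j‖₊ := by
  rw [Matrix.linfty_opNNNorm_def]
  apply Finset.sup_le
  intro i _
  calc (∑ j, ‖(X.map (algebraMap ℝ ℂ)) i j‖₊) = ∑ j, ‖X i j‖₊ := by
        apply Finset.sum_congr rfl; intro j _
        simp [Matrix.map_apply, Complex.nnnorm_real, Complex.coe_algebraMap]
    _ ≤ ∑ i, ∑ j, ‖X i j‖₊ :=
        Finset.single_le_sum (f := fun i => ∑ j, ‖X i j‖₊) (fun _ _ => zero_le)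
          (Finset.mem_univ i)

lemma map_pow_c (X : M) (n : ℕ) :
    (X ^ n).map (algebraMap ℝ ℂ) = (X.map (algebraMap ℝ ℂ)) ^ n := by
  have := map_pow ((algebraMap ℝ ℂ).mapMatrix) X n
  simpa [RingHom.mapMatrix_apply] using this


lemma specRad_lt_of_pow_small (hm : 0 < m) (B : M) {t : ℝ} (ht : 0 < t)
    (h : ∃ n : ℕ, 0 < n ∧ ∑ i, ∑ j, ‖(B ^ n) i j‖₊ < t.toNNReal ^ n) :
    specRad B < ENNReal.ofReal t := by
  haveI : Nonempty (Fin m) := Fin.pos_iff_nonempty.mp hm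
  obtain ⟨n, hn, hlt⟩ := h
  set Bc := B.map (algebraMap ℝ ℂ) with hBc
  have h1 : ‖Bc ^ n‖₊ ≤ ∑ i, ∑ j, ‖(B ^ n) i j‖₊ := by
    rw [← map_pow_c]; exact nnnorm_le_total _
  have hn' : (n : ℝ) ≠ 0 := Nat.cast_ne_zero.mpr hn.ne'
  have key : specRad B ≤ (‖Bc ^ n‖₊ : ℝ≥0∞) ^ (1 / (n : ℝ)) := by
    have h2 := spectrum.spectralRadius_le_pow_nnnorm_pow_one_div ℂ Bc (n - 1)
    rw [show n - 1 + 1 = n by omega] at h2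
    rw [show ((n - 1 : ℕ) : ℝ) + 1 = (n : ℝ) by
      push_cast [Nat.cast_sub (by omega : 1 ≤ n)]; ring] at h2
    simpa [specRad, hBc, nnnorm_one, ENNReal.one_rpow] using h2
  have hpos : (0:ℝ) < 1 / (n:ℝ) := by positivity
  calc specRad B ≤ (‖Bc ^ n‖₊ : ℝ≥0∞) ^ (1 / (n : ℝ)) := key
    _ ≤ ((∑ i, ∑ j, ‖(B ^ n) i j‖₊ : ℝ≥0) : ℝ≥0∞) ^ (1 / (n : ℝ)) :=
        ENNReal.rpow_le_rpow (by exact_mod_cast h1) hpos.le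
    _ < ((t.toNNReal ^ n : ℝ≥0) : ℝ≥0∞) ^ (1 / (n : ℝ)) :=
        ENNReal.rpow_lt_rpow (by exact_mod_cast hlt) hpos
    _ = ENNReal.ofReal t := by
        rw [ENNReal.coe_pow, ← ENNReal.rpow_natCast, ← ENNReal.rpow_mul,
          mul_one_div_cancel hn', ENNReal.rpow_one]
        rfl

lemma summable_geom_of_specRad_lt (B : M) (hB : Mle 0 B) {t : ℝ} (ht : 0 < t)
    (h : specRad B < ENNReal.ofReal t) :
    Summable (fun k : ℕ => (t⁻¹) ^ k • B ^ k) := by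
  obtain ⟨r, hr0, h1, h2⟩ := ENNReal.lt_iff_exists_real_btwn.mp h
  have hrt : r < t := (ENNReal.ofReal_lt_ofReal_iff ht).mp h2
  set Bc := B.map (algebraMap ℝ ℂ) with hBc
  have hG := spectrum.pow_nnnorm_pow_one_div_tendsto_nhds_spectralRadius Bc
  have hev : ∀ᶠ n : ℕ in atTop, (‖Bc ^ n‖₊ : ℝ≥0∞) ^ (1 / (n:ℝ)) < ENNReal.ofReal r :=
    hG.eventually_lt_const h1
  obtain ⟨N, hN⟩ := eventually_atTop.mp hev
  -- entrywise geometric bound for n ≥ N + 1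
  have hbound : ∀ n ≥ N + 1, ∀ i j, (B ^ n) i j ≤ r ^ n := by
    intro n hn i j
    have hn0 : 0 < n := by omega
    have hn' : (n : ℝ) ≠ 0 := Nat.cast_ne_zero.mpr hn0.ne'
    have h3 : (‖Bc ^ n‖₊ : ℝ≥0∞) ≤ ENNReal.ofReal (r ^ n) := by
      have h4 := ENNReal.rpow_le_rpow (hN n (by omega)).le (Nat.cast_nonneg n)
      rw [← ENNReal.rpow_mul, one_div_mul_cancel hn', ENNReal.rpow_one,
        ENNReal.rpow_natCast] at h4
      calc (‖Bc ^ n‖₊ : ℝ≥0∞) ≤ (ENNReal.ofReal r) ^ n := h4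
        _ = ENNReal.ofReal (r ^ n) := (ENNReal.ofReal_pow hr0 n).symm
    have h5 : (‖(B ^ n) i j‖₊ : ℝ≥0∞) ≤ ENNReal.ofReal (r ^ n) := by
      refine le_trans ?_ h3
      have := entry_le_nnnorm (B ^ n) i j
      rw [map_pow_c] at this
      exact_mod_cast this
    have h6 : ‖(B ^ n) i j‖ ≤ r ^ n := by
      have := ENNReal.toReal_mono (by simp) h5
      rwa [ENNReal.coe_toReal, coe_nnnorm, ENNReal.toReal_ofReal (by positivity)] at this
    exact (le_abs_self _).trans h6
  apply summable_of_entries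
  intro i j
  have hterm : ∀ k, ((t⁻¹) ^ k • B ^ k) i j = (t⁻¹) ^ k * (B ^ k) i j := by
    intro k; simp [Matrix.smul_apply, smul_eq_mul]
  rw [show (fun k => ((t⁻¹) ^ k • B ^ k) i j) = fun k => (t⁻¹) ^ k * (B ^ k) i j from
    funext hterm]
  rw [← summable_nat_add_iff (N + 1)]
  have hgeom : Summable (fun k : ℕ => (r / t) ^ (N + 1) * (r / t) ^ k) :=
    (summable_geometric_of_lt_one (by positivity) (by
      rw [div_lt_one ht]; exact hrt)).mul_left _
  apply Summable.of_nonneg_of_le _ _ hgeom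
  · intro k
    have hBk : 0 ≤ (B ^ (k + (N+1))) i j := by simpa using mlePowNonneg hB (k + (N+1)) i j
    positivity
  · intro k
    have hb := hbound (k + (N + 1)) (by omega) i j
    have hBk : 0 ≤ (B ^ (k + (N+1))) i j := by simpa using mlePowNonneg hB (k + (N+1)) i j
    calc (t⁻¹) ^ (k + (N+1)) * (B ^ (k + (N+1))) i j
        ≤ (t⁻¹) ^ (k + (N+1)) * r ^ (k + (N+1)) := by
          apply mul_le_mul_of_nonneg_left hb (by positivity)
      _ = (r / t) ^ (N + 1) * (r / t) ^ k := by
          rw [← mul_pow]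
          rw [← pow_add]
          ring_nf

lemma lemP (hm : 0 < m) (B W' : M) {t : ℝ} (ht : 0 < t) (h0 : Mle 0 B)
    (hbd : ∀ n, Mle (∑ k ∈ Finset.range n, (t⁻¹) ^ k • B ^ k) W') :
    Summable (fun k : ℕ => (t⁻¹) ^ k • B ^ k) ∧ specRad B < ENNReal.ofReal t := by
  have hent : ∀ (k : ℕ) (i j : Fin m), ((t⁻¹) ^ k • B ^ k) i j = (t⁻¹) ^ k * (B ^ k) i j := by
    intro k i j; simp [Matrix.smul_apply, smul_eq_mul]
  have hnn : ∀ (k : ℕ) (i j : Fin m), 0 ≤ (t⁻¹) ^ k * (B ^ k) i j := by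
    intro k i j
    have := mlePowNonneg h0 k i j
    simp only [Matrix.zero_apply] at this
    positivity
  have hsum : Summable (fun k : ℕ => (t⁻¹) ^ k • B ^ k) := by
    apply summable_of_entries
    intro i j
    simp only [hent]
    apply summable_of_sum_range_le (c := W' i j) (fun k => hnn k i j)
    intro n
    have := hbd n i j
    rwa [Matrix.sum_apply] at this
    
  refine ⟨hsum, ?_⟩
  -- entries of t⁻¹^n • B^n tend to zero, hence total sum < 1 eventually
  have htend : Tendsto (fun n => ∑ i, ∑ j, (t⁻¹) ^ n * (B ^ n) i j) atTop (𝓝 0) := by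
    have : ∀ i j : Fin m, Tendsto (fun n => (t⁻¹) ^ n * (B ^ n) i j) atTop (𝓝 0) := by
      intro i j
      have hs : Summable fun k => (t⁻¹) ^ k * (B ^ k) i j := by
        have := summable_entry' hsum i j
        simpa only [hent] using this
      exact hs.tendsto_atTop_zero
    have h1 : Tendsto (fun n => ∑ i : Fin m, ∑ j : Fin m, (t⁻¹) ^ n * (B ^ n) i j) atTop
        (𝓝 (∑ i : Fin m, ∑ j : Fin m, (0:ℝ))) := by
      apply tendsto_finset_sum
      intro i _
      apply tendsto_finset_sum
      intro j _
      exact this i j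
    simpa using h1
  have hev : ∀ᶠ n : ℕ in atTop, ∑ i, ∑ j, (t⁻¹) ^ n * (B ^ n) i j < 1 :=
    htend.eventually_lt_const one_pos
  obtain ⟨N, hN⟩ := eventually_atTop.mp hev
  apply specRad_lt_of_pow_small hm B ht
  refine ⟨N + 1, by omega, ?_⟩
  have hlt := hN (N + 1) (by omega)
  rw [← NNReal.coe_lt_coe]
  push_cast
  have h1 : ∀ i j : Fin m, ‖(B ^ (N+1)) i j‖ = (B ^ (N+1)) i j := by
    intro i j
    have := mlePowNonneg h0 (N+1) i j
    simp only [Matrix.zero_apply] at this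
    exact abs_of_nonneg this
  have h2 : (∑ i : Fin m, ∑ j : Fin m, ‖(B ^ (N+1)) i j‖) = ∑ i : Fin m, ∑ j : Fin m, (B ^ (N+1)) i j := by
    apply Finset.sum_congr rfl; intro i _
    apply Finset.sum_congr rfl; intro j _
    exact h1 i j
  rw [h2, Real.coe_toNNReal _ ht.le]
  -- from hlt : ∑ t⁻¹^{N+1} * entry < 1
  have h3 : (∑ i : Fin m, ∑ j : Fin m, (B ^ (N+1)) i j) = t ^ (N+1) * ∑ i : Fin m, ∑ j : Fin m, (t⁻¹) ^ (N+1) * (B ^ (N+1)) i j := by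
    rw [Finset.mul_sum]
    apply Finset.sum_congr rfl; intro i _
    rw [Finset.mul_sum]
    apply Finset.sum_congr rfl; intro j _
    rw [← mul_assoc, ← mul_pow, mul_inv_cancel₀ ht.ne', one_pow, one_mul]
  rw [h3]
  calc t ^ (N+1) * ∑ i : Fin m, ∑ j : Fin m, (t⁻¹) ^ (N+1) * (B ^ (N+1)) i j
      < t ^ (N+1) * 1 := by
        apply mul_lt_mul_of_pos_left hlt (by positivity)
    _ = t ^ (N+1) := mul_one _

lemma lemP1 (hm : 0 < m) (B W' : M) (h0 : Mle 0 B)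
    (hbd : ∀ n, Mle (∑ k ∈ Finset.range n, B ^ k) W') :
    Summable (fun k : ℕ => B ^ k) ∧ specRad B < 1 := by
  have h := lemP hm B W' one_pos h0 (by simpa using hbd)
  rw [ENNReal.ofReal_one] at h
  refine ⟨?_, h.2⟩
  have := h.1
  simpa using this

lemma sum_pow_summable (hm : 0 < m) {V F : M} (hV0 : Mle 0 V)
    (h0 : Mle 0 F) (hFV : Mle F V) (hρ : specRad V < 1) :
    Summable (fun k : ℕ => F ^ k) := by
  have hVs : Summable (fun k : ℕ => V ^ k) := by
    have := summable_geom_of_specRad_lt V hV0 one_pos (by rwa [ENNReal.ofReal_one])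
    simpa using this
  have hWbd : ∀ n, Mle (∑ k ∈ Finset.range n, V ^ k) (∑' k, V ^ k) :=
    mleSumLeTsum hVs (fun k => mlePowNonneg hV0 k)
  exact (lemP1 hm F (∑' k, V ^ k) h0
    (fun n => mleTrans (mleSum (fun k _ => mlePow h0 hFV k)) (hWbd n))).1

/-- The key identity `(1 - F) * (1 - t⁻¹ • H) = 1 - C'` where `H = E (V - F)`,
`C' = t⁻¹ • (V - (1 - t) • F)`. -/
lemma key_identity {V F E : M} {t : ℝ} (ht : 0 < t) (hFE : (1 - F) * E = 1) :
    (1 - F) * (1 - t⁻¹ • (E * (V - F))) = 1 - t⁻¹ • (V - (1 - t) • F) := by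
  have h1 : (1 - F) * (E * (V - F)) = V - F := by rw [← mul_assoc, hFE, one_mul]
  have h2 : (1 - F) * (t⁻¹ • (E * (V - F))) = t⁻¹ • (V - F) := by
    rw [mul_smul_comm, h1]
  have h3 : t⁻¹ • (V - (1 - t) • F) = t⁻¹ • (V - F) + F := by
    rw [show V - (1 - t) • F = (V - F) + t • F by module, smul_add, smul_smul,
      inv_mul_cancel₀ ht.ne', one_smul]
  rw [mul_sub, mul_one, h2, h3]
  abel

lemma compare_step (hm : 0 < m) (V F₁ F₂ : M) (h01 : Mle 0 F₁) (h02 : Mle 0 F₂)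
    (h21 : Mle F₂ F₁) (h1V : Mle F₁ V) (hρ : specRad V < 1)
    {t : ℝ} (ht : 0 < t) (ht1 : t < 1)
    (hlt : specRad ((∑' k, F₂ ^ k) * (V - F₂)) < ENNReal.ofReal t) :
    specRad ((∑' k, F₁ ^ k) * (V - F₁)) < ENNReal.ofReal t := by
  have h2V : Mle F₂ V := mleTrans h21 h1V
  have hV0 : Mle 0 V := mleTrans h01 h1V
  have hF₁s : Summable (fun k : ℕ => F₁ ^ k) := sum_pow_summable hm hV0 h01 h1V hρ
  have hF₂s : Summable (fun k : ℕ => F₂ ^ k) := sum_pow_summable hm hV0 h02 h2V hρ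
  set E₁ := ∑' k, F₁ ^ k with hE₁
  set E₂ := ∑' k, F₂ ^ k with hE₂
  have hE₁0 : Mle 0 E₁ := mleTsumNonneg (fun k => mlePowNonneg h01 k)
  have hE₂0 : Mle 0 E₂ := mleTsumNonneg (fun k => mlePowNonneg h02 k)
  have hE₁l : (1 - F₁) * E₁ = 1 := neumann_left hF₁s
  have hE₂l : (1 - F₂) * E₂ = 1 := neumann_left hF₂s
  have hE₂r : E₂ * (1 - F₂) = 1 := neumann_right hF₂s
  set N₁ := V - F₁ with hN₁
  set N₂ := V - F₂ with hN₂
  have hN₁0 : Mle 0 N₁ := mleSubNonneg h1V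
  have hN₂0 : Mle 0 N₂ := mleSubNonneg h2V
  set H₁ := E₁ * N₁ with hH₁
  set H₂ := E₂ * N₂ with hH₂
  have hH₁0 : Mle 0 H₁ := mleMulNonneg hE₁0 hN₁0
  have hH₂0 : Mle 0 H₂ := mleMulNonneg hE₂0 hN₂0
  -- Neumann series for t⁻¹ • H₂
  have hUs : Summable (fun k : ℕ => (t⁻¹ • H₂) ^ k) := by
    have := summable_geom_of_specRad_lt H₂ hH₂0 ht hlt
    apply Summable.congr this
    intro k
    rw [smul_pow]
  set U := ∑' k, (t⁻¹ • H₂) ^ k with hU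
  have hU0 : Mle 0 U := mleTsumNonneg (fun k =>
    mlePowNonneg (mleSmulNonneg (inv_nonneg.mpr ht.le) hH₂0) k)
  have hUr : U * (1 - t⁻¹ • H₂) = 1 := neumann_right hUs
  -- the C matrices
  set C₁ := t⁻¹ • (V - (1 - t) • F₁) with hC₁
  set C₂ := t⁻¹ • (V - (1 - t) • F₂) with hC₂
  have hK₁ : (1 - F₁) * (1 - t⁻¹ • H₁) = 1 - C₁ := key_identity ht hE₁l
  have hK₂ : (1 - F₂) * (1 - t⁻¹ • H₂) = 1 - C₂ := key_identity ht hE₂l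
  have hCsplit : ∀ F : M, t⁻¹ • (V - (1 - t) • F) = t⁻¹ • (V - F) + F := by
    intro F
    rw [show V - (1 - t) • F = (V - F) + t • F by module, smul_add, smul_smul,
      inv_mul_cancel₀ ht.ne', one_smul]
  have hC₂0 : Mle 0 C₂ := by
    rw [hC₂, hCsplit]
    have := mleAdd (mleSmulNonneg (inv_nonneg.mpr ht.le) hN₂0) h02
    simpa using this
  have hC₁0 : Mle 0 C₁ := by
    rw [hC₁, hCsplit]
    have := mleAdd (mleSmulNonneg (inv_nonneg.mpr ht.le) hN₁0) h01
    simpa using this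
  have hC₁₂ : Mle C₁ C₂ :=
    mleSmul (inv_nonneg.mpr ht.le) (mleSubMono (mleSmul (by linarith) h21))
  -- S₂ = U * E₂ satisfies S₂ = 1 + S₂ * C₂
  set S₂ := U * E₂ with hS₂
  have hS₂0 : Mle 0 S₂ := mleMulNonneg hU0 hE₂0
  have hS₂C : S₂ * (1 - C₂) = 1 := by
    rw [← hK₂, hS₂, mul_assoc, ← mul_assoc E₂, hE₂r, one_mul, hUr]
  have hS₂id : S₂ = 1 + S₂ * C₂ := by
    have h := hS₂C
    rw [mul_sub, mul_one] at h
    rw [← h]; abel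
  -- partial sums of C₁ are bounded, so its Neumann series converges
  have hC₂bd := partial_le_of_id hC₂0 hS₂0 hS₂id
  have hQs : Summable (fun k : ℕ => C₁ ^ k) :=
    (lemP1 hm C₁ S₂ hC₁0
      (fun n => mleTrans (mleSum (fun k _ => mlePow hC₁0 hC₁₂ k)) (hC₂bd n))).1
  set Q := ∑' k, C₁ ^ k with hQ
  have hQ0 : Mle 0 Q := mleTsumNonneg (fun k => mlePowNonneg hC₁0 k)
  have hQr : Q * (1 - C₁) = 1 := neumann_right hQs
  have hQid : Q = 1 + Q * C₁ := by
    have h := hQr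
    rw [mul_sub, mul_one] at h
    rw [← h]; abel
  -- S₁ = Q * (1 - F₁)
  set S₁ := Q * (1 - F₁) with hS₁
  have hS₁eq : S₁ = 1 + Q * (t⁻¹ • N₁) := by
    have hCF : C₁ - F₁ = t⁻¹ • N₁ := by
      rw [hC₁, hCsplit, hN₁]; abel
    calc S₁ = Q - Q * F₁ := by rw [hS₁, mul_sub, mul_one]
      _ = (1 + Q * C₁) - Q * F₁ := by rw [← hQid]
      _ = 1 + Q * (C₁ - F₁) := by rw [mul_sub]; abel
      _ = 1 + Q * (t⁻¹ • N₁) := by rw [hCF]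
  have hS₁0 : Mle 0 S₁ := by
    rw [hS₁eq]
    have := mleAdd mle_zero_one
      (mleMulNonneg hQ0 (mleSmulNonneg (inv_nonneg.mpr ht.le) hN₁0))
    simpa using this
  have hS₁B : S₁ * (1 - t⁻¹ • H₁) = 1 := by
    rw [hS₁, mul_assoc, hK₁, hQr]
  have hS₁id : S₁ = 1 + S₁ * (t⁻¹ • H₁) := by
    have h := hS₁B
    rw [mul_sub, mul_one] at h
    rw [← h]; abel
  have hB₁0 : Mle 0 (t⁻¹ • H₁) := mleSmulNonneg (inv_nonneg.mpr ht.le) hH₁0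
  have hbd := partial_le_of_id hB₁0 hS₁0 hS₁id
  exact (lemP hm H₁ S₁ ht hH₁0 (fun n => by
    have h := hbd n
    have : (∑ k ∈ Finset.range n, (t⁻¹) ^ k • H₁ ^ k)
        = ∑ k ∈ Finset.range n, (t⁻¹ • H₁) ^ k := by
      apply Finset.sum_congr rfl
      intro k _
      rw [smul_pow]
    rwa [this])).2

lemma mainCompare (hm : 0 < m) (V F₁ F₂ : M) (h01 : Mle 0 F₁) (h02 : Mle 0 F₂)
    (h21 : Mle F₂ F₁) (h1V : Mle F₁ V) (hρ : specRad V < 1) :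
    IsUnit ((1 : M) - F₁) ∧ IsUnit ((1 : M) - F₂) ∧
      specRad ((1 - F₁)⁻¹ * (V - F₁)) ≤ specRad ((1 - F₂)⁻¹ * (V - F₂)) := by
  have h2V : Mle F₂ V := mleTrans h21 h1V
  have hV0 : Mle 0 V := mleTrans h01 h1V
  have hF₁s : Summable (fun k : ℕ => F₁ ^ k) := sum_pow_summable hm hV0 h01 h1V hρ
  have hF₂s : Summable (fun k : ℕ => F₂ ^ k) := sum_pow_summable hm hV0 h02 h2V hρ
  have hE₁l : (1 - F₁) * (∑' k, F₁ ^ k) = 1 := neumann_left hF₁s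
  have hE₂l : (1 - F₂) * (∑' k, F₂ ^ k) = 1 := neumann_left hF₂s
  have hU₁ : IsUnit ((1 : M) - F₁) :=
    ⟨⟨1 - F₁, ∑' k, F₁ ^ k, hE₁l, neumann_right hF₁s⟩, rfl⟩
  have hU₂ : IsUnit ((1 : M) - F₂) :=
    ⟨⟨1 - F₂, ∑' k, F₂ ^ k, hE₂l, neumann_right hF₂s⟩, rfl⟩
  have hinv₁ : (1 - F₁)⁻¹ = ∑' k, F₁ ^ k := Matrix.inv_eq_right_inv hE₁l
  have hinv₂ : (1 - F₂)⁻¹ = ∑' k, F₂ ^ k := Matrix.inv_eq_right_inv hE₂l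
  refine ⟨hU₁, hU₂, ?_⟩
  rw [hinv₁, hinv₂]
  -- spectral radius of H₂ is < 1
  have hVs : Summable (fun k : ℕ => V ^ k) := by
    have := summable_geom_of_specRad_lt V hV0 one_pos (by rwa [ENNReal.ofReal_one])
    simpa using this
  set W := ∑' k, V ^ k with hWdef
  have hW0 : Mle 0 W := mleTsumNonneg (fun k => mlePowNonneg hV0 k)
  have hWr : W * (1 - V) = 1 := neumann_right hVs
  have hW1 : W = 1 + W * V := by
    have h := hWr
    rw [mul_sub, mul_one] at h
    rw [← h]; abel
  have hE₂0 : Mle 0 (∑' k, F₂ ^ k) := mleTsumNonneg (fun k => mlePowNonneg h02 k)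
  have hN₂0 : Mle 0 (V - F₂) := mleSubNonneg h2V
  have hH₂0 : Mle 0 ((∑' k, F₂ ^ k) * (V - F₂)) := mleMulNonneg hE₂0 hN₂0
  set S := W * (1 - F₂) with hSdef
  have hSN : S = 1 + W * (V - F₂) := by
    calc S = W - W * F₂ := by rw [hSdef, mul_sub, mul_one]
      _ = (1 + W * V) - W * F₂ := by rw [← hW1]
      _ = 1 + (W * V - W * F₂) := by abel
      _ = 1 + W * (V - F₂) := by rw [mul_sub]
  have hS0 : Mle 0 S := by
    rw [hSN]
    have := mleAdd mle_zero_one (mleMulNonneg hW0 hN₂0)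
    simpa using this
  have hSid : S = 1 + S * ((∑' k, F₂ ^ k) * (V - F₂)) := by
    have hmul : S * ((∑' k, F₂ ^ k) * (V - F₂)) = W * (V - F₂) := by
      rw [hSdef, mul_assoc, ← mul_assoc (1 - F₂), hE₂l, one_mul]
    rw [hmul, ← hSN]
  have hρH₂ : specRad ((∑' k, F₂ ^ k) * (V - F₂)) < 1 :=
    (lemP1 hm _ S hH₂0 (partial_le_of_id hH₂0 hS0 hSid)).2
  -- now compare
  by_contra hcon
  push_neg at hcon
  have hlt2 : specRad ((∑' k, F₂ ^ k) * (V - F₂)) <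
      min (specRad ((∑' k, F₁ ^ k) * (V - F₁))) 1 := lt_min hcon hρH₂
  obtain ⟨r, hr0, hr1, hr2⟩ := ENNReal.lt_iff_exists_real_btwn.mp hlt2
  have hrpos : 0 < r := by
    by_contra hrneg
    push_neg at hrneg
    rw [ENNReal.ofReal_eq_zero.mpr hrneg] at hr1
    simp at hr1
  have hrlt1 : r < 1 := by
    have := lt_of_lt_of_le hr2 (min_le_right _ _)
    rwa [← ENNReal.ofReal_one, ENNReal.ofReal_lt_ofReal_iff one_pos] at this
  have := compare_step hm V F₁ F₂ h01 h02 h21 h1V hρ hrpos hrlt1 hr1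
  exact absurd this (not_lt.mpr (lt_of_lt_of_le hr2 (min_le_left _ _)).le)

/-! ### The identity `F + N = V` -/

local instance : T3Space M := inferInstanceAs (T3Space (Fin m → Fin m → ℝ))

lemma geom_split (G : M) (i ℓ : ℕ) :
    (∑ j ∈ Finset.range (i + ℓ), G ^ j)
      = (∑ j ∈ Finset.range i, G ^ j) + G ^ i * ∑ j ∈ Finset.range ℓ, G ^ j := by
  induction ℓ with
  | zero => simp
  | succ n ih =>
    rw [show i + (n + 1) = (i + n) + 1 by omega, Finset.sum_range_succ, ih,
      Finset.sum_range_succ, mul_add, pow_add]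
    abel

lemma combine_FN (Bl : ℕ → M) (G : M) (ℓ : ℕ)
    (hs1 : Summable fun i => Bl i * G ^ i)
    (hs2 : Summable fun i => Bl (i + 1) * ∑ j ∈ Finset.range (i + 1), G ^ j) :
    (∑' i, Bl i * G ^ i) * (∑ j ∈ Finset.range ℓ, G ^ j)
        + ∑' i, Bl (i + 1) * ∑ j ∈ Finset.range (i + 1), G ^ j
      = ∑' i, Bl i * ∑ j ∈ Finset.range (i + ℓ), G ^ j := by
  have hs2' : Summable (fun i => Bl i * ∑ j ∈ Finset.range i, G ^ j) :=
    (summable_nat_add_iff 1).mp hs2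
  have hs3 : Summable (fun i => Bl i * G ^ i * ∑ j ∈ Finset.range ℓ, G ^ j) :=
    hs1.mul_right _
  have h1 : (∑' i, Bl i * G ^ i) * (∑ j ∈ Finset.range ℓ, G ^ j)
      = ∑' i, Bl i * G ^ i * ∑ j ∈ Finset.range ℓ, G ^ j :=
    (hs1.tsum_mul_right _).symm
  have h2 : (∑' i, Bl (i + 1) * ∑ j ∈ Finset.range (i + 1), G ^ j)
      = ∑' i, Bl i * ∑ j ∈ Finset.range i, G ^ j := by
    have h3 := Summable.tsum_eq_zero_add hs2'
    simpa using h3.symm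
  rw [h1, h2, ← Summable.tsum_add hs3 hs2']
  apply tsum_congr
  intro i
  rw [geom_split G i ℓ, mul_add, mul_assoc]
  abel

lemma diag_reindex (A : ℕ → M) (G : M)
    (hA0 : ∀ i, Mle 0 (A i)) (hG0 : Mle 0 G)
    (hsAstar : ∀ j, Summable (fun k => A (j + k + 1) * G ^ k))
    (hsV : Summable (fun j => ∑' k, A (j + k + 1) * G ^ k)) :
    (∑' (j : ℕ), ∑' (k : ℕ), A (j + k + 1) * G ^ k)
        = ∑' (r : ℕ), A (r + 1) * ∑ j ∈ Finset.range (r + 1), G ^ j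
      ∧ Summable (fun r => A (r + 1) * ∑ j ∈ Finset.range (r + 1), G ^ j) := by
  classical
  set f : ℕ × ℕ → M := fun q => A (q.1 + q.2 + 1) * G ^ q.2 with hfdef
  set g : ℕ × ℕ → M := fun q => if q.2 ≤ q.1 then A (q.1 + 1) * G ^ q.2 else 0 with hgdef
  have hg0 : ∀ q, Mle 0 (g q) := by
    intro q
    rw [hgdef]
    dsimp only
    split
    · exact mleMulNonneg (hA0 _) (mlePowNonneg hG0 _)
    · exact fun i j => le_refl _
  have hf0 : ∀ q, Mle 0 (f q) := fun q => mleMulNonneg (hA0 _) (mlePowNonneg hG0 _)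
  -- f is summable on the product
  have hf : Summable f := by
    apply summable_of_entries
    intro i j
    rw [show (fun q : ℕ × ℕ => f q i j) = fun q : ℕ × ℕ => (A (q.1 + q.2 + 1) * G ^ q.2) i j
      from rfl]
    apply (summable_prod_of_nonneg ?_).mpr
    constructor
    · intro a
      exact summable_entry' (hsAstar a) i j
    · apply Summable.congr (summable_entry' hsV i j)
      intro a
      exact (tsum_entry (hsAstar a) i j)
    · intro q
      have := hf0 q i j
      simpa using this
  -- reindex over the injection (j, k) ↦ (j + k, k)
  set ι : ℕ × ℕ → ℕ × ℕ := fun q => (q.1 + q.2, q.2) with hι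
  have hinj : Function.Injective ι := by
    intro a b h
    rw [hι] at h
    simp only [Prod.mk.injEq] at h
    obtain ⟨h1, h2⟩ := h
    exact Prod.ext (by omega) h2
  have hcomp : ∀ q, g (ι q) = f q := by
    intro q
    rw [hι, hgdef, hfdef]
    simp [Nat.le_add_left]
  have hsupp : Function.support g ⊆ Set.range ι := by
    intro q hq
    rw [Function.mem_support] at hq
    have hle : q.2 ≤ q.1 := by
      by_contra hc
      exact hq (by rw [hgdef]; simp [hc])
    exact ⟨(q.1 - q.2, q.2), by rw [hι]; ext <;> simp <;> omega⟩
  have hsupp' : ∀ x ∉ Set.range ι, g x = 0 := by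
    intro x hx
    by_contra h
    exact hx (hsupp h)
  have hg : Summable g := by
    rw [← Function.Injective.summable_iff hinj hsupp']
    exact Summable.congr hf (fun q => (hcomp q).symm)
  have hfg : ∑' q, f q = ∑' q, g q := by
    rw [← Function.Injective.tsum_eq hinj hsupp]
    exact tsum_congr fun q => (hcomp q).symm
  -- inner sums of g
  have hinner : ∀ r : ℕ, (∑' k, g (r, k)) = A (r + 1) * ∑ j ∈ Finset.range (r + 1), G ^ j := by
    intro r
    rw [tsum_eq_sum (s := Finset.range (r + 1)) ?_]
    · rw [Finset.mul_sum]
      apply Finset.sum_congr rfl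
      intro k hk
      rw [hgdef]
      simp only
      rw [if_pos (by simp at hk; omega)]
    · intro k hk
      rw [hgdef]
      simp only
      rw [if_neg (by simp at hk; omega)]
  have hVg : (∑' (j : ℕ), ∑' (k : ℕ), A (j + k + 1) * G ^ k)
      = ∑' (r : ℕ), A (r + 1) * ∑ j ∈ Finset.range (r + 1), G ^ j := by
    calc (∑' (j : ℕ), ∑' (k : ℕ), A (j + k + 1) * G ^ k) = ∑' q, f q := (Summable.tsum_prod hf).symm
      _ = ∑' q, g q := hfg
      _ = ∑' r, ∑' k, g (r, k) := Summable.tsum_prod hg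
      _ = ∑' (r : ℕ), A (r + 1) * ∑ j ∈ Finset.range (r + 1), G ^ j := tsum_congr hinner
  refine ⟨hVg, ?_⟩
  -- marginal summability
  apply summable_of_entries
  intro i j
  have hge : Summable (fun q : ℕ × ℕ => g q i j) := summable_entry' hg i j
  have hmarg := ((summable_prod_of_nonneg (fun q => by simpa using hg0 q i j)).mp hge).2
  apply Summable.congr hmarg
  intro r
  exact (tsum_entry (hg.prod_factor r) i j).symm.trans (by rw [hinner r])

lemma shift_ell (Bl : ℕ → M) (G : M) (ℓ : ℕ) :
    (∑' r : ℕ, (if ℓ ≤ r + 1 then Bl (r + 1 - ℓ) else 0) * ∑ j ∈ Finset.range (r + 1), G ^ j)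
      = ∑' i : ℕ, Bl i * ∑ j ∈ Finset.range (i + ℓ), G ^ j := by
  classical
  set u : ℕ → M := fun n => if ℓ ≤ n then Bl (n - ℓ) * ∑ j ∈ Finset.range n, G ^ j else 0
    with hu
  have hu0 : u 0 = 0 := by
    rw [hu]
    dsimp only
    split
    · have hl : ℓ = 0 := by omega
      subst hl
      simp
    · rfl
  have h1 : (∑' r : ℕ, (if ℓ ≤ r + 1 then Bl (r + 1 - ℓ) else 0)
      * ∑ j ∈ Finset.range (r + 1), G ^ j) = ∑' n, u n := by
    have hinj : Function.Injective (fun n : ℕ => n + 1) := fun a b h => by simpa using h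
    have hsupp : Function.support u ⊆ Set.range (fun n : ℕ => n + 1) := by
      apply Function.support_subset_iff'.mpr
      intro x hx
      have hx0 : x = 0 := by
        by_contra h
        exact hx ⟨x - 1, by simp; omega⟩
      rw [hx0, hu0]
    have h2 := Function.Injective.tsum_eq hinj hsupp
    rw [← h2]
    apply tsum_congr
    intro r
    rw [hu]
    simp only [ite_mul, zero_mul]
  have h3 : (∑' i : ℕ, Bl i * ∑ j ∈ Finset.range (i + ℓ), G ^ j) = ∑' n, u n := by
    have hinj : Function.Injective (fun n : ℕ => n + ℓ) := fun a b h => by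
      simpa using h
    have hsupp : Function.support u ⊆ Set.range (fun n : ℕ => n + ℓ) := by
      apply Function.support_subset_iff'.mpr
      intro x hx
      rw [hu]
      dsimp only
      rw [if_neg]
      intro hc
      exact hx ⟨x - ℓ, by simp; omega⟩
    have h2 := Function.Injective.tsum_eq hinj hsupp
    rw [← h2]
    apply tsum_congr
    intro i
    rw [hu]
    dsimp only
    rw [if_pos (by omega), show i + ℓ - ℓ = i by omega]
  rw [h1, h3]

lemma FN_eq_V (p : ℕ) (A : ℕ → M) (B : ℕ → ℕ → M) (G : M)
    (hA0 : ∀ i, Mle 0 (A i)) (hB0 : ∀ ℓ i, Mle 0 (B ℓ i)) (hG0 : Mle 0 G)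
    (hcompat : ∀ i, A i = ∑ ℓ ∈ Finset.range (p + 1), if ℓ ≤ i then B ℓ (i - ℓ) else 0)
    (hsG : ∀ ℓ, Summable (fun i => B ℓ i * G ^ i))
    (hsN : ∀ ℓ, Summable (fun i => B ℓ (i + 1) * ∑ j ∈ Finset.range (i + 1), G ^ j))
    (hsAstar : ∀ j, Summable (fun k => A (j + k + 1) * G ^ k))
    (hsV : Summable (fun j => ∑' k, A (j + k + 1) * G ^ k)) :
    Fmat p B G + Nmat p B G = Vmat A G := by
  classical
  obtain ⟨hVg, hmarg⟩ := diag_reindex A G hA0 hG0 hsAstar hsV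
  -- left side
  have hL : Fmat p B G + Nmat p B G
      = ∑ ℓ ∈ Finset.range (p + 1), ∑' i, B ℓ i * ∑ j ∈ Finset.range (i + ℓ), G ^ j := by
    rw [Fmat, Nmat, ← Finset.sum_add_distrib]
    apply Finset.sum_congr rfl
    intro ℓ _
    exact combine_FN (B ℓ) G ℓ (hsG ℓ) (hsN ℓ)
  -- right side
  have hterm0 : ∀ ℓ r : ℕ, Mle 0 ((if ℓ ≤ r + 1 then B ℓ (r + 1 - ℓ) else 0)
      * ∑ j ∈ Finset.range (r + 1), G ^ j) := by
    intro ℓ r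
    apply mleMulNonneg ?_ (mleSumNonneg fun k _ => mlePowNonneg hG0 k)
    split
    · exact hB0 _ _
    · exact fun i j => le_refl _
  have htermle : ∀ ℓ ∈ Finset.range (p + 1), ∀ r : ℕ,
      Mle ((if ℓ ≤ r + 1 then B ℓ (r + 1 - ℓ) else 0) * ∑ j ∈ Finset.range (r + 1), G ^ j)
        (A (r + 1) * ∑ j ∈ Finset.range (r + 1), G ^ j) := by
    intro ℓ hℓ r
    apply mleMulRight ?_ (mleSumNonneg fun k _ => mlePowNonneg hG0 k)
    rw [hcompat (r + 1)]
    intro i j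
    rw [Matrix.sum_apply]
    have hnn : ∀ ℓ' ∈ Finset.range (p + 1),
        0 ≤ (if ℓ' ≤ r + 1 then B ℓ' (r + 1 - ℓ') else 0) i j := by
      intro ℓ' _
      split
      · have := hB0 ℓ' (r + 1 - ℓ') i j
        simpa using this
      · simp
    exact Finset.single_le_sum hnn hℓ
  have htermsum : ∀ ℓ ∈ Finset.range (p + 1),
      Summable (fun r => (if ℓ ≤ r + 1 then B ℓ (r + 1 - ℓ) else 0)
        * ∑ j ∈ Finset.range (r + 1), G ^ j) := by
    intro ℓ hℓ
    apply summable_of_entries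
    intro i j
    apply Summable.of_nonneg_of_le (fun r => by simpa using hterm0 ℓ r i j)
      (fun r => htermle ℓ hℓ r i j)
    exact summable_entry' hmarg i j
  have hR : Vmat A G
      = ∑ ℓ ∈ Finset.range (p + 1), ∑' i, B ℓ i * ∑ j ∈ Finset.range (i + ℓ), G ^ j := by
    rw [Vmat, hVg]
    have h1 : ∀ r : ℕ, A (r + 1) * ∑ j ∈ Finset.range (r + 1), G ^ j
        = ∑ ℓ ∈ Finset.range (p + 1), (if ℓ ≤ r + 1 then B ℓ (r + 1 - ℓ) else 0)
          * ∑ j ∈ Finset.range (r + 1), G ^ j := by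
      intro r
      rw [hcompat (r + 1), Finset.sum_mul]
    rw [tsum_congr h1, Summable.tsum_finsetSum htermsum]
    apply Finset.sum_congr rfl
    intro ℓ _
    exact shift_ell (B ℓ) G ℓ
  rw [hL, hR]



lemma fmat_nonneg (p : ℕ) (B : ℕ → ℕ → M) (G : M)
    (hB0 : ∀ ℓ i, Mle 0 (B ℓ i)) (hG0 : Mle 0 G) : Mle 0 (Fmat p B G) := by
  apply mleSumNonneg
  intro ℓ _
  exact mleMulNonneg
    (mleTsumNonneg fun i => mleMulNonneg (hB0 ℓ i) (mlePowNonneg hG0 i))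
    (mleSumNonneg fun j _ => mlePowNonneg hG0 j)

lemma nmat_nonneg (p : ℕ) (B : ℕ → ℕ → M) (G : M)
    (hB0 : ∀ ℓ i, Mle 0 (B ℓ i)) (hG0 : Mle 0 G) : Mle 0 (Nmat p B G) := by
  apply mleSumNonneg
  intro ℓ _
  exact mleTsumNonneg fun i => mleMulNonneg (hB0 ℓ (i + 1))
    (mleSumNonneg fun j _ => mlePowNonneg hG0 j)

end Stmt7Aux

/-- Theorem 3.5: comparison of two embeddings.  Here `A i` denotes
`A_{i-1}`, `p_h = q_h + 1 ≥ 0`, and `Aℓh ℓ' i` denotes `A^{(h)}_{ℓ'-1, i}`. -/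
theorem stmt7 (m : ℕ) (hm : 1 ≤ m) (p₁ p₂ : ℕ)
    (A : ℕ → Matrix (Fin m) (Fin m) ℝ)
    (Aℓ₁ Aℓ₂ : ℕ → ℕ → Matrix (Fin m) (Fin m) ℝ)
    (hA0 : ∀ i, Mle 0 (A i))
    (hAℓ₁0 : ∀ ℓ i, Mle 0 (Aℓ₁ ℓ i)) (hAℓ₂0 : ∀ ℓ i, Mle 0 (Aℓ₂ ℓ i))
    (hsum : Summable A)
    (hrow : ∀ k, ∑ j, (∑' i, A i) k j ≤ 1)
    (hcompat₁ : ∀ i, A i = ∑ ℓ ∈ Finset.range (p₁ + 1),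
      if ℓ ≤ i then Aℓ₁ ℓ (i - ℓ) else 0)
    (hcompat₂ : ∀ i, A i = ∑ ℓ ∈ Finset.range (p₂ + 1),
      if ℓ ≤ i then Aℓ₂ ℓ (i - ℓ) else 0)
    (G : Matrix (Fin m) (Fin m) ℝ) (hG : IsMinSol A G)
    -- all series occurring converge entrywise:
    (hsG₁ : ∀ ℓ, Summable (fun i => Aℓ₁ ℓ i * G ^ i))
    (hsG₂ : ∀ ℓ, Summable (fun i => Aℓ₂ ℓ i * G ^ i))
    (hsN₁ : ∀ ℓ, Summable (fun i => Aℓ₁ ℓ (i + 1) * ∑ j ∈ Finset.range (i + 1), G ^ j))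
    (hsN₂ : ∀ ℓ, Summable (fun i => Aℓ₂ ℓ (i + 1) * ∑ j ∈ Finset.range (i + 1), G ^ j))
    (hsAstar : ∀ j, Summable (fun k => A (j + k + 1) * G ^ k))
    (hsV : Summable (fun j => ∑' k, A (j + k + 1) * G ^ k))
    (hρ : specRad (Vmat A G) < 1)
    -- `F⁽¹⁾ ≥ F⁽²⁾` entrywise:
    (hF : Mle (Fmat p₂ Aℓ₂ G) (Fmat p₁ Aℓ₁ G)) :
    IsUnit ((1 : Matrix (Fin m) (Fin m) ℝ) - Fmat p₁ Aℓ₁ G) ∧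
    IsUnit ((1 : Matrix (Fin m) (Fin m) ℝ) - Fmat p₂ Aℓ₂ G) ∧
    specRad ((1 - Fmat p₁ Aℓ₁ G)⁻¹ * Nmat p₁ Aℓ₁ G) ≤
      specRad ((1 - Fmat p₂ Aℓ₂ G)⁻¹ * Nmat p₂ Aℓ₂ G) := by
  have hm' : 0 < m := hm
  have hG0 : Mle 0 G := hG.1
  have hFN₁ : Fmat p₁ Aℓ₁ G + Nmat p₁ Aℓ₁ G = Vmat A G :=
    Stmt7Aux.FN_eq_V p₁ A Aℓ₁ G hA0 hAℓ₁0 hG0 hcompat₁ hsG₁ hsN₁ hsAstar hsV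
  have hFN₂ : Fmat p₂ Aℓ₂ G + Nmat p₂ Aℓ₂ G = Vmat A G :=
    Stmt7Aux.FN_eq_V p₂ A Aℓ₂ G hA0 hAℓ₂0 hG0 hcompat₂ hsG₂ hsN₂ hsAstar hsV
  have hsub₁ : Vmat A G - Fmat p₁ Aℓ₁ G = Nmat p₁ Aℓ₁ G := by rw [← hFN₁]; abel
  have hsub₂ : Vmat A G - Fmat p₂ Aℓ₂ G = Nmat p₂ Aℓ₂ G := by rw [← hFN₂]; abel
  have hF₁0 : Mle 0 (Fmat p₁ Aℓ₁ G) := Stmt7Aux.fmat_nonneg p₁ Aℓ₁ G hAℓ₁0 hG0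
  have hF₂0 : Mle 0 (Fmat p₂ Aℓ₂ G) := Stmt7Aux.fmat_nonneg p₂ Aℓ₂ G hAℓ₂0 hG0
  have h1V : Mle (Fmat p₁ Aℓ₁ G) (Vmat A G) := by
    apply Stmt7Aux.mle_of_sub_nonneg
    rw [hsub₁]
    exact Stmt7Aux.nmat_nonneg p₁ Aℓ₁ G hAℓ₁0 hG0
  obtain ⟨hu₁, hu₂, hle⟩ :=
    Stmt7Aux.mainCompare hm' (Vmat A G) (Fmat p₁ Aℓ₁ G) (Fmat p₂ Aℓ₂ G) hF₁0 hF₂0 hF h1V hρ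
  rw [hsub₁, hsub₂] at hle
  exact ⟨hu₁, hu₂, hle⟩
end

section
/- Fix an integer q ≥ 1. For every admissible embedding family {A_{ℓ,i}} (ℓ = −1,…,q, i ≥ 0, nonnegative, with A_{ℓ,i} = 0 for i < 0 and A_i = Σ_{ℓ=−1}^q A_{ℓ,i−ℓ} for all i ≥ −1), the matrix F = Σ_{ℓ=0}^q A_ℓ(G) Σ_{j=0}^ℓ G^j satisfies, entrywise, F ≤ Σ_{ℓ=0}^{q−1} A_ℓ Σ_{j=0}^ℓ G^j + (Σ_{i=q}^∞ A_i G^{i−q}) Σ_{j=0}^q G^j. The right-hand side is the value of F for the particular admissible choice A_{ℓ,0} = A_ℓ for −1 ≤ ℓ ≤ q−1, A_{q,i} = A_{q+i} for i ≥ 0, and A_{ℓ,i} = 0 otherwise; hence this choice maximizes F among all admissible embeddings. -/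
open Matrix

/-- The optimal embedding: `A_{ℓ,0} = A_ℓ` for `-1 ≤ ℓ ≤ q-1` and `A_{q,i} = A_{q+i}`
(shifted indices: `ℓ' = ℓ+1 ∈ {0,…,p}`, `p = q+1`, and `A i` denotes `A_{i-1}`). -/
def Aopt {m : ℕ} (p : ℕ) (A : ℕ → Matrix (Fin m) (Fin m) ℝ) :
    ℕ → ℕ → Matrix (Fin m) (Fin m) ℝ :=
  fun ℓ i => if ℓ < p then (if i = 0 then A ℓ else 0) else A (p + i)

namespace Stmt9Aux

variable {m : ℕ}

noncomputable def Spow (G : Matrix (Fin m) (Fin m) ℝ) (n : ℕ) :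
    Matrix (Fin m) (Fin m) ℝ := ∑ j ∈ Finset.range n, G ^ j

lemma nonneg_entry {X : Matrix (Fin m) (Fin m) ℝ} (h : Mle 0 X) (a b : Fin m) :
    0 ≤ X a b := by simpa using h a b

lemma mle_mul_nonneg {X Y : Matrix (Fin m) (Fin m) ℝ} (hX : Mle 0 X) (hY : Mle 0 Y) :
    Mle 0 (X * Y) := by
  intro a b
  simp only [Matrix.zero_apply, Matrix.mul_apply]
  exact Finset.sum_nonneg fun c _ => mul_nonneg (nonneg_entry hX a c) (nonneg_entry hY c b)

lemma mle_pow_nonneg {G : Matrix (Fin m) (Fin m) ℝ} (hG : Mle 0 G) (i : ℕ) :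
    Mle 0 (G ^ i) := by
  induction i with
  | zero => intro a b; simp [Matrix.one_apply]; positivity
  | succ n ih => rw [pow_succ]; exact mle_mul_nonneg ih hG

lemma mle_spow_nonneg {G : Matrix (Fin m) (Fin m) ℝ} (hG : Mle 0 G) (n : ℕ) :
    Mle 0 (Spow G n) := by
  intro a b
  simp only [Spow, Matrix.sum_apply, Matrix.zero_apply]
  exact Finset.sum_nonneg fun j _ => nonneg_entry (mle_pow_nonneg hG j) a b

lemma mle_mul_left {X Y Z : Matrix (Fin m) (Fin m) ℝ} (hX : Mle 0 X) (h : Mle Y Z) :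
    Mle (X * Y) (X * Z) := by
  intro a b
  simp only [Matrix.mul_apply]
  exact Finset.sum_le_sum fun c _ =>
    mul_le_mul_of_nonneg_left (h c b) (nonneg_entry hX a c)

lemma mle_mul_right {X Y W : Matrix (Fin m) (Fin m) ℝ} (h : Mle X Y) (hW : Mle 0 W) :
    Mle (X * W) (Y * W) := by
  intro a b
  simp only [Matrix.mul_apply]
  exact Finset.sum_le_sum fun c _ =>
    mul_le_mul_of_nonneg_right (h a c) (nonneg_entry hW c b)

lemma sum_pow_subset {G : Matrix (Fin m) (Fin m) ℝ} (hG : Mle 0 G)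
    {s t : Finset ℕ} (h : s ⊆ t) (a b : Fin m) :
    ∑ j ∈ s, (G ^ j) a b ≤ ∑ j ∈ t, (G ^ j) a b :=
  Finset.sum_le_sum_of_subset_of_nonneg h
    fun j _ _ => nonneg_entry (mle_pow_nonneg hG j) a b

lemma mul_spow_eq {G : Matrix (Fin m) (Fin m) ℝ} (i ℓ : ℕ) (a b : Fin m) :
    (G ^ i * Spow G ℓ) a b = ∑ j ∈ (Finset.range ℓ).image (i + ·), (G ^ j) a b := by
  rw [Finset.sum_image (by intro x _ y _ h; exact Nat.add_left_cancel h)]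
  simp [Spow, Finset.mul_sum, pow_add, Matrix.sum_apply]

lemma keyA1 {G : Matrix (Fin m) (Fin m) ℝ} (hG : Mle 0 G) (ℓ i : ℕ) :
    Mle (G ^ i * Spow G ℓ) (Spow G (ℓ + i)) := by
  intro a b
  rw [mul_spow_eq]
  have h2 : (Spow G (ℓ + i)) a b = ∑ j ∈ Finset.range (ℓ + i), (G ^ j) a b := by
    simp [Spow, Matrix.sum_apply]
  rw [h2]
  refine sum_pow_subset hG ?_ a b
  intro x hx
  simp only [Finset.mem_image, Finset.mem_range] at hx ⊢
  obtain ⟨j, hj, rfl⟩ := hx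
  omega

lemma keyA2 {G : Matrix (Fin m) (Fin m) ℝ} (hG : Mle 0 G) {p ℓ : ℕ} (hℓ : ℓ ≤ p) (k : ℕ) :
    Mle (G ^ (k + (p - ℓ)) * Spow G ℓ) (G ^ k * Spow G p) := by
  intro a b
  rw [mul_spow_eq, mul_spow_eq]
  refine sum_pow_subset hG ?_ a b
  intro x hx
  simp only [Finset.mem_image, Finset.mem_range] at hx ⊢
  obtain ⟨j, hj, rfl⟩ := hx
  exact ⟨p - ℓ + j, by omega, by omega⟩

lemma entry_summable {M : ℕ → Matrix (Fin m) (Fin m) ℝ} (h : Summable M) (a b : Fin m) :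
    Summable (fun i => M i a b) := (Pi.summable.mp (Pi.summable.mp h a)) b

lemma tsum_entry {M : ℕ → Matrix (Fin m) (Fin m) ℝ} (h : Summable M) (a b : Fin m) :
    (∑' i, M i) a b = ∑' i, M i a b := by
  exact (congrFun (tsum_apply (x := a) h) b).trans (tsum_apply (x := b) (Pi.summable.mp h a))

lemma mul_apply_summable {M : ℕ → Matrix (Fin m) (Fin m) ℝ} (h : Summable M)
    (S : Matrix (Fin m) (Fin m) ℝ) (a b : Fin m) :
    Summable (fun i => (M i * S) a b) := by
  have h1 : ∀ i, (M i * S) a b = ∑ c, M i a c * S c b := fun i => Matrix.mul_apply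
  refine Summable.congr ?_ (fun i => (h1 i).symm)
  exact summable_sum fun c _ => (entry_summable h a c).mul_right _

lemma tsum_mul_apply {M : ℕ → Matrix (Fin m) (Fin m) ℝ} (h : Summable M)
    (S : Matrix (Fin m) (Fin m) ℝ) (a b : Fin m) :
    ((∑' i, M i) * S) a b = ∑' i, (M i * S) a b := by
  rw [Matrix.mul_apply]
  have h1 : ∀ c, (∑' i, M i) a c * S c b = ∑' i, M i a c * S c b := by
    intro c; rw [tsum_entry h a c, tsum_mul_right]
  simp_rw [h1]
  rw [← Summable.tsum_finsetSum (fun c _ => (entry_summable h a c).mul_right _)]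
  exact tsum_congr fun i => (Matrix.mul_apply).symm

lemma keyB {p : ℕ} {A : ℕ → Matrix (Fin m) (Fin m) ℝ}
    {Aℓ : ℕ → ℕ → Matrix (Fin m) (Fin m) ℝ}
    (hAℓ0 : ∀ ℓ i, Mle 0 (Aℓ ℓ i))
    (hcompat : ∀ i, A i = ∑ ℓ ∈ Finset.range (p + 1),
      if ℓ ≤ i then Aℓ ℓ (i - ℓ) else 0)
    {ℓ : ℕ} (hℓ : ℓ ≤ p) (i : ℕ) : Mle (Aℓ ℓ i) (A (ℓ + i)) := by
  intro a b
  rw [hcompat (ℓ + i), Matrix.sum_apply]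
  have hmem : ℓ ∈ Finset.range (p + 1) := Finset.mem_range.mpr (by omega)
  have h1 := Finset.single_le_sum
    (f := fun ℓ' => (if ℓ' ≤ ℓ + i then Aℓ ℓ' (ℓ + i - ℓ') else 0) a b)
    (fun ℓ' _ => by
      show 0 ≤ (if ℓ' ≤ ℓ + i then Aℓ ℓ' (ℓ + i - ℓ') else 0) a b
      split
      · exact nonneg_entry (hAℓ0 _ _) a b
      · simp) hmem
  simpa using h1

end Stmt9Aux

open Stmt9Aux

set_option maxHeartbeats 1600000 in
/-- Theorem 4.1: the embedding of the whole tail in the coefficient of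
degree `q+1` maximizes `F`.  Here `p = q+1 ≥ 2`. -/
theorem stmt9 (m : ℕ) (hm : 1 ≤ m) (p : ℕ) (hp : 2 ≤ p)
    (A : ℕ → Matrix (Fin m) (Fin m) ℝ)
    (Aℓ : ℕ → ℕ → Matrix (Fin m) (Fin m) ℝ)
    (hA0 : ∀ i, Mle 0 (A i)) (hAℓ0 : ∀ ℓ i, Mle 0 (Aℓ ℓ i))
    (hsum : Summable A)
    (hrow : ∀ k, ∑ j, (∑' i, A i) k j ≤ 1)
    (hcompat : ∀ i, A i = ∑ ℓ ∈ Finset.range (p + 1),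
      if ℓ ≤ i then Aℓ ℓ (i - ℓ) else 0)
    (G : Matrix (Fin m) (Fin m) ℝ) (hG : IsMinSol A G)
    -- all series occurring converge entrywise:
    (hsG : ∀ ℓ, Summable (fun i => Aℓ ℓ i * G ^ i))
    (hsAstar : ∀ j, Summable (fun k => A (j + k + 1) * G ^ k)) :
    Mle (Fmat p Aℓ G)
      ((∑ ℓ ∈ Finset.range (p - 1), A (ℓ + 1) * ∑ j ∈ Finset.range (ℓ + 1), G ^ j) +
        (∑' k : ℕ, A (p + k) * G ^ k) * ∑ j ∈ Finset.range p, G ^ j) ∧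
    Fmat p (Aopt p A) G =
      (∑ ℓ ∈ Finset.range (p - 1), A (ℓ + 1) * ∑ j ∈ Finset.range (ℓ + 1), G ^ j) +
        (∑' k : ℕ, A (p + k) * G ^ k) * ∑ j ∈ Finset.range p, G ^ j := by
  classical
  obtain ⟨hG0, -, -, -⟩ := hG
  have hA5 : (fun k => A (p + k) * G ^ k) = (fun k => A (p - 1 + k + 1) * G ^ k) := by
    funext k; rw [show p - 1 + k + 1 = p + k from by omega]
  have hsStar : Summable (fun k => A (p + k) * G ^ k) := by rw [hA5]; exact hsAstar (p - 1)
  have hSp : ∀ n : ℕ, (∑ j ∈ Finset.range n, G ^ j) = Spow G n := fun n => rfl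
  constructor
  · -- inequality
    intro a b
    have hWnn : ∀ k : ℕ, Mle 0 (G ^ k * Spow G p) :=
      fun k => mle_mul_nonneg (mle_pow_nonneg hG0 k) (mle_spow_nonneg hG0 p)
    have hL : Fmat p Aℓ G a b
        = ∑ ℓ ∈ Finset.range (p + 1), ∑' i, ((Aℓ ℓ i * G ^ i) * Spow G ℓ) a b := by
      rw [Fmat, Matrix.sum_apply]
      exact Finset.sum_congr rfl fun ℓ _ => by
        rw [hSp]; exact tsum_mul_apply (hsG ℓ) _ a b
    have hsTailf : Summable (fun k => (A (p + k) * (G ^ k * Spow G p)) a b) := by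
      have h2 := mul_apply_summable hsStar (Spow G p) a b
      refine h2.congr fun k => ?_
      rw [mul_assoc]
    have hg2le : ∀ ℓ, ℓ ≤ p → ∀ k : ℕ,
        (Aℓ ℓ (k + (p - ℓ)) * (G ^ k * Spow G p)) a b
          ≤ (A (p + k) * (G ^ k * Spow G p)) a b := by
      intro ℓ hℓ k
      have h1 := mle_mul_right (keyB hAℓ0 hcompat hℓ (k + (p - ℓ))) (hWnn k) a b
      rwa [show ℓ + (k + (p - ℓ)) = p + k from by omega] at h1
    have hg2nn : ∀ ℓ (k : ℕ), 0 ≤ (Aℓ ℓ (k + (p - ℓ)) * (G ^ k * Spow G p)) a b :=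
      fun ℓ k => nonneg_entry (mle_mul_nonneg (hAℓ0 _ _) (hWnn k)) a b
    have hg2sum : ∀ ℓ, ℓ ≤ p →
        Summable (fun k => (Aℓ ℓ (k + (p - ℓ)) * (G ^ k * Spow G p)) a b) :=
      fun ℓ hℓ => Summable.of_nonneg_of_le (hg2nn ℓ) (hg2le ℓ hℓ) hsTailf
    have hfLsum : ∀ ℓ, Summable (fun i => ((Aℓ ℓ i * G ^ i) * Spow G ℓ) a b) :=
      fun ℓ => mul_apply_summable (hsG ℓ) _ a b
    have hbound : ∀ ℓ ∈ Finset.range (p + 1),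
        (∑' i, ((Aℓ ℓ i * G ^ i) * Spow G ℓ) a b)
          ≤ (∑ i ∈ Finset.range (p - ℓ), (Aℓ ℓ i * Spow G (ℓ + i)) a b)
            + ∑' k, (Aℓ ℓ (k + (p - ℓ)) * (G ^ k * Spow G p)) a b := by
      intro ℓ hℓr
      have hℓ : ℓ ≤ p := by
        have := Finset.mem_range.mp hℓr; omega
      rw [← Summable.sum_add_tsum_nat_add (p - ℓ) (hfLsum ℓ)]
      refine add_le_add ?_ ?_
      · refine Finset.sum_le_sum fun i hi => ?_
        have h1 : Mle (Aℓ ℓ i * G ^ i * Spow G ℓ) (Aℓ ℓ i * Spow G (ℓ + i)) := by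
          rw [mul_assoc]; exact mle_mul_left (hAℓ0 ℓ i) (keyA1 hG0 ℓ i)
        exact h1 a b
      · have hsL : Summable (fun i => (Aℓ ℓ (i + (p - ℓ)) * G ^ (i + (p - ℓ)) * Stmt9Aux.Spow G ℓ) a b) :=
          (summable_nat_add_iff (f := fun i => (Aℓ ℓ i * G ^ i * Stmt9Aux.Spow G ℓ) a b) (p - ℓ)).mpr (hfLsum ℓ)
        refine Summable.tsum_le_tsum ?_ hsL (hg2sum ℓ hℓ)
        intro k
        have h1 : Mle (Aℓ ℓ (k + (p - ℓ)) * G ^ (k + (p - ℓ)) * Spow G ℓ)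
            (Aℓ ℓ (k + (p - ℓ)) * (G ^ k * Spow G p)) := by
          rw [mul_assoc]; exact mle_mul_left (hAℓ0 _ _) (keyA2 hG0 hℓ k)
        exact h1 a b
    have hR1 : (∑ ℓ ∈ Finset.range (p - 1), A (ℓ + 1) * ∑ j ∈ Finset.range (ℓ + 1), G ^ j) a b
        = ∑ ℓ ∈ Finset.range (p + 1),
            ∑ i ∈ Finset.range (p - ℓ), (Aℓ ℓ i * Spow G (ℓ + i)) a b := by
      have e0 : (∑ ℓ ∈ Finset.range (p - 1), A (ℓ + 1) * ∑ j ∈ Finset.range (ℓ + 1), G ^ j) a b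
          = ∑ n ∈ Finset.range p, (A n * Spow G n) a b := by
        obtain ⟨q, rfl⟩ : ∃ q, p = q + 1 := ⟨p - 1, by omega⟩
        rw [Finset.sum_range_succ' (fun n => (A n * Spow G n) a b) q]
        simp only [Matrix.sum_apply, Nat.add_sub_cancel, hSp]
        have : (A 0 * Spow G 0) a b = 0 := by
          simp [Spow]
        rw [this, add_zero]
      rw [e0]
      have e1 : ∀ n, (A n * Spow G n) a b
          = ∑ ℓ ∈ Finset.range (p + 1),
              (if ℓ ≤ n then (Aℓ ℓ (n - ℓ) * Spow G n) a b else 0) := by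
        intro n
        rw [hcompat n, Finset.sum_mul, Matrix.sum_apply]
        refine Finset.sum_congr rfl fun ℓ _ => ?_
        split
        · rfl
        · simp
      simp_rw [e1]
      rw [Finset.sum_comm]
      refine Finset.sum_congr rfl fun ℓ hℓr => ?_
      have hℓ : ℓ ≤ p := by have := Finset.mem_range.mp hℓr; omega
      rw [← Finset.sum_filter]
      have e2 : (Finset.range p).filter (fun n => ℓ ≤ n) = Finset.Ico ℓ p := by
        ext n; simp [Finset.mem_Ico, Finset.mem_filter]; omega
      rw [e2, Finset.sum_Ico_eq_sum_range]
      refine Finset.sum_congr rfl fun i _ => ?_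
      simp
    have hR2 : ((∑' k : ℕ, A (p + k) * G ^ k) * ∑ j ∈ Finset.range p, G ^ j) a b
        = ∑ ℓ ∈ Finset.range (p + 1),
            ∑' k, (Aℓ ℓ (k + (p - ℓ)) * (G ^ k * Spow G p)) a b := by
      rw [hSp p, tsum_mul_apply hsStar (Spow G p) a b]
      have e1 : ∀ k : ℕ, ((A (p + k) * G ^ k) * Spow G p) a b
          = ∑ ℓ ∈ Finset.range (p + 1),
              (Aℓ ℓ (k + (p - ℓ)) * (G ^ k * Spow G p)) a b := by
        intro k
        rw [mul_assoc, hcompat (p + k), Finset.sum_mul, Matrix.sum_apply]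
        refine Finset.sum_congr rfl fun ℓ hℓr => ?_
        have hℓ : ℓ ≤ p := by have := Finset.mem_range.mp hℓr; omega
        rw [if_pos (by omega), show p + k - ℓ = k + (p - ℓ) from by omega]
      simp_rw [e1]
      rw [Summable.tsum_finsetSum (fun ℓ hℓr => hg2sum ℓ (by have := Finset.mem_range.mp hℓr; omega))]
    rw [Matrix.add_apply, hR1, hR2, ← Finset.sum_add_distrib, hL]
    exact Finset.sum_le_sum hbound
  · -- equality for the optimal embedding
    rw [Fmat, Finset.sum_range_succ]
    have h2 : (∑' i, Aopt p A p i * G ^ i) = ∑' k : ℕ, A (p + k) * G ^ k :=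
      tsum_congr fun i => by simp [Aopt]
    have h3 : (∑ ℓ ∈ Finset.range p, (∑' i, Aopt p A ℓ i * G ^ i) * ∑ j ∈ Finset.range ℓ, G ^ j)
        = ∑ ℓ ∈ Finset.range (p - 1), A (ℓ + 1) * ∑ j ∈ Finset.range (ℓ + 1), G ^ j := by
      have h1 : ∀ ℓ ∈ Finset.range p, (∑' i, Aopt p A ℓ i * G ^ i) * (∑ j ∈ Finset.range ℓ, G ^ j)
          = A ℓ * ∑ j ∈ Finset.range ℓ, G ^ j := by
        intro ℓ hℓ
        have hℓp : ℓ < p := Finset.mem_range.mp hℓ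
        congr 1
        rw [tsum_eq_single 0 (fun i hi => by simp [Aopt, hℓp, hi])]
        simp [Aopt, hℓp]
      rw [Finset.sum_congr rfl h1]
      obtain ⟨q, rfl⟩ : ∃ q, p = q + 1 := ⟨p - 1, by omega⟩
      rw [Finset.sum_range_succ']
      simp
    rw [h2, h3]
end

section
/- Let G be an m×m matrix satisfying G = Σ_{ℓ=−1}^q A_ℓ(G) G^{ℓ+1}, and set B_i^* = Σ_{j=i}^q A_j(G) G^{j−i} for i = 0,…,q. Then the following identity of polynomials with m×m matrix coefficients holds: z·I − Σ_{i=−1}^q A_i(G) z^{i+1} = (I − Σ_{i=0}^q B_i^* zⁱ)(z·I − G); equivalently, S_q(z) = U_q(z)(I − z⁻¹G) for all z ≠ 0, where S_q(z) = I − Σ_{i=−1}^q A_i(G) zⁱ and U_q(z) = I − Σ_{i=0}^q B_i^* zⁱ. -/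
open Matrix

/-- `A_ℓ(G) = ∑_{i=0}^∞ A_{ℓ,i} Gⁱ`, in shifted index `ℓ' = ℓ+1`. -/
noncomputable def AfG {m : ℕ} (Aℓ : ℕ → ℕ → Matrix (Fin m) (Fin m) ℝ)
    (G : Matrix (Fin m) (Fin m) ℝ) (ℓ : ℕ) : Matrix (Fin m) (Fin m) ℝ :=
  ∑' i, Aℓ ℓ i * G ^ i

/-- `B_i^* = ∑_{j=i}^q A_j(G) G^{j-i}`, `i = 0,…,q`, with `p = q+1` and shifted
index `j' = j+1 ∈ {i+1,…,p}`. -/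
noncomputable def Bstar {m : ℕ} (p : ℕ) (Aℓ : ℕ → ℕ → Matrix (Fin m) (Fin m) ℝ)
    (G : Matrix (Fin m) (Fin m) ℝ) (i : ℕ) : Matrix (Fin m) (Fin m) ℝ :=
  ∑ t ∈ Finset.range (p - i), AfG Aℓ G (i + 1 + t) * G ^ t

/-- the factorizations `z I - ∑ A_i(G) z^{i+1} = (I - ∑ B_i^* zⁱ)(z I - G)`
and `S_q(z) = U_q(z)(I - z⁻¹ G)`.  Here `p = q+1 ≥ 0` and `Aℓ ℓ' i` denotes
`A_{ℓ'-1, i}`. -/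
theorem stmt10 (m : ℕ) (hm : 1 ≤ m) (p : ℕ)
    (Aℓ : ℕ → ℕ → Matrix (Fin m) (Fin m) ℝ)
    (G : Matrix (Fin m) (Fin m) ℝ)
    -- the series `A_ℓ(G)` converge entrywise:
    (hsG : ∀ ℓ, Summable (fun i => Aℓ ℓ i * G ^ i))
    -- `G = ∑_{ℓ=-1}^q A_ℓ(G) G^{ℓ+1}` :
    (hGeq : G = ∑ ℓ ∈ Finset.range (p + 1), AfG Aℓ G ℓ * G ^ ℓ) :
    (∀ z : ℝ,
      z • (1 : Matrix (Fin m) (Fin m) ℝ) -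
          ∑ ℓ ∈ Finset.range (p + 1), z ^ ℓ • AfG Aℓ G ℓ =
        (1 - ∑ i ∈ Finset.range p, z ^ i • Bstar p Aℓ G i) * (z • 1 - G)) ∧
    (∀ z : ℝ, z ≠ 0 →
      (1 : Matrix (Fin m) (Fin m) ℝ) -
          ∑ ℓ ∈ Finset.range (p + 1), (z ^ ℓ * z⁻¹) • AfG Aℓ G ℓ =
        (1 - ∑ i ∈ Finset.range p, z ^ i • Bstar p Aℓ G i) * (1 - z⁻¹ • G)) := by
  classical
  set C := AfG Aℓ G with hC
  set B := Bstar p Aℓ G with hB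
  have hBp : B p = 0 := by simp [hB, Bstar]
  have rel : ∀ i, i < p → C (i + 1) = B i - B (i + 1) * G := by
    intro i hi
    have h1 : p - i = (p - (i + 1)) + 1 := by omega
    have : B i = C (i + 1) + B (i + 1) * G := by
      rw [hB, Bstar, h1, Finset.sum_range_succ']
      rw [add_comm]
      congr 1
      · simp [hC]
      · rw [Bstar, Finset.sum_mul]
        apply Finset.sum_congr rfl
        intro t ht
        rw [show i + 1 + (t + 1) = i + 1 + 1 + t by omega, mul_assoc, ← pow_succ]
    rw [this]; abel
  have hG0 : G = C 0 + B 0 * G := by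
    conv_lhs => rw [hGeq]
    rw [Finset.sum_range_succ']
    rw [add_comm]
    congr 1
    · simp [hC]
    · rw [hB, Bstar, Finset.sum_mul]
      apply Finset.sum_congr rfl
      intro t ht
      rw [show 0 + 1 + t = t + 1 by omega, mul_assoc, ← pow_succ]
  have key : ∀ z : ℝ,
      z • (1 : Matrix (Fin m) (Fin m) ℝ) -
          ∑ ℓ ∈ Finset.range (p + 1), z ^ ℓ • C ℓ =
        (1 - ∑ i ∈ Finset.range p, z ^ i • B i) * (z • 1 - G) := by
    intro z
    set S := ∑ i ∈ Finset.range p, z ^ i • B i with hS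
    have hzS : ∑ i ∈ Finset.range p, z ^ (i + 1) • B i = z • S := by
      rw [hS, Finset.smul_sum]
      exact Finset.sum_congr rfl fun i _ => by rw [smul_smul, ← pow_succ']
    have hSG : S * G = ∑ i ∈ Finset.range p, z ^ i • (B i * G) := by
      rw [hS, Finset.sum_mul]
      exact Finset.sum_congr rfl fun i _ => smul_mul_assoc _ _ _
    have hshift : ∑ i ∈ Finset.range p, z ^ (i + 1) • (B (i + 1) * G)
        = S * G - B 0 * G := by
      have h2 : ∑ i ∈ Finset.range (p + 1), z ^ i • (B i * G)
          = ∑ i ∈ Finset.range p, z ^ (i + 1) • (B (i + 1) * G) + z ^ 0 • (B 0 * G) :=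
        Finset.sum_range_succ' _ _
      have h3 : ∑ i ∈ Finset.range (p + 1), z ^ i • (B i * G)
          = S * G := by
        rw [Finset.sum_range_succ, hBp, hSG]
        simp
      rw [h3] at h2
      rw [eq_sub_iff_add_eq, h2, pow_zero, one_smul]
    have hsum : ∑ ℓ ∈ Finset.range (p + 1), z ^ ℓ • C ℓ = G + z • S - S * G := by
      rw [Finset.sum_range_succ' (fun ℓ => z ^ ℓ • C ℓ)]
      have : ∑ i ∈ Finset.range p, z ^ (i + 1) • C (i + 1)
          = ∑ i ∈ Finset.range p, (z ^ (i + 1) • B i - z ^ (i + 1) • (B (i + 1) * G)) := by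
        refine Finset.sum_congr rfl fun i hi => ?_
        rw [rel i (Finset.mem_range.mp hi), smul_sub]
      rw [this, Finset.sum_sub_distrib, hzS, hshift]
      have hG0' : (z:ℝ) ^ 0 • C 0 = G - B 0 * G := by
        rw [pow_zero, one_smul, eq_sub_iff_add_eq]
        exact hG0.symm
      rw [hG0']
      abel
    rw [hsum, sub_mul, one_mul, mul_sub, Matrix.mul_smul, mul_one]
    abel
  refine ⟨key, fun z hz => ?_⟩
  have h4 : (1 : Matrix (Fin m) (Fin m) ℝ) -
      ∑ ℓ ∈ Finset.range (p + 1), (z ^ ℓ * z⁻¹) • C ℓ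
      = z⁻¹ • (z • (1 : Matrix (Fin m) (Fin m) ℝ) -
          ∑ ℓ ∈ Finset.range (p + 1), z ^ ℓ • C ℓ) := by
    rw [smul_sub, Finset.smul_sum, smul_smul, inv_mul_cancel₀ hz, one_smul]
    congr 1
    exact Finset.sum_congr rfl fun ℓ _ => by rw [smul_smul, mul_comm]
  rw [h4, key z, ← mul_smul_comm, smul_sub, smul_smul, inv_mul_cancel₀ hz, one_smul]
end

section
/- Assume q ≥ 1, A_{−1,0} = A_{−1} and A_{−1,i} = 0 for i ≥ 1 (i.e. A_{−1}(z) = A_{−1}), and A_{ℓ,0} ≥ A_ℓ entrywise for ℓ = 0,…,q (i.e. A_ℓ(z) ≥ A_ℓ coefficientwise). Let B_i^* = Σ_{j=i}^q A_j(G) G^{j−i} for i = 0,…,q and A_i^* = Σ_{j=i}^∞ A_j G^{j−i} for i ≥ 0. Then B_0^* = A_0^* and B_i^* ≤ A_i^* entrywise for i = 1,…,q. -/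
open Matrix

/-- `A_i^* = ∑_{j=i}^∞ A_j G^{j-i}` (`A (i+k+1)` is `A_{i+k}` of the paper). -/
noncomputable def Astar {m : ℕ} (A : ℕ → Matrix (Fin m) (Fin m) ℝ)
    (G : Matrix (Fin m) (Fin m) ℝ) (i : ℕ) : Matrix (Fin m) (Fin m) ℝ :=
  ∑' k, A (i + k + 1) * G ^ k


section Aux

open Matrix

private lemma shift_lemma {m : ℕ} (M : ℕ → Matrix (Fin m) (Fin m) ℝ)
    (G : Matrix (Fin m) (Fin m) ℝ)
    (hM : Summable (fun s => M s * G ^ s)) (d : ℕ) :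
    Summable (fun k => (if d ≤ k then M (k - d) else 0) * G ^ k) ∧
    ∑' k, (if d ≤ k then M (k - d) else 0) * G ^ k = (∑' s, M s * G ^ s) * G ^ d := by
  have inj : Function.Injective (fun s : ℕ => s + d) := fun a b h => by simpa using h
  set g := fun k => (if d ≤ k then M (k - d) else 0) * G ^ k with hg
  have h0 : Function.support g ⊆ Set.range (fun s : ℕ => s + d) := by
    intro x hx
    by_contra hr
    rcases le_or_gt d x with h | h
    · exact hr ⟨x - d, by simp; omega⟩
    · exact hx (by simp [hg, Nat.not_le.mpr h])
  have hcomp : (fun s => g (s + d)) = fun s => (M s * G ^ s) * G ^ d := by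
    funext s
    simp [hg, Nat.le_add_left, pow_add, mul_assoc]
  have hs : Summable (fun s => g (s + d)) := by rw [hcomp]; exact hM.mul_right _
  have hz : ∀ x ∉ Set.range (fun s : ℕ => s + d), g x = 0 := by
    intro x hx
    by_contra hne
    exact hx (h0 (Function.mem_support.mpr hne))
  have hsg : Summable g := (inj.summable_iff hz).mp hs
  refine ⟨hsg, ?_⟩
  rw [← inj.tsum_eq h0]
  calc ∑' s, g (s + d) = ∑' s, (M s * G ^ s) * G ^ d := by rw [hcomp]
    _ = (∑' s, M s * G ^ s) * G ^ d := hM.tsum_mul_right _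

private lemma Mle_mul {m : ℕ} {X Y : Matrix (Fin m) (Fin m) ℝ} (hX : Mle 0 X) (hY : Mle 0 Y) :
    Mle 0 (X * Y) := by
  intro a b
  simp only [Matrix.zero_apply, Matrix.mul_apply]
  exact Finset.sum_nonneg fun r _ => mul_nonneg
    (by simpa using hX a r) (by simpa using hY r b)

private lemma Mle_pow {m : ℕ} {G : Matrix (Fin m) (Fin m) ℝ} (hG : Mle 0 G) (k : ℕ) :
    Mle 0 (G ^ k) := by
  induction k with
  | zero => intro a b; simp [Matrix.one_apply]; split <;> simp
  | succ n ih => rw [pow_succ]; exact Mle_mul ih hG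

private lemma entry_summable {m : ℕ} {f : ℕ → Matrix (Fin m) (Fin m) ℝ} (hf : Summable f)
    (a b : Fin m) : Summable (fun k => f k a b) :=
  Pi.summable.mp (Pi.summable.mp hf a) b

private lemma tsum_entry {m : ℕ} {f : ℕ → Matrix (Fin m) (Fin m) ℝ} (hf : Summable f)
    (a b : Fin m) : (∑' k, f k) a b = ∑' k, f k a b := by
  exact (congrFun (tsum_apply hf (x := a)) b).trans (tsum_apply (Pi.summable.mp hf a))

/-- The `ℓ`-th piece of `A_{i+k} G^k` after substituting the decomposition. -/
noncomputable def gaux {m : ℕ} (Aℓ : ℕ → ℕ → Matrix (Fin m) (Fin m) ℝ)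
    (G : Matrix (Fin m) (Fin m) ℝ) (i ℓ k : ℕ) : Matrix (Fin m) (Fin m) ℝ :=
  (if ℓ ≤ i + k + 1 then Aℓ ℓ (i + k + 1 - ℓ) else 0) * G ^ k

private lemma gaux_key {m : ℕ} (Aℓ : ℕ → ℕ → Matrix (Fin m) (Fin m) ℝ)
    (G : Matrix (Fin m) (Fin m) ℝ)
    (hsG : ∀ ℓ, Summable (fun s => Aℓ ℓ s * G ^ s)) (i d : ℕ) :
    Summable (gaux Aℓ G i (i + 1 + d)) ∧
    ∑' k, gaux Aℓ G i (i + 1 + d) k = AfG Aℓ G (i + 1 + d) * G ^ d := by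
  have he : gaux Aℓ G i (i + 1 + d)
      = fun k => (if d ≤ k then Aℓ (i + 1 + d) (k - d) else 0) * G ^ k := by
    funext k
    unfold gaux
    rcases le_or_gt d k with h | h
    · have harg : i + k + 1 - (i + 1 + d) = k - d := by omega
      rw [if_pos (by omega : i + 1 + d ≤ i + k + 1), if_pos h, harg]
    · rw [if_neg (by omega), if_neg (by omega)]
  rw [he]
  simpa only [AfG] using shift_lemma (Aℓ (i + 1 + d)) G (hsG _) d

end Aux

/-- part of Theorem 4.2: `B_0^* = A_0^*` and `B_i^* ≤ A_i^*` for
`i = 1,…,q`.  Here `p = q+1 ≥ 2`; `hm1`, `hm2` say `A_{-1}(z) = A_{-1}` and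
`hge` says `A_ℓ(z) ≥ A_ℓ` for `ℓ = 0,…,q`. -/
theorem stmt11 (m : ℕ) (hm : 1 ≤ m) (p : ℕ) (hp : 2 ≤ p)
    (A : ℕ → Matrix (Fin m) (Fin m) ℝ)
    (Aℓ : ℕ → ℕ → Matrix (Fin m) (Fin m) ℝ)
    (hA0 : ∀ i, Mle 0 (A i)) (hAℓ0 : ∀ ℓ i, Mle 0 (Aℓ ℓ i))
    (hsum : Summable A)
    (hrow : ∀ k, ∑ j, (∑' i, A i) k j ≤ 1)
    (hcompat : ∀ i, A i = ∑ ℓ ∈ Finset.range (p + 1),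
      if ℓ ≤ i then Aℓ ℓ (i - ℓ) else 0)
    (hm1 : Aℓ 0 0 = A 0) (hm2 : ∀ i, Aℓ 0 (i + 1) = 0)
    (hge : ∀ ℓ, 1 ≤ ℓ → ℓ ≤ p → Mle (A ℓ) (Aℓ ℓ 0))
    (G : Matrix (Fin m) (Fin m) ℝ) (hG : IsMinSol A G)
    -- all series occurring converge entrywise:
    (hsG : ∀ ℓ, Summable (fun i => Aℓ ℓ i * G ^ i))
    (hsAstar : ∀ j, Summable (fun k => A (j + k + 1) * G ^ k)) :
    Bstar p Aℓ G 0 = Astar A G 0 ∧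
    ∀ i, 1 ≤ i → i ≤ p - 1 → Mle (Bstar p Aℓ G i) (Astar A G i) := by
  obtain ⟨hG0, -, -, -⟩ := hG
  have gnn : ∀ i ℓ k, Mle 0 (gaux Aℓ G i ℓ k) := by
    intro i ℓ k
    refine Mle_mul ?_ (Mle_pow hG0 k)
    split
    · exact hAℓ0 _ _
    · intro a b; simp
  have hdecomp : ∀ i k, A (i + k + 1) * G ^ k
      = ∑ ℓ ∈ Finset.range (p + 1), gaux Aℓ G i ℓ k := by
    intro i k
    rw [hcompat (i + k + 1), Finset.sum_mul]
    rfl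
  have g0zero : ∀ i k, gaux Aℓ G i 0 k = 0 := by
    intro i k
    have : i + k + 1 - 0 = (i + k) + 1 := by omega
    simp [gaux, this, hm2 (i + k)]
  have hkey : ∀ i t, Summable (gaux Aℓ G i (i + 1 + t)) ∧
      ∑' k, gaux Aℓ G i (i + 1 + t) k = AfG Aℓ G (i + 1 + t) * G ^ t :=
    fun i t => gaux_key Aℓ G hsG i t
  constructor
  · -- equality part
    have hs_each : ∀ ℓ ∈ Finset.range (p + 1), Summable (gaux Aℓ G 0 ℓ) := by
      intro ℓ _
      rcases Nat.eq_zero_or_pos ℓ with rfl | hℓ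
      · have h0 : gaux Aℓ G 0 0 = fun _ => 0 := funext (fun k => g0zero 0 k)
        rw [h0]; exact summable_zero
      · obtain ⟨d, rfl⟩ : ∃ d, ℓ = 0 + 1 + d := ⟨ℓ - 1, by omega⟩
        exact (hkey 0 d).1
    have hz : (∑' k, gaux Aℓ G 0 0 k) = 0 := by
      have h0 : gaux Aℓ G 0 0 = fun _ => 0 := funext (fun k => g0zero 0 k)
      rw [h0]; exact tsum_zero
    have hcalc : Astar A G 0 = Bstar p Aℓ G 0 := by
      calc Astar A G 0 = ∑' k, ∑ ℓ ∈ Finset.range (p + 1), gaux Aℓ G 0 ℓ k := by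
            unfold Astar; exact tsum_congr (fun k => hdecomp 0 k)
        _ = ∑ ℓ ∈ Finset.range (p + 1), ∑' k, gaux Aℓ G 0 ℓ k := Summable.tsum_finsetSum hs_each
        _ = (∑ t ∈ Finset.range p, ∑' k, gaux Aℓ G 0 (t + 1) k) + ∑' k, gaux Aℓ G 0 0 k :=
            Finset.sum_range_succ' _ p
        _ = ∑ t ∈ Finset.range p, AfG Aℓ G (0 + 1 + t) * G ^ t := by
            rw [hz, add_zero]
            refine Finset.sum_congr rfl (fun t _ => ?_)
            have h1 : (0 : ℕ) + 1 + t = t + 1 := by omega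
            rw [← h1]
            exact (hkey 0 t).2
        _ = Bstar p Aℓ G 0 := rfl
    exact hcalc.symm
  · -- inequality part
    intro i hi1 hi2 a b
    have hB : Bstar p Aℓ G i a b
        = ∑ t ∈ Finset.range (p - i), ∑' k, gaux Aℓ G i (i + 1 + t) k a b := by
      unfold Bstar
      rw [Matrix.sum_apply]
      refine Finset.sum_congr rfl (fun t _ => ?_)
      rw [← (hkey i t).2]
      exact tsum_entry (hkey i t).1 a b
    have hsum_e : ∀ t, Summable fun k => gaux Aℓ G i (i + 1 + t) k a b :=
      fun t => entry_summable (hkey i t).1 a b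
    have hswap : ∑ t ∈ Finset.range (p - i), ∑' k, gaux Aℓ G i (i + 1 + t) k a b
        = ∑' k, ∑ t ∈ Finset.range (p - i), gaux Aℓ G i (i + 1 + t) k a b :=
      (Summable.tsum_finsetSum (fun t _ => hsum_e t)).symm
    have hA : Astar A G i a b = ∑' k, (A (i + k + 1) * G ^ k) a b :=
      tsum_entry (hsAstar i) a b
    rw [hB, hswap, hA]
    refine Summable.tsum_le_tsum ?_ (summable_sum (fun t _ => hsum_e t))
      (entry_summable (hsAstar i) a b)
    intro k
    rw [hdecomp i k, Matrix.sum_apply]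
    have himg := Finset.sum_image (s := Finset.range (p - i))
      (f := fun ℓ => gaux Aℓ G i ℓ k a b) (g := fun t => i + 1 + t)
      (fun x _ y _ h => by simpa using h)
    rw [← himg]
    refine Finset.sum_le_sum_of_subset_of_nonneg ?_ ?_
    · intro ℓ hℓ
      simp only [Finset.mem_image, Finset.mem_range] at hℓ ⊢
      omega
    · intro ℓ _ _
      simpa using gnn i ℓ k a b
end

section
/- Assume A_i = 0 for all i > d for some d ≥ 2, and ρ(V) < 1. For an integer q with 1 ≤ q ≤ d−1, let the mass-embedding choice be A_ℓ(z) = A_ℓ for −1 ≤ ℓ ≤ q−1 and A_q(z) = Σ_{i=q}^d A_i z^{i−q}, and define S_q(z) = I − Σ_{i=−1}^{q−1} A_i zⁱ − A_q(G) z^q for z ≠ 0, where A_q(G) = Σ_{i=q}^d A_i G^{i−q}. Let 1 ≤ q₁ < q₂ ≤ d−1 and suppose the set R_{q₂} = {z ∈ ℂ : |z| > 1, det S_{q₂}(z) = 0} is nonempty with ξ_{q₂} = min{|z| : z ∈ R_{q₂}}. Then every z ∈ ℂ with |z| > 1 and det S_{q₁}(z) = 0 satisfies |z| ≥ ξ_{q₂};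 that is, ξ_{q₁} ≥ ξ_{q₂} whenever ξ_{q₁} exists. -/
open Matrix

/-- For the mass embedding in degree `q+1`:
`S_q(z) = I - ∑_{i=-1}^{q-1} A_i zⁱ - A_q(G) z^q`, with
`A_q(G) = ∑_{i=q}^∞ A_i G^{i-q} = ∑' k, A (q+k+1) * G^k`. -/
noncomputable def SmatM {m : ℕ} (q : ℕ) (A : ℕ → Matrix (Fin m) (Fin m) ℝ)
    (G : Matrix (Fin m) (Fin m) ℝ) (z : ℂ) : Matrix (Fin m) (Fin m) ℂ :=
  1 - (∑ i ∈ Finset.range (q + 1), (z ^ i * z⁻¹) • (A i).map (algebraMap ℝ ℂ)) -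
    z ^ q • ((∑' k : ℕ, A (q + k + 1) * G ^ k).map (algebraMap ℝ ℂ))


section basic
variable {m : ℕ}

lemma Mle_mul_s14 {P Q P' Q' : Matrix (Fin m) (Fin m) ℝ} (h0 : Mle 0 P) (h : Mle P Q)
    (h0' : Mle 0 P') (h' : Mle P' Q') : Mle (P * P') (Q * Q') := by
  intro i j
  simp only [Matrix.mul_apply]
  apply Finset.sum_le_sum
  intro l _
  have h0a : (0:ℝ) ≤ P i l := by simpa using h0 i l
  have h0b : (0:ℝ) ≤ P' l j := by simpa using h0' l j
  have h1 := h i l; have h2 := h' l j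
  nlinarith

lemma Mle_mul_nonneg {P P' : Matrix (Fin m) (Fin m) ℝ} (h0 : Mle 0 P) (h0' : Mle 0 P') :
    Mle 0 (P * P') := by
  intro i j
  simp only [Matrix.mul_apply, Matrix.zero_apply]
  exact Finset.sum_nonneg fun l _ => mul_nonneg (h0 i l) (h0' l j)

lemma Mle_pow_nonneg {P : Matrix (Fin m) (Fin m) ℝ} (h0 : Mle 0 P) (n : ℕ) : Mle 0 (P ^ n) := by
  induction n with
  | zero => intro i j; simp [Matrix.one_apply]; positivity
  | succ n ih => rw [pow_succ]; exact Mle_mul_nonneg ih h0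

lemma Mle_pow_s14 {P Q : Matrix (Fin m) (Fin m) ℝ} (h0 : Mle 0 P) (h : Mle P Q) (n : ℕ) :
    Mle (P ^ n) (Q ^ n) := by
  induction n with
  | zero => intro i j; simp
  | succ n ih => rw [pow_succ, pow_succ]; exact Mle_mul_s14 (Mle_pow_nonneg h0 n) ih h0 h

end basic

section ast
variable {m : ℕ} (A : ℕ → Matrix (Fin m) (Fin m) ℝ) (G : Matrix (Fin m) (Fin m) ℝ)

/-- `A_k^* = ∑_{i≥k} A_i G^{i-k}` (paper indexing), as a tsum. -/
noncomputable def Ast (k : ℕ) : Matrix (Fin m) (Fin m) ℝ := ∑' j : ℕ, A (k + j + 1) * G ^ j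

variable {A} {d : ℕ}

lemma Ast_eq_sum (hd : ∀ i, d + 1 < i → A i = 0) (k : ℕ) : Ast A G k = ∑ j ∈ Finset.range (d + 1), A (k + j + 1) * G ^ j := by
  apply tsum_eq_sum
  intro j hj
  rw [Finset.mem_range, not_lt] at hj
  rw [hd (k + j + 1) (by omega), zero_mul]

lemma Ast_nonneg (hd : ∀ i, d + 1 < i → A i = 0) (hA0 : ∀ i, Mle 0 (A i)) (hG0 : Mle 0 G)
    (k : ℕ) : Mle 0 (Ast A G k) := by
  rw [Ast_eq_sum G hd k]
  intro i j
  rw [Matrix.zero_apply, Matrix.sum_apply]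
  exact Finset.sum_nonneg fun l _ => by
    simpa using Mle_mul_nonneg (hA0 (k + l + 1)) (Mle_pow_nonneg hG0 l) i j

lemma Ast_succ_mul (hd : ∀ i, d + 1 < i → A i = 0) (k : ℕ) :
    Ast A G (k + 1) * G = Ast A G k - A (k + 1) := by
  rw [Ast_eq_sum G hd (k + 1), Ast_eq_sum G hd k]
  rw [Finset.sum_mul]
  rw [Finset.sum_range_succ' (fun j => A (k + j + 1) * G ^ j) d]
  have h1 : ∀ j, A (k + 1 + j + 1) * G ^ j * G = A (k + (j + 1) + 1) * G ^ (j + 1) := by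
    intro j
    rw [mul_assoc, ← pow_succ]
    ring_nf
  simp only [h1]
  rw [Finset.sum_range_succ (fun j => A (k + (j + 1) + 1) * G ^ (j + 1)) d]
  rw [hd (k + (d + 1) + 1) (by omega), zero_mul, add_zero]
  simp [pow_zero, mul_one]

lemma G_eq_sum (hd : ∀ i, d + 1 < i → A i = 0) (hGsol : G = ∑' i, A i * G ^ i) :
    G = ∑ i ∈ Finset.range (d + 2), A i * G ^ i := by
  conv_lhs => rw [hGsol]
  apply tsum_eq_sum
  intro i hi
  rw [Finset.mem_range, not_lt] at hi
  rw [hd i (by omega), zero_mul]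

lemma Ast_zero_mul (hd : ∀ i, d + 1 < i → A i = 0) (hGsol : G = ∑' i, A i * G ^ i) :
    Ast A G 0 * G = G - A 0 := by
  rw [Ast_eq_sum G hd 0, Finset.sum_mul]
  have h1 : ∀ j, A (0 + j + 1) * G ^ j * G = A (j + 1) * G ^ (j + 1) := by
    intro j
    rw [mul_assoc, ← pow_succ]
    ring_nf
  simp only [h1]
  conv_rhs => rw [G_eq_sum G hd hGsol]
  rw [Finset.sum_range_succ' (fun i => A i * G ^ i) (d + 1)]
  simp [pow_zero, mul_one]

end ast


section factor
variable {m : ℕ} {A : ℕ → Matrix (Fin m) (Fin m) ℝ} {G : Matrix (Fin m) (Fin m) ℝ} {d : ℕ}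

lemma factor (hd : ∀ i, d + 1 < i → A i = 0) (hGsol : G = ∑' i, A i * G ^ i)
    (q : ℕ) (z : ℂ) (hz : z ≠ 0) :
    z • SmatM q A G z =
      (1 - ∑ k ∈ Finset.range (q + 1), z ^ k • (Ast A G k).map (algebraMap ℝ ℂ)) *
        (z • (1 : Matrix (Fin m) (Fin m) ℂ) - G.map (algebraMap ℝ ℂ)) := by
  set φ := algebraMap ℝ ℂ
  set B : ℕ → Matrix (Fin m) (Fin m) ℂ := fun k => (Ast A G k).map φ with hB
  set C : ℕ → Matrix (Fin m) (Fin m) ℂ := fun k => (A k).map φ with hC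
  set Gc : Matrix (Fin m) (Fin m) ℂ := G.map φ with hGc
  have hL : z • SmatM q A G z =
      z • (1 : Matrix (Fin m) (Fin m) ℂ) - (∑ k ∈ Finset.range (q + 1), z ^ k • C k)
        - z ^ (q + 1) • B q := by
    rw [SmatM]
    have hfold : (∑' k : ℕ, A (q + k + 1) * G ^ k) = Ast A G q := rfl
    rw [hfold]
    rw [smul_sub, smul_sub, Finset.smul_sum]
    congr 1
    · congr 1
      apply Finset.sum_congr rfl
      intro i _
      rw [smul_smul]
      congr 1
      field_simp
    · rw [smul_smul]
      congr 1
      rw [pow_succ']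
  rw [hL, sub_mul, one_mul, Finset.sum_mul]
  have h1 : ∀ k ∈ Finset.range (q + 1),
      (z ^ k • B k) * (z • (1 : Matrix (Fin m) (Fin m) ℂ) - Gc)
        = z ^ (k + 1) • B k - z ^ k • (Ast A G k * G).map φ := by
    intro k _
    rw [smul_mul_assoc, mul_sub, mul_smul_comm, mul_one, ← Matrix.map_mul]
    rw [smul_sub, smul_smul, pow_succ]
  rw [Finset.sum_congr rfl h1, Finset.sum_sub_distrib]
  have e2 : ∑ k ∈ Finset.range (q + 1), z ^ k • ((Ast A G k * G).map φ)
      = Gc - C 0 + (∑ k ∈ Finset.range q, z ^ (k + 1) • B k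
          - ∑ k ∈ Finset.range q, z ^ (k + 1) • C (k + 1)) := by
    rw [Finset.sum_range_succ' (fun k => z ^ k • ((Ast A G k * G).map φ)) q]
    have h2 : ∀ k, (Ast A G (k + 1) * G).map φ = B k - C (k + 1) := by
      intro k
      rw [Ast_succ_mul G hd k]
      ext i j
      simp [hB, hC, Matrix.map_apply]
    have h3 : (Ast A G 0 * G).map φ = Gc - C 0 := by
      rw [Ast_zero_mul G hd hGsol]
      ext i j
      simp [hC, hGc, Matrix.map_apply]
    simp only [h2, h3, pow_zero, one_smul, smul_sub]
    rw [Finset.sum_sub_distrib]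
    abel
  have e1 : ∑ k ∈ Finset.range (q + 1), z ^ (k + 1) • B k
      = ∑ k ∈ Finset.range q, z ^ (k + 1) • B k + z ^ (q + 1) • B q :=
    Finset.sum_range_succ _ q
  have e3 : ∑ k ∈ Finset.range (q + 1), z ^ k • C k
      = ∑ k ∈ Finset.range q, z ^ (k + 1) • C (k + 1) + C 0 := by
    rw [Finset.sum_range_succ' (fun k => z ^ k • C k) q]
    simp
  rw [e1, e2, e3]
  abel

end factor


section neumann
variable {m : ℕ}

/-- Partial sums of powers are entrywise bounded. -/
def PartialBdd (P : Matrix (Fin m) (Fin m) ℝ) : Prop :=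
  ∃ B : ℝ, ∀ (K : ℕ) (i j : Fin m), (∑ n ∈ Finset.range K, P ^ n) i j ≤ B

lemma PartialBdd.mono {P Q : Matrix (Fin m) (Fin m) ℝ} (h0 : Mle 0 P) (hPQ : Mle P Q)
    (hb : PartialBdd Q) : PartialBdd P := by
  obtain ⟨B, hB⟩ := hb
  refine ⟨B, fun K i j => le_trans ?_ (hB K i j)⟩
  rw [Matrix.sum_apply, Matrix.sum_apply]
  exact Finset.sum_le_sum fun n _ => Mle_pow_s14 h0 hPQ n i j

lemma neumann {P : Matrix (Fin m) (Fin m) ℝ} (h0 : Mle 0 P) (hb : PartialBdd P) :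
    ∃ L : Matrix (Fin m) (Fin m) ℝ, Mle 0 L ∧ (1 - P) * L = 1 ∧ L * (1 - P) = 1 ∧
      ∀ K, Mle (∑ n ∈ Finset.range K, P ^ n) L := by
  obtain ⟨B, hB⟩ := hb
  have hnn : ∀ (n : ℕ) (i j : Fin m), 0 ≤ (P ^ n) i j := fun n i j => by
    simpa using Mle_pow_nonneg h0 n i j
  have hsum : ∀ i j, Summable (fun n => (P ^ n) i j) := by
    intro i j
    apply summable_of_sum_range_le (fun n => hnn n i j)
    intro K
    have := hB K i j
    rwa [Matrix.sum_apply] at this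
  set L : Matrix (Fin m) (Fin m) ℝ := Matrix.of (fun i j => ∑' n, (P ^ n) i j) with hLdef
  have hLa : ∀ i j, L i j = ∑' n, (P ^ n) i j := fun i j => rfl
  have hL0 : Mle 0 L := by
    intro i j
    rw [hLa]
    simpa using tsum_nonneg (fun n => hnn n i j)
  have hpart : ∀ i j, Filter.Tendsto (fun K => ∑ n ∈ Finset.range K, (P ^ n) i j)
      Filter.atTop (nhds (L i j)) := fun i j => (hsum i j).hasSum.tendsto_sum_nat
  have hpow0 : ∀ i j, Filter.Tendsto (fun n => (P ^ n) i j) Filter.atTop (nhds 0) :=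
    fun i j => (hsum i j).tendsto_atTop_zero
  have key : ∀ (M : Matrix (Fin m) (Fin m) ℝ),
      (∀ K, M * (∑ n ∈ Finset.range K, P ^ n) = 1 - P ^ K) → M * L = 1 := by
    intro M hM
    ext i j
    have h1 : Filter.Tendsto (fun K => (M * (∑ n ∈ Finset.range K, P ^ n)) i j)
        Filter.atTop (nhds ((M * L) i j)) := by
      simp only [Matrix.mul_apply]
      apply tendsto_finset_sum
      intro l _
      exact Filter.Tendsto.const_mul _ (by simpa [Matrix.sum_apply] using hpart l j)
    have h2 : Filter.Tendsto (fun K => (M * (∑ n ∈ Finset.range K, P ^ n)) i j)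
        Filter.atTop (nhds ((1 : Matrix (Fin m) (Fin m) ℝ) i j)) := by
      simp only [hM, Matrix.sub_apply]
      have := hpow0 i j
      simpa using (tendsto_const_nhds (x := (1 : Matrix (Fin m) (Fin m) ℝ) i j)).sub this
    exact tendsto_nhds_unique h1 h2
  have key' : ∀ (M : Matrix (Fin m) (Fin m) ℝ),
      (∀ K, (∑ n ∈ Finset.range K, P ^ n) * M = 1 - P ^ K) → L * M = 1 := by
    intro M hM
    ext i j
    have h1 : Filter.Tendsto (fun K => ((∑ n ∈ Finset.range K, P ^ n) * M) i j)
        Filter.atTop (nhds ((L * M) i j)) := by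
      simp only [Matrix.mul_apply]
      apply tendsto_finset_sum
      intro l _
      exact Filter.Tendsto.mul_const _ (by simpa [Matrix.sum_apply] using hpart i l)
    have h2 : Filter.Tendsto (fun K => ((∑ n ∈ Finset.range K, P ^ n) * M) i j)
        Filter.atTop (nhds ((1 : Matrix (Fin m) (Fin m) ℝ) i j)) := by
      simp only [hM, Matrix.sub_apply]
      have := hpow0 i j
      simpa using (tendsto_const_nhds (x := (1 : Matrix (Fin m) (Fin m) ℝ) i j)).sub this
    exact tendsto_nhds_unique h1 h2
  refine ⟨L, hL0, ?_, ?_, ?_⟩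
  · apply key
    intro K
    have := mul_geom_sum P K
    have h' : (1 - P) * (∑ n ∈ Finset.range K, P ^ n) = -((P - 1) * ∑ n ∈ Finset.range K, P ^ n) := by
      rw [← neg_mul, neg_sub]
    rw [h', this, neg_sub]
  · apply key'
    intro K
    have := geom_sum_mul P K
    have h' : (∑ n ∈ Finset.range K, P ^ n) * (1 - P) = -((∑ n ∈ Finset.range K, P ^ n) * (P - 1)) := by
      rw [← mul_neg, neg_sub]
    rw [h', this, neg_sub]
  · intro K i j
    rw [Matrix.sum_apply, hLa]
    exact Summable.sum_le_tsum (Finset.range K) (fun n _ => hnn n i j) (hsum i j)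

end neumann


section geomdiv

lemma sum_pow_div_eq {c : ℝ} (k : ℕ) (K : ℕ) :
    ∑ n ∈ Finset.range (k * K), c ^ (n / k) = ∑ a ∈ Finset.range K, (k : ℝ) * c ^ a := by
  induction K with
  | zero => simp
  | succ K ih =>
    rw [Nat.mul_succ, Finset.sum_range_add, ih, Finset.sum_range_succ]
    congr 1
    have h : ∀ x ∈ Finset.range k, c ^ ((k * K + x) / k) = c ^ K := by
      intro x hx
      rw [Finset.mem_range] at hx
      congr 1
      have hk : 0 < k := by omega
      rw [Nat.add_comm, Nat.add_mul_div_left x K hk, Nat.div_eq_of_lt hx, Nat.zero_add]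
    rw [Finset.sum_congr rfl h, Finset.sum_const, Finset.card_range, nsmul_eq_mul]

lemma sum_pow_div_le {c : ℝ} (hc0 : 0 ≤ c) (hc1 : c < 1) {k : ℕ} (hk : 1 ≤ k) (K : ℕ) :
    ∑ n ∈ Finset.range K, c ^ (n / k) ≤ (k : ℝ) * (1 - c)⁻¹ := by
  have h1 : ∑ n ∈ Finset.range K, c ^ (n / k) ≤ ∑ n ∈ Finset.range (k * K), c ^ (n / k) := by
    apply Finset.sum_le_sum_of_subset_of_nonneg
    · apply Finset.range_subset_range.2
      nlinarith [Nat.one_le_iff_ne_zero.mp hk]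
    · intro n _ _
      positivity
  rw [sum_pow_div_eq] at h1
  have h2 : ∑ a ∈ Finset.range K, (k : ℝ) * c ^ a = (k : ℝ) * ∑ a ∈ Finset.range K, c ^ a := by
    rw [Finset.mul_sum]
  have h3 : ∑ a ∈ Finset.range K, c ^ a ≤ (1 - c)⁻¹ := by
    rw [← tsum_geometric_of_lt_one hc0 hc1]
    exact Summable.sum_le_tsum (Finset.range K) (fun n _ => by positivity) (summable_geometric_of_lt_one hc0 hc1)
  calc ∑ n ∈ Finset.range K, c ^ (n / k) ≤ _ := h1
    _ = _ := h2
    _ ≤ (k : ℝ) * (1 - c)⁻¹ := by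
        apply mul_le_mul_of_nonneg_left h3 (by positivity)

end geomdiv


section family
variable {m : ℕ}

/-- The family `N(x) = ∑_{k≤Q} x^k C_k`. -/
noncomputable def Nfam (C : ℕ → Matrix (Fin m) (Fin m) ℝ) (Q : ℕ) (x : ℝ) :
    Matrix (Fin m) (Fin m) ℝ := ∑ k ∈ Finset.range (Q + 1), x ^ k • C k

variable {C : ℕ → Matrix (Fin m) (Fin m) ℝ} {Q : ℕ}

lemma Nfam_apply (x : ℝ) (i j : Fin m) :
    Nfam C Q x i j = ∑ k ∈ Finset.range (Q + 1), x ^ k * C k i j := by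
  rw [Nfam, Matrix.sum_apply]
  simp [Matrix.smul_apply, smul_eq_mul]

lemma Nfam_nonneg (hC : ∀ k, Mle 0 (C k)) {x : ℝ} (hx : 0 ≤ x) : Mle 0 (Nfam C Q x) := by
  intro i j
  rw [Nfam_apply]
  simp only [Matrix.zero_apply]
  exact Finset.sum_nonneg fun k _ => mul_nonneg (by positivity) (by simpa using hC k i j)

lemma Nfam_mono (hC : ∀ k, Mle 0 (C k)) {x y : ℝ} (hx : 0 ≤ x) (hxy : x ≤ y) :
    Mle (Nfam C Q x) (Nfam C Q y) := by
  intro i j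
  rw [Nfam_apply, Nfam_apply]
  apply Finset.sum_le_sum
  intro k _
  exact mul_le_mul_of_nonneg_right (pow_le_pow_left₀ hx hxy k) (by simpa using hC k i j)

lemma Nfam_cont : Continuous fun x : ℝ => Nfam C Q x := by
  apply continuous_matrix
  intro i j
  simp only [Nfam_apply]
  exact continuous_finset_sum _ fun k _ => (continuous_pow k).mul continuous_const

lemma Nfam_pow_cont (n : ℕ) : Continuous fun x : ℝ => (Nfam C Q x) ^ n := by
  induction n with
  | zero => simpa using continuous_const
  | succ n ih =>
    simp only [pow_succ]
    exact ih.matrix_mul Nfam_cont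

/-- Rightward openness of bounded-partial-sums along the family. -/
lemma open_right (hm : 0 < m) (hC : ∀ k, Mle 0 (C k)) {x : ℝ} (hx : 0 ≤ x)
    (hQ : PartialBdd (Nfam C Q x)) : ∃ y, x < y ∧ PartialBdd (Nfam C Q y) := by
  classical
  set P := Nfam C Q x with hP
  have hP0 : Mle 0 P := Nfam_nonneg hC hx
  have hnn : ∀ (n : ℕ) (i j : Fin m), 0 ≤ (P ^ n) i j := fun n i j => by
    simpa using Mle_pow_nonneg hP0 n i j
  obtain ⟨B, hB⟩ := hQ
  have hsum : ∀ i j, Summable (fun n => (P ^ n) i j) := by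
    intro i j
    apply summable_of_sum_range_le (fun n => hnn n i j)
    intro K
    have := hB K i j
    rwa [Matrix.sum_apply] at this
  -- total mass of the power tends to zero
  have htot : Filter.Tendsto (fun n => ∑ i, ∑ j, (P ^ n) i j) Filter.atTop (nhds 0) := by
    have : ∀ i j, Filter.Tendsto (fun n => (P ^ n) i j) Filter.atTop (nhds 0) :=
      fun i j => (hsum i j).tendsto_atTop_zero
    have h := tendsto_finset_sum (Finset.univ : Finset (Fin m))
      (fun i _ => tendsto_finset_sum (Finset.univ : Finset (Fin m)) (fun j _ => this i j))
    simpa using h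
  set ε : ℝ := 1 / (2 * m) with hε
  have hεpos : 0 < ε := by positivity
  have hev : ∀ᶠ n in Filter.atTop, ∑ i, ∑ j, (P ^ n) i j < ε :=
    htot.eventually_lt_const hεpos
  obtain ⟨N₀, hN₀⟩ := Filter.eventually_atTop.mp hev
  set n₀ := max N₀ 1 with hn₀
  have hn₀1 : 1 ≤ n₀ := le_max_right _ _
  have hx0 : ∑ i, ∑ j, (P ^ n₀) i j < ε := hN₀ n₀ (le_max_left _ _)
  have hcont : Continuous fun y : ℝ => ∑ i, ∑ j, ((Nfam C Q y) ^ n₀) i j := by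
    apply continuous_finset_sum
    intro i _
    apply continuous_finset_sum
    intro j _
    exact (Nfam_pow_cont n₀).matrix_elem i j
  have hopen : IsOpen {y : ℝ | ∑ i, ∑ j, ((Nfam C Q y) ^ n₀) i j < ε} :=
    isOpen_lt hcont continuous_const
  have hxmem : x ∈ {y : ℝ | ∑ i, ∑ j, ((Nfam C Q y) ^ n₀) i j < ε} := hx0
  obtain ⟨δ, hδ, hball⟩ := Metric.isOpen_iff.mp hopen x hxmem
  set y := x + δ / 2 with hy
  have hyball : y ∈ Metric.ball x δ := by
    simp only [Metric.mem_ball, hy, Real.dist_eq]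
    rw [add_sub_cancel_left, abs_of_pos (by linarith)]
    linarith
  have hytot : ∑ i, ∑ j, ((Nfam C Q y) ^ n₀) i j < ε := hball hyball
  have hxy : x < y := by simp only [hy]; linarith
  have hy0 : (0 : ℝ) ≤ y := by linarith
  set Py := Nfam C Q y with hPydef
  have hPy0 : Mle 0 Py := Nfam_nonneg hC hy0
  have hynn : ∀ (n : ℕ) (i j : Fin m), 0 ≤ (Py ^ n) i j := fun n i j => by
    simpa using Mle_pow_nonneg hPy0 n i j
  have hentry_le_tot : ∀ (n : ℕ) (i j : Fin m), (Py ^ n) i j ≤ ∑ i', ∑ j', (Py ^ n) i' j' := by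
    intro n i j
    calc (Py ^ n) i j ≤ ∑ j', (Py ^ n) i j' :=
          Finset.single_le_sum (fun j' _ => hynn n i j') (Finset.mem_univ j)
      _ ≤ ∑ i', ∑ j', (Py ^ n) i' j' :=
          Finset.single_le_sum (fun i' (_ : i' ∈ Finset.univ) => Finset.sum_nonneg
            (fun j' _ => hynn n i' j')) (Finset.mem_univ i)
  have hentry : ∀ i j, (Py ^ n₀) i j < ε := fun i j =>
    lt_of_le_of_lt (hentry_le_tot n₀ i j) hytot
  set R : ℝ := (∑ b ∈ Finset.range n₀, ∑ i, ∑ j, (Py ^ b) i j) + 1 with hR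
  have hR1 : (1 : ℝ) ≤ R := by
    have : (0:ℝ) ≤ ∑ b ∈ Finset.range n₀, ∑ i, ∑ j, (Py ^ b) i j :=
      Finset.sum_nonneg fun b _ => Finset.sum_nonneg fun i _ => Finset.sum_nonneg
        fun j _ => hynn b i j
    linarith
  have hRb : ∀ b, b < n₀ → ∀ i j, (Py ^ b) i j ≤ R := by
    intro b hb i j
    have h1 : (Py ^ b) i j ≤ ∑ i', ∑ j', (Py ^ b) i' j' := hentry_le_tot b i j
    have h2 : ∑ i', ∑ j', (Py ^ b) i' j' ≤ ∑ b' ∈ Finset.range n₀, ∑ i', ∑ j', (Py ^ b') i' j' :=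
      Finset.single_le_sum (f := fun b' => ∑ i', ∑ j', (Py ^ b') i' j')
        (fun b' _ => Finset.sum_nonneg fun i' _ => Finset.sum_nonneg fun j' _ => hynn b' i' j')
        (Finset.mem_range.mpr hb)
    linarith
  have hmain : ∀ a : ℕ, ∀ b, b < n₀ → ∀ i j, (Py ^ (a * n₀ + b)) i j ≤ (1/2 : ℝ) ^ a * R := by
    intro a
    induction a with
    | zero => intro b hb i j; simpa using hRb b hb i j
    | succ a ih =>
      intro b hb i j
      have hsplit : (a + 1) * n₀ + b = n₀ + (a * n₀ + b) := by ring
      rw [hsplit, pow_add, Matrix.mul_apply]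
      have hterm : ∀ l : Fin m, (Py ^ n₀) i l * (Py ^ (a * n₀ + b)) l j
          ≤ ε * ((1/2 : ℝ) ^ a * R) := by
        intro l
        apply mul_le_mul (le_of_lt (hentry i l)) (ih b hb l j) (hynn _ l j) (le_of_lt hεpos)
      calc ∑ l, (Py ^ n₀) i l * (Py ^ (a * n₀ + b)) l j
          ≤ ∑ _l : Fin m, ε * ((1/2 : ℝ) ^ a * R) := Finset.sum_le_sum fun l _ => hterm l
        _ = (m : ℝ) * (ε * ((1/2 : ℝ) ^ a * R)) := by
            rw [Finset.sum_const, Finset.card_univ, Fintype.card_fin, nsmul_eq_mul]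
        _ = (1/2 : ℝ) ^ (a + 1) * R := by
            have hm' : (m : ℝ) ≠ 0 := Nat.cast_ne_zero.mpr (by omega)
            rw [hε]
            field_simp
            ring
  refine ⟨y, hxy, ⟨(n₀ : ℝ) * (1 - 1/2 : ℝ)⁻¹ * R, ?_⟩⟩
  intro K i j
  rw [Matrix.sum_apply]
  have hle : ∀ n : ℕ, (Py ^ n) i j ≤ (1/2 : ℝ) ^ (n / n₀) * R := by
    intro n
    have hb : n % n₀ < n₀ := Nat.mod_lt _ (by omega)
    have hn : n / n₀ * n₀ + n % n₀ = n := Nat.div_add_mod' n n₀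
    have := hmain (n / n₀) (n % n₀) hb i j
    rwa [hn] at this
  calc ∑ n ∈ Finset.range K, (Py ^ n) i j
      ≤ ∑ n ∈ Finset.range K, (1/2 : ℝ) ^ (n / n₀) * R :=
        Finset.sum_le_sum fun n _ => hle n
    _ = (∑ n ∈ Finset.range K, (1/2 : ℝ) ^ (n / n₀)) * R := by rw [Finset.sum_mul]
    _ ≤ (n₀ : ℝ) * (1 - 1/2 : ℝ)⁻¹ * R := by
        apply mul_le_mul_of_nonneg_right _ (by linarith)
        exact sum_pow_div_le (by norm_num) (by norm_num) hn₀1 K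

end family


section core
variable {m : ℕ} {C : ℕ → Matrix (Fin m) (Fin m) ℝ} {Q : ℕ}

lemma det_ne_of_partialBdd {x : ℝ} (hx : 0 ≤ x) (hC : ∀ k, Mle 0 (C k))
    (hb : PartialBdd (Nfam C Q x)) : (1 - Nfam C Q x).det ≠ 0 := by
  obtain ⟨L, hL0, hL1, hL2, hLb⟩ := neumann (Nfam_nonneg hC hx) hb
  have : IsUnit (1 - Nfam C Q x) := by
    refine ⟨⟨1 - Nfam C Q x, L, hL1, hL2⟩, rfl⟩
  have := (Matrix.isUnit_iff_isUnit_det _).mp this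
  exact this.ne_zero

lemma core (hm : 0 < m) (hC : ∀ k, Mle 0 (C k)) {r : ℝ} (hr : 1 < r)
    (hb1 : PartialBdd (Nfam C Q 1))
    (u : Fin m → ℝ) (hu0 : ∀ i, 0 ≤ u i) (hune : u ≠ 0)
    (hsub : ∀ i, u i ≤ ((Nfam C Q r).mulVec u) i) :
    ∃ x : ℝ, 1 < x ∧ x ≤ r ∧ (1 - Nfam C Q x).det = 0 := by
  classical
  by_contra hcon
  push_neg at hcon
  have hdet : ∀ x ∈ Set.Icc (1:ℝ) r, (1 - Nfam C Q x).det ≠ 0 := by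
    intro x hx
    rcases eq_or_lt_of_le hx.1 with h1 | h1
    · rw [← h1]
      exact det_ne_of_partialBdd zero_le_one hC hb1
    · exact hcon x h1 hx.2
  set U := {x : ℝ | x ∈ Set.Icc (1:ℝ) r ∧ PartialBdd (Nfam C Q x)} with hU
  have h1U : (1:ℝ) ∈ U := ⟨⟨le_refl 1, le_of_lt hr⟩, hb1⟩
  have hUb : BddAbove U := ⟨r, fun x hx => hx.1.2⟩
  have hUne : U.Nonempty := ⟨1, h1U⟩
  set x₀ := sSup U with hx₀def
  have hx₀1 : 1 ≤ x₀ := le_csSup hUb h1U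
  have hx₀r : x₀ ≤ r := csSup_le hUne (fun x hx => hx.1.2)
  have hdown : ∀ x ∈ U, ∀ y : ℝ, 1 ≤ y → y ≤ x → y ∈ U := by
    intro x hx y hy1 hyx
    refine ⟨⟨hy1, le_trans hyx hx.1.2⟩, ?_⟩
    exact PartialBdd.mono (Nfam_nonneg hC (by linarith)) (Nfam_mono hC (by linarith) hyx) hx.2
  -- `PartialBdd` holds at `x₀`
  have hQx₀ : PartialBdd (Nfam C Q x₀) := by
    obtain ⟨s, hsmono, hstend, hsmem⟩ := exists_seq_tendsto_sSup hUne hUb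
    rw [← hx₀def] at hstend
    have hdet₀ : (1 - Nfam C Q x₀).det ≠ 0 := hdet x₀ ⟨hx₀1, hx₀r⟩
    set L₀ := (1 - Nfam C Q x₀)⁻¹ with hL₀
    refine ⟨∑ i', ∑ j', |L₀ i' j'|, ?_⟩
    intro K i j
    -- partial sums at sequence points are dominated by the inverse there
    have hseqle : ∀ n : ℕ, (∑ k ∈ Finset.range K, (Nfam C Q (s n)) ^ k) i j
        ≤ ((1 - Nfam C Q (s n))⁻¹) i j := by
      intro n
      obtain ⟨L, hL0, hL1, hL2, hLb⟩ :=
        neumann (Nfam_nonneg hC (by linarith [(hsmem n).1.1])) (hsmem n).2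
      rw [Matrix.inv_eq_right_inv hL1]
      exact hLb K i j
    -- continuity of both sides along the sequence
    have htendN : Filter.Tendsto (fun n => (1 : Matrix (Fin m) (Fin m) ℝ) - Nfam C Q (s n))
        Filter.atTop (nhds (1 - Nfam C Q x₀)) :=
      ((continuous_const.sub Nfam_cont).tendsto x₀).comp hstend
    have htendInv : Filter.Tendsto (fun n => ((1 - Nfam C Q (s n))⁻¹) i j)
        Filter.atTop (nhds (L₀ i j)) := by
      have hci : ContinuousAt Inv.inv ((1 : Matrix (Fin m) (Fin m) ℝ) - Nfam C Q x₀) := by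
        apply continuousAt_matrix_inv
        rw [Ring.inverse_eq_inv']
        exact continuousAt_inv₀ hdet₀
      have h1 : Filter.Tendsto (fun n => (1 - Nfam C Q (s n))⁻¹)
          Filter.atTop (nhds (1 - Nfam C Q x₀)⁻¹) := hci.tendsto.comp htendN
      have h2 : Continuous fun M : Matrix (Fin m) (Fin m) ℝ => M i j :=
        (continuous_apply j).comp (continuous_apply i)
      exact (h2.tendsto _).comp h1
    have htendP : Filter.Tendsto (fun n => (∑ k ∈ Finset.range K, (Nfam C Q (s n)) ^ k) i j)
        Filter.atTop (nhds ((∑ k ∈ Finset.range K, (Nfam C Q x₀) ^ k) i j)) := by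
      have hc : Continuous fun y : ℝ => (∑ k ∈ Finset.range K, (Nfam C Q y) ^ k) i j := by
        have : Continuous fun y : ℝ => ∑ k ∈ Finset.range K, (Nfam C Q y) ^ k :=
          continuous_finset_sum _ fun k _ => Nfam_pow_cont k
        exact (((continuous_apply j).comp (continuous_apply i)).comp this)
      exact (hc.tendsto x₀).comp hstend
    have hlim : (∑ k ∈ Finset.range K, (Nfam C Q x₀) ^ k) i j ≤ L₀ i j :=
      le_of_tendsto_of_tendsto' htendP htendInv hseqle
    calc (∑ k ∈ Finset.range K, (Nfam C Q x₀) ^ k) i j ≤ L₀ i j := hlim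
      _ ≤ |L₀ i j| := le_abs_self _
      _ ≤ ∑ j', |L₀ i j'| :=
          Finset.single_le_sum (f := fun j' => |L₀ i j'|)
            (fun j' _ => abs_nonneg _) (Finset.mem_univ j)
      _ ≤ ∑ i', ∑ j', |L₀ i' j'| :=
          Finset.single_le_sum (f := fun i' => ∑ j', |L₀ i' j'|)
            (fun i' _ => Finset.sum_nonneg (fun j' _ => abs_nonneg _)) (Finset.mem_univ i)
  -- `x₀ = r`
  have hx₀eq : x₀ = r := by
    by_contra hne
    have hx₀lt : x₀ < r := lt_of_le_of_ne hx₀r hne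
    obtain ⟨y, hy1, hy2⟩ := open_right hm hC (by linarith : (0:ℝ) ≤ x₀) hQx₀
    have h1y : (1:ℝ) ≤ y := by linarith
    have h1min : (1:ℝ) ≤ min y r := le_min h1y (le_of_lt hr)
    have hmin : min y r ∈ U := by
      refine ⟨⟨h1min, min_le_right _ _⟩, ?_⟩
      exact PartialBdd.mono (Nfam_nonneg hC (by linarith))
        (Nfam_mono hC (by linarith) (min_le_left _ _)) hy2
    have : min y r ≤ x₀ := le_csSup hUb hmin
    have : x₀ < min y r := lt_min hy1 hx₀lt
    linarith
  -- final contradiction using the subinvariant vector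
  have hQr : PartialBdd (Nfam C Q r) := hx₀eq ▸ hQx₀
  obtain ⟨L, hL0, hL1, hL2, hLb⟩ := neumann (Nfam_nonneg hC (by linarith)) hQr
  set w := ((1 : Matrix (Fin m) (Fin m) ℝ) - Nfam C Q r).mulVec u with hw
  have hw0 : ∀ i, w i ≤ 0 := by
    intro i
    rw [hw, Matrix.sub_mulVec, Matrix.one_mulVec]
    simp only [Pi.sub_apply]
    linarith [hsub i]
  have hu_eq : u = L.mulVec w := by
    rw [hw, Matrix.mulVec_mulVec, hL2, Matrix.one_mulVec]
  have hu_le : ∀ i, u i ≤ 0 := by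
    intro i
    rw [hu_eq]
    rw [Matrix.mulVec, dotProduct]
    apply Finset.sum_nonpos
    intro l _
    exact mul_nonpos_of_nonneg_of_nonpos (by simpa using hL0 i l) (hw0 l)
  apply hune
  funext i
  exact le_antisymm (hu_le i) (hu0 i)

end core


section gelfand
variable {m : ℕ}

lemma map_pow_comm (V : Matrix (Fin m) (Fin m) ℝ) (n : ℕ) :
    (V ^ n).map (algebraMap ℝ ℂ) = (V.map (algebraMap ℝ ℂ)) ^ n := by
  induction n with
  | zero =>
    simp only [pow_zero]
    exact Matrix.map_one _ (map_zero _) (map_one _)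
  | succ n ih => rw [pow_succ, pow_succ, Matrix.map_mul, ih]

lemma partialBdd_of_specRad_lt_one {V : Matrix (Fin m) (Fin m) ℝ} (hV0 : Mle 0 V)
    (h : specRad V < 1) : PartialBdd V := by
  classical
  letI : NormedRing (Matrix (Fin m) (Fin m) ℂ) := Matrix.linftyOpNormedRing
  letI : NormedAlgebra ℂ (Matrix (Fin m) (Fin m) ℂ) := Matrix.linftyOpNormedAlgebra
  haveI : CompleteSpace (Matrix (Fin m) (Fin m) ℂ) := FiniteDimensional.complete ℂ _
  set Vc := V.map (algebraMap ℝ ℂ) with hVc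
  have hρ : spectralRadius ℂ Vc < 1 := h
  have hgel := spectrum.pow_nnnorm_pow_one_div_tendsto_nhds_spectralRadius Vc
  obtain ⟨c, hc1, hc2⟩ := exists_between hρ
  have hev : ∀ᶠ n : ℕ in Filter.atTop, (‖Vc ^ n‖₊ : ENNReal) ^ (1 / (n : ℝ)) < c :=
    hgel.eventually_lt_const hc1
  obtain ⟨N₀, hN₀⟩ := Filter.eventually_atTop.mp hev
  set N₁ := max N₀ 1 with hN₁
  have hcne : c ≠ ⊤ := (hc2.trans_le le_top).ne
  set γ : ℝ := c.toReal with hγ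
  have hγ0 : (0:ℝ) ≤ γ := ENNReal.toReal_nonneg
  have hγ1 : γ < 1 := by
    have h1 := (ENNReal.toReal_lt_toReal hcne (by norm_num : (1:ENNReal) ≠ ⊤)).mpr hc2
    simpa using h1
  have hbound : ∀ n, N₁ ≤ n → ‖Vc ^ n‖ ≤ γ ^ n := by
    intro n hn
    have h1 : (‖Vc ^ n‖₊ : ENNReal) ^ (1 / (n:ℝ)) < c := hN₀ n (le_trans (le_max_left _ _) hn)
    have hn1 : 1 ≤ n := le_trans (le_max_right _ _) hn
    have hnne : (n:ℝ) ≠ 0 := Nat.cast_ne_zero.mpr (by omega)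
    have h3 : (‖Vc ^ n‖₊ : ENNReal) ≤ c ^ n := by
      calc (‖Vc ^ n‖₊ : ENNReal) = ((‖Vc ^ n‖₊ : ENNReal) ^ (1/(n:ℝ))) ^ (n:ℝ) := by
            rw [← ENNReal.rpow_mul, one_div, inv_mul_cancel₀ hnne, ENNReal.rpow_one]
        _ ≤ c ^ (n:ℝ) := ENNReal.rpow_le_rpow h1.le (Nat.cast_nonneg n)
        _ = c ^ n := ENNReal.rpow_natCast c n
    have h4 := ENNReal.toReal_mono (ENNReal.pow_ne_top hcne) h3
    rw [ENNReal.coe_toReal, coe_nnnorm, ENNReal.toReal_pow] at h4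
    exact h4
  have hentry : ∀ (n : ℕ) (i j : Fin m), (V ^ n) i j ≤ ‖Vc ^ n‖ := by
    intro n i j
    have h2 : |(V ^ n) i j| = ‖(Vc ^ n) i j‖ := by
      rw [hVc, ← map_pow_comm]
      simp [Matrix.map_apply]
    have h3 : ‖(Vc ^ n) i j‖₊ ≤ ‖Vc ^ n‖₊ := by
      rw [Matrix.linfty_opNNNorm_def]
      calc ‖(Vc ^ n) i j‖₊ ≤ ∑ j', ‖(Vc ^ n) i j'‖₊ :=
            Finset.single_le_sum (f := fun j' => ‖(Vc ^ n) i j'‖₊)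
              (fun _ _ => zero_le) (Finset.mem_univ j)
        _ ≤ _ := Finset.le_sup (f := fun i' => ∑ j', ‖(Vc ^ n) i' j'‖₊) (Finset.mem_univ i)
    have h3' : ‖(Vc ^ n) i j‖ ≤ ‖Vc ^ n‖ := by exact_mod_cast h3
    calc (V ^ n) i j ≤ |(V ^ n) i j| := le_abs_self _
      _ = ‖(Vc ^ n) i j‖ := h2
      _ ≤ ‖Vc ^ n‖ := h3'
  set B₀ : ℝ := ∑ n ∈ Finset.range N₁, ‖Vc ^ n‖ with hB₀
  refine ⟨B₀ + (1 - γ)⁻¹, ?_⟩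
  intro K i j
  rw [Matrix.sum_apply]
  have hterm : ∀ n : ℕ, (V ^ n) i j ≤ (if n < N₁ then ‖Vc ^ n‖ else 0) + γ ^ n := by
    intro n
    by_cases hn : n < N₁
    · simp only [hn, if_true]
      have hpos : (0:ℝ) ≤ γ ^ n := by positivity
      linarith [hentry n i j]
    · simp only [hn, if_false, zero_add]
      push_neg at hn
      exact le_trans (hentry n i j) (hbound n hn)
  calc ∑ n ∈ Finset.range K, (V ^ n) i j
      ≤ ∑ n ∈ Finset.range K, ((if n < N₁ then ‖Vc ^ n‖ else 0) + γ ^ n) :=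
        Finset.sum_le_sum fun n _ => hterm n
    _ = (∑ n ∈ Finset.range K, if n < N₁ then ‖Vc ^ n‖ else 0)
          + ∑ n ∈ Finset.range K, γ ^ n := Finset.sum_add_distrib
    _ ≤ B₀ + (1 - γ)⁻¹ := by
        apply add_le_add
        · rw [← Finset.sum_filter]
          apply Finset.sum_le_sum_of_subset_of_nonneg
          · intro n hn
            simp only [Finset.mem_filter, Finset.mem_range] at hn ⊢
            exact hn.2
          · intro n _ _
            positivity
        · rw [← tsum_geometric_of_lt_one hγ0 hγ1]
          exact Summable.sum_le_tsum _ (fun n _ => by positivity)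
            (summable_geometric_of_lt_one hγ0 hγ1)

end gelfand

/-- for mass embeddings of degrees `q₁+1 < q₂+1`, every root of
`det S_{q₁}` of modulus `> 1` has modulus at least
`ξ_{q₂} = min{|z| : |z| > 1, det S_{q₂}(z) = 0}`, i.e. `ξ_{q₁} ≥ ξ_{q₂}`. -/
theorem stmt14 (m : ℕ) (hm : 1 ≤ m) (d : ℕ) (hd2 : 2 ≤ d)
    (A : ℕ → Matrix (Fin m) (Fin m) ℝ)
    (hA0 : ∀ i, Mle 0 (A i))
    (hrow : ∀ k, ∑ j, (∑' i, A i) k j ≤ 1)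
    (hd : ∀ i, d + 1 < i → A i = 0)
    (G : Matrix (Fin m) (Fin m) ℝ) (hG : IsMinSol A G)
    (hρ : specRad (Vmat A G) < 1)
    (q₁ q₂ : ℕ) (hq₁ : 1 ≤ q₁) (hq₁₂ : q₁ < q₂) (hq₂ : q₂ ≤ d - 1)
    -- `ξ_{q₂} = ‖z₂‖`, the minimum modulus of roots of `det S_{q₂}` outside the
    -- closed unit disk (the set `R_{q₂}` of such roots being nonempty):
    (z₂ : ℂ) (hz₂ : 1 < ‖z₂‖) (hz₂root : (SmatM q₂ A G z₂).det = 0)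
    (hz₂min : ∀ w : ℂ, 1 < ‖w‖ → (SmatM q₂ A G w).det = 0 → ‖z₂‖ ≤ ‖w‖) :
    ∀ z : ℂ, 1 < ‖z‖ → (SmatM q₁ A G z).det = 0 → ‖z₂‖ ≤ ‖z‖ := by
  classical
  intro z hz hroot
  have hm0 : 0 < m := hm
  have hG0 : Mle 0 G := hG.1
  have hGsol : G = ∑' i, A i * G ^ i := hG.2.2.1
  have hzne : z ≠ 0 := by
    intro h
    rw [h] at hz
    simp at hz
    linarith
  have hAst0 : ∀ k, Mle 0 (Ast A G k) := Ast_nonneg G hd hA0 hG0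
  -- determinant form of the factorization
  have hfac : ∀ (q : ℕ) (w : ℂ), w ≠ 0 → w ^ m * (SmatM q A G w).det =
      (1 - ∑ k ∈ Finset.range (q + 1), w ^ k • (Ast A G k).map (algebraMap ℝ ℂ)).det *
        (w • (1 : Matrix (Fin m) (Fin m) ℂ) - G.map (algebraMap ℝ ℂ)).det := by
    intro q w hw
    have h := congrArg Matrix.det (factor hd hGsol q w hw)
    rwa [Matrix.det_smul, Matrix.det_mul, Fintype.card_fin] at h
  by_cases hGz : (z • (1 : Matrix (Fin m) (Fin m) ℂ) - G.map (algebraMap ℝ ℂ)).det = 0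
  · -- `z` is an eigenvalue of `G`, hence already a root of `det S_{q₂}`
    apply hz₂min z hz
    have h := hfac q₂ z hzne
    rw [hGz, mul_zero] at h
    exact (mul_eq_zero.mp h).resolve_left (pow_ne_zero m hzne)
  · -- `z` is a root of `det T_{q₁}`
    have hT₁ : (1 - ∑ k ∈ Finset.range (q₁ + 1),
        z ^ k • (Ast A G k).map (algebraMap ℝ ℂ)).det = 0 := by
      have h := hfac q₁ z hzne
      rw [hroot, mul_zero] at h
      exact (mul_eq_zero.mp h.symm).resolve_right hGz
    obtain ⟨v, hvne, hveq⟩ := (Matrix.exists_mulVec_eq_zero_iff).mpr hT₁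
    set M : Matrix (Fin m) (Fin m) ℂ :=
      ∑ k ∈ Finset.range (q₁ + 1), z ^ k • (Ast A G k).map (algebraMap ℝ ℂ) with hM
    have hMv : M.mulVec v = v := by
      have := hveq
      rw [Matrix.sub_mulVec, Matrix.one_mulVec, sub_eq_zero] at this
      exact this.symm
    set r : ℝ := ‖z‖ with hrdef
    have hr : 1 < r := hz
    set u : Fin m → ℝ := fun i => ‖v i‖ with hu
    have hu0 : ∀ i, 0 ≤ u i := fun i => norm_nonneg _
    have hune : u ≠ 0 := by
      intro h
      apply hvne
      funext i
      have : u i = 0 := by rw [h]; rfl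
      rw [hu] at this
      simpa using this
    -- the entrywise bound `‖M i j‖ ≤ N(r) i j`
    have hMb : ∀ i j, ‖M i j‖ ≤ Nfam (Ast A G) q₂ r i j := by
      intro i j
      have hMij : M i j = ∑ k ∈ Finset.range (q₁ + 1),
          z ^ k * (algebraMap ℝ ℂ) (Ast A G k i j) := by
        rw [hM, Matrix.sum_apply]
        apply Finset.sum_congr rfl
        intro k _
        rw [Matrix.smul_apply, Matrix.map_apply, smul_eq_mul]
      rw [hMij, Nfam_apply]
      calc ‖∑ k ∈ Finset.range (q₁ + 1), z ^ k * (algebraMap ℝ ℂ) (Ast A G k i j)‖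
          ≤ ∑ k ∈ Finset.range (q₁ + 1), ‖z ^ k * (algebraMap ℝ ℂ) (Ast A G k i j)‖ :=
            norm_sum_le _ _
        _ = ∑ k ∈ Finset.range (q₁ + 1), r ^ k * (Ast A G k i j) := by
            apply Finset.sum_congr rfl
            intro k _
            rw [norm_mul, norm_pow]
            congr 1
            have : (algebraMap ℝ ℂ) (Ast A G k i j) = ((Ast A G k i j : ℝ) : ℂ) := rfl
            rw [this, Complex.norm_real, Real.norm_of_nonneg (by simpa using hAst0 k i j)]
        _ ≤ ∑ k ∈ Finset.range (q₂ + 1), r ^ k * (Ast A G k i j) := by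
            apply Finset.sum_le_sum_of_subset_of_nonneg
            · exact Finset.range_subset_range.mpr (by omega)
            · intro k _ _
              exact mul_nonneg (by positivity) (by simpa using hAst0 k i j)
    have hsub : ∀ i, u i ≤ ((Nfam (Ast A G) q₂ r).mulVec u) i := by
      intro i
      have h1 : u i = ‖(M.mulVec v) i‖ := by rw [hMv]
      rw [h1, Matrix.mulVec, dotProduct, Matrix.mulVec, dotProduct]
      calc ‖∑ j, M i j * v j‖ ≤ ∑ j, ‖M i j * v j‖ := norm_sum_le _ _
        _ = ∑ j, ‖M i j‖ * u j := by
            apply Finset.sum_congr rfl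
            intro j _
            rw [norm_mul]
        _ ≤ ∑ j, Nfam (Ast A G) q₂ r i j * u j :=
            Finset.sum_le_sum fun j _ =>
              mul_le_mul_of_nonneg_right (hMb i j) (hu0 j)
    -- bounded partial sums at `x = 1`, via `ρ(V) < 1`
    have hVsum : Vmat A G = ∑ j ∈ Finset.range (d + 1), Ast A G j := by
      rw [Vmat]
      apply tsum_eq_sum
      intro j hj
      rw [Finset.mem_range, not_lt] at hj
      have : (fun k : ℕ => A (j + k + 1) * G ^ k) = fun _ => 0 := by
        funext k
        rw [hd (j + k + 1) (by omega), zero_mul]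
      show (∑' k : ℕ, A (j + k + 1) * G ^ k) = 0
      rw [this, tsum_zero]
    have hV0 : Mle 0 (Vmat A G) := by
      rw [hVsum]
      intro i j
      rw [Matrix.sum_apply, Matrix.zero_apply]
      exact Finset.sum_nonneg fun k _ => by simpa using hAst0 k i j
    have hVbd : PartialBdd (Vmat A G) := partialBdd_of_specRad_lt_one hV0 hρ
    have hle1 : Mle (Nfam (Ast A G) q₂ 1) (Vmat A G) := by
      intro i j
      rw [Nfam_apply, hVsum, Matrix.sum_apply]
      have h1 : ∀ k ∈ Finset.range (q₂ + 1), (1:ℝ) ^ k * Ast A G k i j = Ast A G k i j := by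
        intro k _
        rw [one_pow, one_mul]
      rw [Finset.sum_congr rfl h1]
      apply Finset.sum_le_sum_of_subset_of_nonneg
      · exact Finset.range_subset_range.mpr (by omega)
      · intro k _ _
        simpa using hAst0 k i j
    have hb1 : PartialBdd (Nfam (Ast A G) q₂ 1) :=
      PartialBdd.mono (Nfam_nonneg hAst0 zero_le_one) hle1 hVbd
    -- the core existence result
    obtain ⟨x, hx1, hxr, hxdet⟩ := core hm0 hAst0 hr hb1 u hu0 hune hsub
    -- transfer the real root to a complex root of `det S_{q₂}`
    have hxc : ((1 : Matrix (Fin m) (Fin m) ℝ) - Nfam (Ast A G) q₂ x).map (algebraMap ℝ ℂ)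
        = 1 - ∑ k ∈ Finset.range (q₂ + 1), (x:ℂ) ^ k • (Ast A G k).map (algebraMap ℝ ℂ) := by
      ext i j
      simp only [Matrix.map_apply, Matrix.sub_apply, Matrix.one_apply, Matrix.sum_apply,
        Matrix.smul_apply, smul_eq_mul, Nfam_apply, map_sub, map_sum]
      congr 1
      · split <;> simp
      · apply Finset.sum_congr rfl
        intro k _
        rw [show ((algebraMap ℝ ℂ) (x ^ k * Ast A G k i j))
              = (algebraMap ℝ ℂ) (x ^ k) * (algebraMap ℝ ℂ) (Ast A G k i j) from map_mul _ _ _,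
          show ((algebraMap ℝ ℂ) (x ^ k)) = ((algebraMap ℝ ℂ) x) ^ k from map_pow _ _ _]
        rfl
    have hdetT₂ : (1 - ∑ k ∈ Finset.range (q₂ + 1),
        (x:ℂ) ^ k • (Ast A G k).map (algebraMap ℝ ℂ)).det = 0 := by
      have hmapdet : ((1 - Nfam (Ast A G) q₂ x).map (algebraMap ℝ ℂ)).det
          = (algebraMap ℝ ℂ) ((1 - Nfam (Ast A G) q₂ x).det) :=
        (RingHom.map_det (algebraMap ℝ ℂ) _).symm
      rw [← hxc, hmapdet, hxdet, map_zero]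
    have hxne : ((x:ℂ)) ≠ 0 := by
      simp only [ne_eq, Complex.ofReal_eq_zero]
      linarith
    have hS₂ : (SmatM q₂ A G (x:ℂ)).det = 0 := by
      have h := hfac q₂ (x:ℂ) hxne
      rw [hdetT₂, zero_mul] at h
      exact (mul_eq_zero.mp h).resolve_left (pow_ne_zero m hxne)
    have hxnorm : ‖(x:ℂ)‖ = x := by
      rw [Complex.norm_real, Real.norm_of_nonneg (by linarith)]
    calc ‖z₂‖ ≤ ‖(x:ℂ)‖ := hz₂min (x:ℂ) (by rw [hxnorm]; exact hx1) hS₂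
      _ = x := hxnorm
      _ ≤ r := hxr
end
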